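/- arXiv:1611.08757 — 10 statements merged into one kernel-verified Lean document; each statement's English description precedes it below -/
import Mathlib

section
/- Let n ≥ 1, let a ∈ [0,1]^n, let k ≥ 1 be an integer, and let ρ be a real number with 0 < ρ ≤ k+1. Set δ := n·(ρ/(k+1))^{n−1} and K := {x ∈ ℝ^n : ‖x‖∞ < (k+1)/ρ and |⟨a,x⟩| ≤ δ}. Then vol_n(K) ≥ 2^n. -/
open MeasureTheory Set

lemma min_sum_ineq (c δ σ : ℝ) :
    min (2 * min c δ) (c + δ - |σ|) ≤ min c (δ - σ) + min c (δ + σ) := by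
  have h1 := le_abs_self σ
  have h2 := neg_abs_le σ
  rcases min_cases c (δ - σ) with ⟨e1, l1⟩ | ⟨e1, l1⟩ <;>
    rcases min_cases c (δ + σ) with ⟨e2, l2⟩ | ⟨e2, l2⟩ <;> rw [e1, e2]
  · calc min (2 * min c δ) (c + δ - |σ|) ≤ 2 * min c δ := min_le_left _ _
      _ ≤ c + c := by have := min_le_left c δ; linarith
  · calc min (2 * min c δ) (c + δ - |σ|) ≤ c + δ - |σ| := min_le_right _ _
      _ ≤ c + (δ + σ) := by linarith
  · calc min (2 * min c δ) (c + δ - |σ|) ≤ c + δ - |σ| := min_le_right _ _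
      _ ≤ δ - σ + c := by linarith
  · calc min (2 * min c δ) (c + δ - |σ|) ≤ 2 * min c δ := min_le_left _ _
      _ ≤ δ - σ + (δ + σ) := by have := min_le_right c δ; linarith

lemma one_dim_lb (Δ b σ δ : ℝ) (hΔ : 0 < Δ) (hb : 0 < b) (hδ : 0 ≤ δ) :
    ENNReal.ofReal (b⁻¹ * min (2 * min (b * Δ) δ) ((b * Δ + δ) - |σ|)) ≤
      volume {t : ℝ | |t| < Δ ∧ |b * t + σ| ≤ δ} := by
  have hsub : Ioo (max (-Δ) ((-δ - σ) / b)) (min Δ ((δ - σ) / b)) ⊆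
      {t : ℝ | |t| < Δ ∧ |b * t + σ| ≤ δ} := by
    intro t ht
    obtain ⟨ht1, ht2⟩ := ht
    have hl1 : -Δ < t := lt_of_le_of_lt (le_max_left _ _) ht1
    have hl2 : (-δ - σ) / b < t := lt_of_le_of_lt (le_max_right _ _) ht1
    have hr1 : t < Δ := lt_of_lt_of_le ht2 (min_le_left _ _)
    have hr2 : t < (δ - σ) / b := lt_of_lt_of_le ht2 (min_le_right _ _)
    refine ⟨abs_lt.2 ⟨hl1, hr1⟩, abs_le.2 ⟨?_, ?_⟩⟩
    · nlinarith [(div_lt_iff₀ hb).1 hl2]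
    · nlinarith [(lt_div_iff₀ hb).1 hr2]
  refine le_trans ?_ (measure_mono hsub)
  rw [Real.volume_Ioo]
  apply ENNReal.ofReal_le_ofReal
  rw [inv_mul_le_iff₀ hb]
  refine le_trans (min_sum_ineq (b * Δ) δ σ) ?_
  have hA : b * min Δ ((δ - σ) / b) = min (b * Δ) (δ - σ) := by
    rcases le_total Δ ((δ - σ) / b) with h | h
    · rw [min_eq_left h, min_eq_left (by nlinarith [(le_div_iff₀ hb).1 h])]
    · rw [min_eq_right h, min_eq_right (by nlinarith [(div_le_iff₀ hb).1 h])]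
      field_simp
  have hB : b * max (-Δ) ((-δ - σ) / b) = -(min (b * Δ) (δ + σ)) := by
    rcases le_total (-Δ) ((-δ - σ) / b) with h | h
    · rw [max_eq_right h, min_eq_right (by nlinarith [(le_div_iff₀ hb).1 h])]
      field_simp; ring
    · rw [max_eq_left h, min_eq_left (by nlinarith [(div_le_iff₀ hb).1 h])]
      ring
  nlinarith [hA, hB]

lemma lemA2 (c D δ : ℝ) (hc : 0 < c) (hD : 0 < D) (hδ : 0 ≤ δ) :
    2 * c * min 1 (δ / (D + c)) ≤
      min (2 * min c δ) (max (c + δ - D) 0) +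
        ((c + δ) * (2 * min c δ - min (2 * min c δ) (max (c + δ - D) 0)) -
          ((2 * min c δ) ^ 2 - (min (2 * min c δ) (max (c + δ - D) 0)) ^ 2) / 2) / D := by
  have hE : 0 < D + c := by linarith
  set w := 2 * min c δ with hw_def
  have hw0 : 0 ≤ w := by
    have h1 := le_min hc.le hδ; simp only [hw_def]; positivity
  set s := min w (max (c + δ - D) 0) with hs_def
  rcases le_or_gt (c + δ) D with hqD | hqD
  · -- s = 0
    have hs : s = 0 := by
      rw [hs_def, max_eq_right (by linarith), min_eq_right hw0]
    rw [hs]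
    have hJ : (c + δ) * (w - 0) - (w ^ 2 - 0 ^ 2) / 2 = 2 * c * δ := by
      rcases min_cases c δ with ⟨e, l⟩ | ⟨e, l⟩ <;> rw [hw_def, e] <;> ring
    rw [hJ]
    have h1 : min 1 (δ / (D + c)) ≤ δ / (D + c) := min_le_right _ _
    have h2 : δ / (D + c) ≤ δ / D := by gcongr; linarith
    have h3 : 2 * c * (δ / D) = 0 + 2 * c * δ / D := by ring
    calc 2 * c * min 1 (δ / (D + c)) ≤ 2 * c * (δ / D) :=
          mul_le_mul_of_nonneg_left (le_trans h1 h2) (by linarith)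
      _ = 0 + 2 * c * δ / D := h3
  · have hmax : max (c + δ - D) 0 = c + δ - D := max_eq_left (by linarith)
    rcases le_total w (c + δ - D) with hws | hws
    · -- s = w
      have hs : s = w := by rw [hs_def, hmax, min_eq_left hws]
      rw [hs]
      have hz : (c + δ) * (w - w) - (w ^ 2 - w ^ 2) / 2 = 0 := by ring
      rw [hz, zero_div, add_zero]
      have hm1 : min 1 (δ / (D + c)) ≤ 1 := min_le_left _ _
      have hm2 : min 1 (δ / (D + c)) ≤ δ / (D + c) := min_le_right _ _
      rcases min_cases c δ with ⟨e, l⟩ | ⟨e, l⟩ <;> rw [hw_def, e]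
      · nlinarith
      · have hfrac : c / (D + c) ≤ 1 := by rw [div_le_one hE]; linarith
        have : 2 * c * (δ / (D + c)) = 2 * δ * (c / (D + c)) := by ring
        have h4 : 2 * c * (δ / (D + c)) ≤ 2 * δ := by
          rw [this]
          calc 2 * δ * (c / (D + c)) ≤ 2 * δ * 1 :=
                mul_le_mul_of_nonneg_left hfrac (by linarith)
            _ = 2 * δ := by ring
        nlinarith [mul_le_mul_of_nonneg_left hm2 (by linarith : (0:ℝ) ≤ 2 * c)]
    · -- s = c + δ - D
      have hs : s = c + δ - D := by rw [hs_def, hmax, min_eq_right hws]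
      have hmin1 : min 1 (δ / (D + c)) ≤ δ / (D + c) := min_le_right _ _
      have key : 2 * c * δ * D ≤ (s * D + ((c + δ) * (w - s) - (w ^ 2 - s ^ 2) / 2)) * (D + c) := by
        rcases min_cases c δ with ⟨e, l⟩ | ⟨e, l⟩ <;> rw [hw_def, e, hs]
        · -- c ≤ δ ; from hws : c + δ - D ≤ 2c so D ≥ δ - c
          have t1 : (0:ℝ) ≤ c + D - δ := by
            have := hws; rw [hw_def, e] at this; linarith
          have t2 : (0:ℝ) ≤ 2 * c - D + δ := by linarith
          have t3 : (0:ℝ) ≤ 3 * c - D + δ := by linarith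
          have t4 : (0:ℝ) ≤ δ - c := by linarith
          nlinarith [mul_nonneg (mul_nonneg t1 t1) t2, mul_nonneg (mul_nonneg t1 t4) t3]
        · -- δ ≤ c ; from hws : c + δ - D ≤ 2δ so D ≥ c - δ
          have t1 : (0:ℝ) ≤ c + D - δ := by linarith
          have t2 : (0:ℝ) ≤ δ + D - c := by
            have := hws; rw [hw_def, e] at this; linarith
          have t3 : (0:ℝ) ≤ c - D + δ := by linarith
          nlinarith [mul_nonneg (mul_nonneg t1 t2) hc.le,
            mul_nonneg (mul_nonneg t1 t3) hD.le]
      have hrw : s + ((c + δ) * (w - s) - (w ^ 2 - s ^ 2) / 2) / D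
          = (s * D + ((c + δ) * (w - s) - (w ^ 2 - s ^ 2) / 2)) / D := by
        field_simp
      rw [hrw]
      calc 2 * c * min 1 (δ / (D + c)) ≤ 2 * c * (δ / (D + c)) :=
            mul_le_mul_of_nonneg_left hmin1 (by linarith)
        _ = 2 * c * δ / (D + c) := by ring
        _ ≤ (s * D + ((c + δ) * (w - s) - (w ^ 2 - s ^ 2) / 2)) / D := by
            rw [div_le_div_iff₀ hE hD]; nlinarith [key]

section helpers
variable {n : ℕ}

lemma box_eq (n : ℕ) (Δ : ℝ) :
    {y : Fin n → ℝ | ∀ i, |y i| < Δ} = Set.pi univ (fun _ => Ioo (-Δ) Δ) := by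
  ext y; simp [Set.mem_univ_pi, abs_lt, and_comm]

lemma box_meas (n : ℕ) (Δ : ℝ) : MeasurableSet {y : Fin n → ℝ | ∀ i, |y i| < Δ} := by
  rw [box_eq]; exact .univ_pi fun _ => measurableSet_Ioo

lemma box_vol (n : ℕ) (Δ : ℝ) :
    volume {y : Fin n → ℝ | ∀ i, |y i| < Δ} = ENNReal.ofReal (2*Δ) ^ n := by
  rw [box_eq, volume_pi_pi]; simp [Real.volume_Ioo, two_mul]

end helpers

lemma lemB : ∀ (n : ℕ) (a : Fin n → ℝ), (∀ i, 0 ≤ a i) → ∀ (Δ δ : ℝ), 0 < Δ → 0 ≤ δ →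
    ENNReal.ofReal (min 1 (δ / (Δ * ∑ i, a i)) * (2*Δ)^n) ≤
      volume {x : Fin n → ℝ | (∀ i, |x i| < Δ) ∧ |∑ i, a i * x i| ≤ δ} := by
  intro n
  induction n with
  | zero =>
      intro a ha Δ δ hΔ hδ
      simp
  | succ n ih =>
      intro a ha Δ δ hΔ hδ
      -- notation
      set b := a 0 with hb_def
      set a' : Fin n → ℝ := fun j => a j.succ with ha'_def
      have ha' : ∀ j, 0 ≤ a' j := fun j => ha _
      have hb0 : 0 ≤ b := ha 0
      set σf : (Fin n → ℝ) → ℝ := fun y => ∑ i, a' i * y i with hσ_def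
      have hσmeas : Measurable σf := by
        apply Finset.measurable_sum
        intro i _
        exact (measurable_pi_apply i).const_mul _
      set A' : ℝ := ∑ j, a' j with hA'_def
      have hA'0 : 0 ≤ A' := Finset.sum_nonneg fun j _ => ha' j
      have hsum : ∑ i, a i = b + A' := by
        rw [hA'_def, hb_def, ha'_def, Fin.sum_univ_succ]
      -- the product representation
      set Bset : Set (ℝ × (Fin n → ℝ)) :=
        {p | (|p.1| < Δ ∧ ∀ i, |p.2 i| < Δ) ∧ |b * p.1 + σf p.2| ≤ δ} with hBset_def
      have hBmeas : MeasurableSet Bset := by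
        have h1 : MeasurableSet {p : ℝ × (Fin n → ℝ) | |p.1| < Δ} :=
          measurableSet_lt measurable_fst.abs measurable_const
        have h2 : MeasurableSet {p : ℝ × (Fin n → ℝ) | ∀ i, |p.2 i| < Δ} :=
          (box_meas n Δ).preimage measurable_snd
        have h3 : MeasurableSet {p : ℝ × (Fin n → ℝ) | |b * p.1 + σf p.2| ≤ δ} :=
          measurableSet_le ((measurable_const.mul measurable_fst).add
            (hσmeas.comp measurable_snd)).abs measurable_const
        have : Bset = ({p : ℝ × (Fin n → ℝ) | |p.1| < Δ} ∩
            {p : ℝ × (Fin n → ℝ) | ∀ i, |p.2 i| < Δ}) ∩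
            {p : ℝ × (Fin n → ℝ) | |b * p.1 + σf p.2| ≤ δ} := by
          ext p; simp [hBset_def, and_assoc]
        rw [this]; exact (h1.inter h2).inter h3
      have hvolS : volume {x : Fin (n+1) → ℝ | (∀ i, |x i| < Δ) ∧ |∑ i, a i * x i| ≤ δ}
          = ∫⁻ y, volume {t : ℝ | (|t| < Δ ∧ ∀ i, |y i| < Δ) ∧ |b * t + σf y| ≤ δ} := by
        have hmp := measurePreserving_piFinSuccAbove (fun _ : Fin (n+1) => (volume : Measure ℝ)) 0
        have hSeq : {x : Fin (n+1) → ℝ | (∀ i, |x i| < Δ) ∧ |∑ i, a i * x i| ≤ δ}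
            = (MeasurableEquiv.piFinSuccAbove (fun _ : Fin (n+1) => ℝ) 0) ⁻¹' Bset := by
          ext x
          have he : (MeasurableEquiv.piFinSuccAbove (fun _ : Fin (n+1) => ℝ) 0) x
              = (x 0, fun j : Fin n => x j.succ) := by
            simp [MeasurableEquiv.piFinSuccAbove, Fin.removeNth, Fin.succAbove_zero]
            rfl
          simp only [mem_preimage, he, hBset_def, mem_setOf_eq, hσ_def, ha'_def, hb_def]
          rw [Fin.forall_fin_succ, Fin.sum_univ_succ]
        rw [hSeq]
        rw [show (volume : Measure (Fin (n+1) → ℝ)) = Measure.pi (fun _ => volume) from rfl]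
        rw [hmp.measure_preimage hBmeas.nullMeasurableSet]
        rw [show ((volume : Measure ℝ).prod (Measure.pi fun _ : Fin n => (volume : Measure ℝ)))
            = (volume : Measure ℝ).prod (volume : Measure (Fin n → ℝ)) from rfl]
        rw [Measure.prod_apply_symm hBmeas]
        rfl
      rcases eq_or_lt_of_le (Finset.sum_nonneg fun i (_ : i ∈ Finset.univ) => ha i) with hA | hApos
      · -- total sum zero : trivial
        rw [← hA]
        simp
      rcases eq_or_lt_of_le hA'0 with hA'z | hA'pos
      · -- A' = 0, hence b > 0
        have hbpos : 0 < b := by rw [hsum, ← hA'z, add_zero] at hApos; exact hApos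
        have ha'z : ∀ j, a' j = 0 := by
          intro j
          have := (Finset.sum_eq_zero_iff_of_nonneg (fun i (_ : i ∈ Finset.univ) => ha' i)).1
            hA'z.symm
          exact this j (Finset.mem_univ j)
        have hσz : ∀ y, σf y = 0 := by
          intro y; rw [hσ_def]; simp only; apply Finset.sum_eq_zero; intro i _
          rw [ha'z i, zero_mul]
        set r := min Δ (δ / b) with hr_def
        have hr0 : 0 ≤ r := le_min hΔ.le (by positivity)
        have hpoint : ∀ y : Fin n → ℝ,
            Set.indicator {y : Fin n → ℝ | ∀ i, |y i| < Δ} (fun _ => ENNReal.ofReal (2*r)) y ≤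
            volume {t : ℝ | (|t| < Δ ∧ ∀ i, |y i| < Δ) ∧ |b * t + σf y| ≤ δ} := by
          intro y
          by_cases hy : ∀ i, |y i| < Δ
          · rw [Set.indicator_of_mem (by exact hy)]
            have hsub : Ioo (-r) r ⊆ {t : ℝ | (|t| < Δ ∧ ∀ i, |y i| < Δ) ∧ |b * t + σf y| ≤ δ} := by
              intro t ht
              have h1 : |t| < r := abs_lt.2 ⟨ht.1, ht.2⟩
              have h2 : |t| < Δ := lt_of_lt_of_le h1 (min_le_left _ _)
              refine ⟨⟨h2, hy⟩, ?_⟩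
              rw [hσz y, add_zero, abs_mul, abs_of_nonneg hb0]
              have h3 : |t| < δ / b := lt_of_lt_of_le h1 (min_le_right _ _)
              calc b * |t| ≤ b * (δ / b) := by
                    apply mul_le_mul_of_nonneg_left h3.le hb0
                _ = δ := by field_simp
            calc ENNReal.ofReal (2*r) = volume (Ioo (-r) r) := by
                  rw [Real.volume_Ioo]; congr 1; ring
              _ ≤ _ := measure_mono hsub
          · rw [Set.indicator_of_notMem (by exact hy)]
            exact zero_le'
        rw [hvolS]
        calc ENNReal.ofReal (min 1 (δ / (Δ * ∑ i, a i)) * (2*Δ)^(n+1))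
            ≤ ENNReal.ofReal ((2*r) * (2*Δ)^n) := by
              apply ENNReal.ofReal_le_ofReal
              have hΔr : Δ * min 1 (δ / (Δ * b)) ≤ r := by
                rw [hr_def, mul_min_of_nonneg _ _ hΔ.le, mul_one]
                have : Δ * (δ / (Δ * b)) = δ / b := by field_simp
                rw [this]
              have hmin0 : 0 ≤ min 1 (δ / (Δ * ∑ i, a i)) := by positivity
              rw [hsum, ← hA'z, add_zero]
              calc min 1 (δ / (Δ * b)) * (2*Δ)^(n+1)
                  = (2 * (Δ * min 1 (δ / (Δ * b)))) * (2*Δ)^n := by ring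
                _ ≤ (2*r) * (2*Δ)^n := by
                    apply mul_le_mul_of_nonneg_right _ (by positivity)
                    linarith
          _ = ENNReal.ofReal (2*r) * ENNReal.ofReal ((2*Δ)^n) := by
              rw [ENNReal.ofReal_mul (by positivity)]
          _ = ENNReal.ofReal (2*r) * volume {y : Fin n → ℝ | ∀ i, |y i| < Δ} := by
              rw [box_vol n Δ, ← ENNReal.ofReal_pow (by positivity)]
          _ = ∫⁻ y, Set.indicator {y : Fin n → ℝ | ∀ i, |y i| < Δ}
                (fun _ => ENNReal.ofReal (2*r)) y := by
              rw [lintegral_indicator_const (box_meas n Δ)]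
          _ ≤ _ := lintegral_mono hpoint
      · -- A' > 0
        rcases eq_or_lt_of_le hb0 with hbz | hbpos
        · -- b = 0
          have hSy : MeasurableSet {y : Fin n → ℝ | (∀ i, |y i| < Δ) ∧ |σf y| ≤ δ} := by
            have h1 := box_meas n Δ
            have h2 : MeasurableSet {y : Fin n → ℝ | |σf y| ≤ δ} :=
              measurableSet_le hσmeas.abs measurable_const
            have : {y : Fin n → ℝ | (∀ i, |y i| < Δ) ∧ |σf y| ≤ δ}
                = {y : Fin n → ℝ | ∀ i, |y i| < Δ} ∩ {y : Fin n → ℝ | |σf y| ≤ δ} := rfl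
            rw [this]; exact h1.inter h2
          have hpoint : ∀ y : Fin n → ℝ,
              Set.indicator {y : Fin n → ℝ | (∀ i, |y i| < Δ) ∧ |σf y| ≤ δ}
                (fun _ => ENNReal.ofReal (2*Δ)) y ≤
              volume {t : ℝ | (|t| < Δ ∧ ∀ i, |y i| < Δ) ∧ |b * t + σf y| ≤ δ} := by
            intro y
            by_cases hy : (∀ i, |y i| < Δ) ∧ |σf y| ≤ δ
            · rw [Set.indicator_of_mem (by exact hy)]
              have hsub : Ioo (-Δ) Δ ⊆
                  {t : ℝ | (|t| < Δ ∧ ∀ i, |y i| < Δ) ∧ |b * t + σf y| ≤ δ} := by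
                intro t ht
                refine ⟨⟨abs_lt.2 ⟨ht.1, ht.2⟩, hy.1⟩, ?_⟩
                rw [← hbz, zero_mul, zero_add]; exact hy.2
              calc ENNReal.ofReal (2*Δ) = volume (Ioo (-Δ) Δ) := by
                    rw [Real.volume_Ioo]; congr 1; ring
                _ ≤ _ := measure_mono hsub
            · rw [Set.indicator_of_notMem (by exact hy)]
              exact zero_le'
          rw [hvolS]
          calc ENNReal.ofReal (min 1 (δ / (Δ * ∑ i, a i)) * (2*Δ)^(n+1))
              = ENNReal.ofReal (2*Δ) * ENNReal.ofReal (min 1 (δ / (Δ * A')) * (2*Δ)^n) := by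
                rw [← ENNReal.ofReal_mul (by positivity)]
                rw [hsum, ← hbz, zero_add]
                congr 1; ring
            _ ≤ ENNReal.ofReal (2*Δ) *
                  volume {y : Fin n → ℝ | (∀ i, |y i| < Δ) ∧ |σf y| ≤ δ} := by
                apply mul_le_mul_right
                exact ih a' ha' Δ δ hΔ hδ
            _ = ∫⁻ y, Set.indicator {y : Fin n → ℝ | (∀ i, |y i| < Δ) ∧ |σf y| ≤ δ}
                  (fun _ => ENNReal.ofReal (2*Δ)) y := by
                rw [lintegral_indicator_const hSy]
            _ ≤ _ := lintegral_mono hpoint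
        · -- 0 < b and 0 < A' : the main case
          have hc : 0 < b * Δ := by positivity
          have hD : 0 < Δ * A' := by positivity
          set c := b * Δ with hc_def
          set D := Δ * A' with hD_def
          set q := c + δ with hq_def
          set w := 2 * min c δ with hw_def
          set s := min w (max (q - D) 0) with hs_def
          have hw0 : 0 ≤ w := by
            rw [hw_def]; have := le_min hc.le hδ; positivity
          have hwq : w ≤ q := by
            rw [hw_def, hq_def]
            have h1 := min_le_left c δ; have h2 := min_le_right c δ; linarith
          have hs0 : 0 ≤ s := le_min hw0 (le_max_right _ _)
          have hsw : s ≤ w := min_le_left _ _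
          set B' := (2*Δ)^n with hB'_def
          have hB'0 : 0 ≤ B' := by positivity
          clear_value c D q w s B'
          set A2 : Set ((Fin n → ℝ) × ℝ) :=
            {p | ((∀ i, |p.1 i| < Δ) ∧ |σf p.1| ≤ q - p.2) ∧ p.2 ∈ Ioc 0 w} with hA2_def
          have hA2meas : MeasurableSet A2 := by
            have h1 : MeasurableSet {p : (Fin n → ℝ) × ℝ | ∀ i, |p.1 i| < Δ} :=
              (box_meas n Δ).preimage measurable_fst
            have h2 : MeasurableSet {p : (Fin n → ℝ) × ℝ | |σf p.1| ≤ q - p.2} :=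
              measurableSet_le (hσmeas.comp measurable_fst).abs
                (measurable_const.sub measurable_snd)
            have h3 : MeasurableSet {p : (Fin n → ℝ) × ℝ | p.2 ∈ Ioc 0 w} :=
              measurableSet_Ioc.preimage measurable_snd
            have : A2 = ({p : (Fin n → ℝ) × ℝ | ∀ i, |p.1 i| < Δ} ∩
                {p : (Fin n → ℝ) × ℝ | |σf p.1| ≤ q - p.2}) ∩
                {p : (Fin n → ℝ) × ℝ | p.2 ∈ Ioc 0 w} := by
              ext p; simp [hA2_def, and_assoc]
            rw [this]; exact (h1.inter h2).inter h3
          have hpoint : ∀ y : Fin n → ℝ,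
              ENNReal.ofReal b⁻¹ * volume (Prod.mk y ⁻¹' A2) ≤
              volume {t : ℝ | (|t| < Δ ∧ ∀ i, |y i| < Δ) ∧ |b * t + σf y| ≤ δ} := by
            intro y
            by_cases hy : ∀ i, |y i| < Δ
            · have hpre : Prod.mk y ⁻¹' A2 = Ioc 0 (min w (q - |σf y|)) := by
                ext u
                constructor
                · rintro ⟨⟨-, h1⟩, h2, h3⟩
                  exact ⟨h2, le_min h3 (by linarith)⟩
                · rintro ⟨h2, h3⟩
                  have hh1 := le_trans h3 (min_le_left w (q - |σf y|))
                  have hh2 := le_trans h3 (min_le_right w (q - |σf y|))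
                  exact ⟨⟨hy, by linarith⟩, h2, hh1⟩
              rw [hpre, Real.volume_Ioc, sub_zero,
                ← ENNReal.ofReal_mul (by positivity : (0:ℝ) ≤ b⁻¹)]
              have hset : {t : ℝ | (|t| < Δ ∧ ∀ i, |y i| < Δ) ∧ |b * t + σf y| ≤ δ}
                  = {t : ℝ | |t| < Δ ∧ |b * t + σf y| ≤ δ} := by
                ext t; simp [hy]
              rw [hset, hw_def, hq_def, hc_def]
              exact one_dim_lb Δ b (σf y) δ hΔ hbpos hδ
            · have hpre : Prod.mk y ⁻¹' A2 = ∅ := by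
                ext u; simp [hA2_def, hy]
              rw [hpre]; simp
          have hmeasF : Measurable fun u : ℝ => ENNReal.ofReal (min 1 ((q - u)/D) * B') := by
            apply Measurable.ennreal_ofReal
            exact (measurable_const.min ((measurable_const.sub measurable_id).div_const D)).mul_const B'
          have hswap : ∫⁻ y, ENNReal.ofReal b⁻¹ * volume (Prod.mk y ⁻¹' A2)
              = ENNReal.ofReal b⁻¹ * ∫⁻ u, volume ((fun y' => (y', u)) ⁻¹' A2) := by
            rw [lintegral_const_mul' _ _ ENNReal.ofReal_ne_top]
            congr 1
            rw [← Measure.prod_apply hA2meas, Measure.prod_apply_symm hA2meas]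
          have hIH : ∀ u : ℝ, (Ioc 0 w).indicator
                (fun u => ENNReal.ofReal (min 1 ((q - u)/D) * B')) u
              ≤ volume ((fun y' => (y', u)) ⁻¹' A2) := by
            intro u
            by_cases hu : u ∈ Ioc 0 w
            · rw [Set.indicator_of_mem hu]
              have hqu : 0 ≤ q - u := by
                have := hu.2; linarith [hwq]
              have hpre : (fun y' : Fin n → ℝ => (y', u)) ⁻¹' A2
                  = {y : Fin n → ℝ | (∀ i, |y i| < Δ) ∧ |σf y| ≤ q - u} := by
                ext y
                constructor
                · rintro ⟨⟨h1, h2⟩, -⟩; exact ⟨h1, h2⟩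
                · intro h; exact ⟨h, hu⟩
              rw [hpre, hD_def, hB'_def]
              exact ih a' ha' Δ (q - u) hΔ hqu
            · rw [Set.indicator_of_notMem hu]; exact zero_le'
          have hsplit : ∫⁻ u in Ioc 0 w, ENNReal.ofReal (min 1 ((q - u)/D) * B')
              = (∫⁻ u in Ioc 0 s, ENNReal.ofReal (min 1 ((q - u)/D) * B'))
              + ∫⁻ u in Ioc s w, ENNReal.ofReal (min 1 ((q - u)/D) * B') := by
            rw [← Ioc_union_Ioc_eq_Ioc hs0 hsw,
              lintegral_union measurableSet_Ioc (Set.Ioc_disjoint_Ioc_of_le le_rfl)]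
          have hpart1 : ENNReal.ofReal B' * ENNReal.ofReal s
              ≤ ∫⁻ u in Ioc 0 s, ENNReal.ofReal (min 1 ((q - u)/D) * B') := by
            have hbound : ∀ u ∈ Ioc 0 s,
                ENNReal.ofReal B' ≤ ENNReal.ofReal (min 1 ((q - u)/D) * B') := by
              intro u hu
              apply ENNReal.ofReal_le_ofReal
              have h1 : u ≤ max (q - D) 0 :=
                le_trans hu.2 (by rw [hs_def]; exact min_le_right _ _)
              have h2 : u ≤ q - D := by
                rcases max_cases (q - D) 0 with ⟨e, _⟩ | ⟨e, l⟩
                · rw [e] at h1; exact h1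
                · rw [e] at h1; linarith [hu.1]
              have h3 : (1:ℝ) ≤ (q - u)/D := by rw [le_div_iff₀ hD]; linarith
              rw [min_eq_left h3, one_mul]
            calc ENNReal.ofReal B' * ENNReal.ofReal s
                = ENNReal.ofReal B' * volume (Ioc (0:ℝ) s) := by
                  rw [Real.volume_Ioc, sub_zero]
              _ = ∫⁻ _ in Ioc (0:ℝ) s, ENNReal.ofReal B' := (setLIntegral_const _ _).symm
              _ ≤ _ := setLIntegral_mono hmeasF hbound
          have hpart2 : ENNReal.ofReal ((q*(w - s) - (w^2 - s^2)/2) * (B'/D))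
              ≤ ∫⁻ u in Ioc s w, ENNReal.ofReal (min 1 ((q - u)/D) * B') := by
            have hbound : ∀ u ∈ Ioc s w,
                ENNReal.ofReal ((q - u) * (B'/D)) ≤ ENNReal.ofReal (min 1 ((q - u)/D) * B') := by
              intro u hu
              apply ENNReal.ofReal_le_ofReal
              have h1 : q - D ≤ s ∨ w ≤ s := by
                rcases min_cases w (max (q - D) 0) with ⟨e, l⟩ | ⟨e, l⟩
                · right; rw [hs_def, e]
                · left; rw [hs_def, e]; exact le_max_left _ _
              have h2 : (q - u)/D ≤ 1 := by
                rw [div_le_one hD]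
                rcases h1 with h | h
                · linarith [hu.1]
                · linarith [hu.1, hu.2]
              calc (q - u) * (B'/D) = ((q - u)/D) * B' := by ring
                _ ≤ min 1 ((q - u)/D) * B' := by
                    apply mul_le_mul_of_nonneg_right _ hB'0
                    exact le_min h2 (le_refl _)
            have hcont : Continuous fun u : ℝ => (q - u) * (B'/D) := by fun_prop
            have hIcalc : ∫⁻ u in Ioc s w, ENNReal.ofReal ((q - u) * (B'/D))
                = ENNReal.ofReal ((q*(w - s) - (w^2 - s^2)/2) * (B'/D)) := by
              rw [← ofReal_integral_eq_lintegral_ofReal hcont.integrableOn_Ioc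
                (by filter_upwards [ae_restrict_mem measurableSet_Ioc] with u hu
                    exact mul_nonneg (by linarith [hwq, hu.2] : (0:ℝ) ≤ q - u)
                      (div_nonneg hB'0 hD.le))]
              congr 1
              rw [show (∫ u in Ioc s w, (q - u) * (B'/D))
                  = ∫ u in s..w, (q - u) * (B'/D) from (intervalIntegral.integral_of_le hsw).symm]
              rw [intervalIntegral.integral_mul_const, intervalIntegral.integral_sub
                intervalIntegrable_const intervalIntegral.intervalIntegrable_id,
                intervalIntegral.integral_const, integral_id]
              simp only [smul_eq_mul]
              ring
            exact le_trans (le_of_eq hIcalc.symm) (setLIntegral_mono hmeasF hbound)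
          -- final assembly
          rw [hvolS]
          have hfinal : ENNReal.ofReal (min 1 (δ / (Δ * ∑ i, a i)) * (2*Δ)^(n+1))
              ≤ ENNReal.ofReal b⁻¹ * (ENNReal.ofReal B' * ENNReal.ofReal s
                  + ENNReal.ofReal ((q*(w - s) - (w^2 - s^2)/2) * (B'/D))) := by
            have hJ0 : 0 ≤ q*(w - s) - (w^2 - s^2)/2 := by
              nlinarith [mul_nonneg (sub_nonneg.2 hsw) (by linarith : (0:ℝ) ≤ 2*q - w - s)]
            rw [← ENNReal.ofReal_mul hB'0, ← ENNReal.ofReal_add (mul_nonneg hB'0 hs0)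
              (mul_nonneg hJ0 (div_nonneg hB'0 hD.le)),
              ← ENNReal.ofReal_mul (inv_nonneg.2 hb0)]
            apply ENNReal.ofReal_le_ofReal
            have hA2' := lemA2 c D δ hc hD hδ
            rw [← hw_def] at hA2'
            rw [show c + δ = q from hq_def.symm] at hA2'
            rw [← hs_def] at hA2'
            have hEq : Δ * ∑ i, a i = D + c := by
              rw [hsum, hc_def, hD_def]; ring
            rw [hEq]
            have hbne : b ≠ 0 := ne_of_gt hbpos
            have hDne : D ≠ 0 := ne_of_gt hD
            have h1 : min 1 (δ/(D+c)) * (2*Δ)^(n+1)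
                = (2*c*min 1 (δ/(D+c))) * (B'/b) := by
              rw [hB'_def, hc_def, pow_succ]; field_simp
            have h2 : b⁻¹ * (B'*s + (q*(w - s) - (w^2 - s^2)/2) * (B'/D))
                = (s + (q*(w - s) - (w^2 - s^2)/2)/D) * (B'/b) := by
              field_simp
            rw [h1, h2]
            exact mul_le_mul_of_nonneg_right hA2' (div_nonneg hB'0 hb0)
          calc ENNReal.ofReal (min 1 (δ / (Δ * ∑ i, a i)) * (2*Δ)^(n+1))
              ≤ ENNReal.ofReal b⁻¹ * (ENNReal.ofReal B' * ENNReal.ofReal s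
                  + ENNReal.ofReal ((q*(w - s) - (w^2 - s^2)/2) * (B'/D))) := hfinal
            _ ≤ ENNReal.ofReal b⁻¹ *
                  ((∫⁻ u in Ioc 0 s, ENNReal.ofReal (min 1 ((q - u)/D) * B'))
                  + ∫⁻ u in Ioc s w, ENNReal.ofReal (min 1 ((q - u)/D) * B')) :=
                mul_le_mul_right (add_le_add hpart1 hpart2) _
            _ = ENNReal.ofReal b⁻¹ * ∫⁻ u in Ioc 0 w,
                  ENNReal.ofReal (min 1 ((q - u)/D) * B') := by rw [hsplit]
            _ = ENNReal.ofReal b⁻¹ * ∫⁻ u, (Ioc 0 w).indicator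
                  (fun u => ENNReal.ofReal (min 1 ((q - u)/D) * B')) u := by
                rw [lintegral_indicator measurableSet_Ioc]
            _ ≤ ENNReal.ofReal b⁻¹ * ∫⁻ u, volume ((fun y' => (y', u)) ⁻¹' A2) :=
                mul_le_mul_right (lintegral_mono hIH) _
            _ = ∫⁻ y, ENNReal.ofReal b⁻¹ * volume (Prod.mk y ⁻¹' A2) := hswap.symm
            _ ≤ _ := lintegral_mono hpoint

/-- **Volume lower bound for the cube–slab body.**
For `n ≥ 1`, `a ∈ [0,1]ⁿ`, an integer `k ≥ 1` and `0 < ρ ≤ k+1`, the symmetric convex body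
`K = {x : ‖x‖∞ < (k+1)/ρ, |⟨a,x⟩| ≤ n (ρ/(k+1))^{n-1}}` has volume at least `2ⁿ`. -/
theorem cube_slab_volume (n : ℕ) (hn : 1 ≤ n) (a : Fin n → ℝ)
    (ha : ∀ i, a i ∈ Set.Icc (0:ℝ) 1) (k : ℕ) (hk : 1 ≤ k)
    (ρ : ℝ) (hρ : 0 < ρ) (hρk : ρ ≤ (k : ℝ) + 1) :
    (2 : ENNReal) ^ n ≤
      volume {x : Fin n → ℝ |
        (∀ i, |x i| < ((k : ℝ) + 1) / ρ) ∧
        |∑ i, a i * x i| ≤ (n : ℝ) * (ρ / ((k : ℝ) + 1)) ^ (n - 1)} := by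
  have hk1 : (0:ℝ) < (k : ℝ) + 1 := by positivity
  have hΔ0 : (0:ℝ) < ((k : ℝ) + 1) / ρ := by positivity
  have hΔ1 : (1:ℝ) ≤ ((k : ℝ) + 1) / ρ := (one_le_div hρ).2 hρk
  have hδ0 : (0:ℝ) ≤ (n : ℝ) * (ρ / ((k : ℝ) + 1)) ^ (n - 1) := by positivity
  have hinv : ρ / ((k : ℝ) + 1) = (((k : ℝ) + 1) / ρ)⁻¹ := by
    rw [inv_div]
  by_cases hA : ∑ i, a i = 0
  · -- all aᵢ = 0
    have haz : ∀ i, a i = 0 := by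
      intro i
      exact (Finset.sum_eq_zero_iff_of_nonneg
        (fun j (_ : j ∈ Finset.univ) => (ha j).1)).1 hA i (Finset.mem_univ i)
    have hset : {x : Fin n → ℝ |
        (∀ i, |x i| < ((k : ℝ) + 1) / ρ) ∧
        |∑ i, a i * x i| ≤ (n : ℝ) * (ρ / ((k : ℝ) + 1)) ^ (n - 1)}
        = {x : Fin n → ℝ | ∀ i, |x i| < ((k : ℝ) + 1) / ρ} := by
      ext x
      have hz : ∑ i, a i * x i = 0 := Finset.sum_eq_zero fun i _ => by rw [haz i, zero_mul]
      simp [hz, hδ0]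
    rw [hset, box_vol n _]
    have h2 : (2 : ENNReal) ≤ ENNReal.ofReal (2 * (((k : ℝ) + 1) / ρ)) := by
      rw [show (2 : ENNReal) = ENNReal.ofReal 2 by norm_num]
      apply ENNReal.ofReal_le_ofReal
      linarith
    exact pow_le_pow_left' h2 n
  · have hApos : 0 < ∑ i, a i :=
      lt_of_le_of_ne (Finset.sum_nonneg fun i _ => (ha i).1) (Ne.symm hA)
    have hAn : ∑ i, a i ≤ (n : ℝ) := by
      calc ∑ i, a i ≤ ∑ _i : Fin n, (1:ℝ) := Finset.sum_le_sum fun i _ => (ha i).2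
        _ = (n : ℝ) := by simp
    refine le_trans ?_ (lemB n a (fun i => (ha i).1) (((k : ℝ) + 1) / ρ)
      ((n : ℝ) * (ρ / ((k : ℝ) + 1)) ^ (n - 1)) hΔ0 hδ0)
    rw [show (2 : ENNReal) = ENNReal.ofReal 2 by norm_num,
      ← ENNReal.ofReal_pow (by norm_num : (0:ℝ) ≤ 2)]
    apply ENNReal.ofReal_le_ofReal
    set Δ : ℝ := ((k : ℝ) + 1) / ρ with hΔ_def
    have hn0 : (0:ℝ) < (n : ℝ) := by exact_mod_cast hn
    have hkey : (Δ⁻¹) ^ n ≤ min 1 ((n : ℝ) * (ρ / ((k : ℝ) + 1)) ^ (n - 1) / (Δ * ∑ i, a i)) := by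
      apply le_min
      · apply pow_le_one₀ (by positivity)
        rw [inv_le_one_iff₀]
        right; exact hΔ1
      · rw [hinv]
        have hstep : (n : ℝ) * (Δ⁻¹) ^ (n - 1) / (Δ * (n : ℝ)) ≤
            (n : ℝ) * (Δ⁻¹) ^ (n - 1) / (Δ * ∑ i, a i) := by
          apply div_le_div_of_nonneg_left (by positivity) (by positivity)
          apply mul_le_mul_of_nonneg_left hAn hΔ0.le
        refine le_trans ?_ hstep
        have : (n : ℝ) * Δ⁻¹ ^ (n - 1) / (Δ * (n : ℝ)) = Δ⁻¹ ^ (n - 1) * Δ⁻¹ := by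
          field_simp
        rw [this, ← pow_succ, show n - 1 + 1 = n from Nat.sub_add_cancel hn]
    calc (2:ℝ) ^ n = (Δ⁻¹ * (2 * Δ)) ^ n := by
          congr 1
          field_simp
      _ = (Δ⁻¹) ^ n * (2 * Δ) ^ n := mul_pow _ _ _
      _ ≤ min 1 ((n : ℝ) * (ρ / ((k : ℝ) + 1)) ^ (n - 1) / (Δ * ∑ i, a i)) * (2 * Δ) ^ n :=
          mul_le_mul_of_nonneg_right hkey (by positivity)
end

section
/- Let r, k be integers with 0 < r < k. Let α_1, …, α_k ∈ ℝ satisfy Σ_{i=1}^k i·α_i = 0, and set β := α_r + α_{r+1} + ⋯ + α_k. Then for every integer j with |j| ≤ k there exist integers λ_1, …, λ_k with |λ_i| ≤ max{r−1, k−r} for all i, such that j·β = Σ_{i=1}^k λ_i·α_i. -/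
lemma aux_filter_Icc (r k : ℕ) (hr : 0 < r) :
    (Finset.Icc 1 k).filter (fun i => r ≤ i) = Finset.Icc r k := by
  ext i
  simp only [Finset.mem_filter, Finset.mem_Icc]
  omega

lemma aux_repr (r k : ℕ) (hr : 0 < r) (hrk : r < k)
    (α : ℕ → ℝ) (hsum : ∑ i ∈ Finset.Icc 1 k, (i : ℝ) * α i = 0)
    (j : ℤ) (hj0 : 0 ≤ j) (hj : j ≤ (k : ℤ)) :
    ∃ lam : ℕ → ℤ, (∀ i ∈ Finset.Icc 1 k, |lam i| ≤ (max (r - 1) (k - r) : ℤ)) ∧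
      (j : ℝ) * (∑ i ∈ Finset.Icc r k, α i) = ∑ i ∈ Finset.Icc 1 k, (lam i : ℝ) * α i := by
  by_cases hc : j < r
  · refine ⟨fun i => if r ≤ i then j else 0, ?_, ?_⟩
    · intro i hi
      simp only [Finset.mem_Icc] at hi
      dsimp only
      split_ifs <;> rw [abs_le] <;> constructor <;> omega
    · have h1 : ∑ x ∈ Finset.Icc 1 k, (((if r ≤ x then j else 0 : ℤ)) : ℝ) * α x
          = ∑ x ∈ Finset.Icc 1 k, (if r ≤ x then (j : ℝ) * α x else 0) :=
        Finset.sum_congr rfl (fun i _ => by split_ifs <;> simp)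
      rw [h1, ← Finset.sum_filter, aux_filter_Icc r k hr, Finset.mul_sum]
  · refine ⟨fun i => (if r ≤ i then j else 0) - (i : ℤ), ?_, ?_⟩
    · intro i hi
      simp only [Finset.mem_Icc] at hi
      dsimp only
      split_ifs <;> rw [abs_le] <;> constructor <;> omega
    · have h1 : ∑ x ∈ Finset.Icc 1 k, ((((if r ≤ x then j else 0 : ℤ)) - (x : ℤ) : ℤ) : ℝ) * α x
          = ∑ x ∈ Finset.Icc 1 k, ((if r ≤ x then (j : ℝ) * α x else 0) - (x : ℝ) * α x) :=
        Finset.sum_congr rfl (fun i _ => by split_ifs <;> push_cast <;> ring)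
      rw [h1, Finset.sum_sub_distrib, hsum, ← Finset.sum_filter, aux_filter_Icc r k hr,
        Finset.mul_sum, sub_zero]

/-- **Representing multiples of a partial sum with small coefficients (Lemma 2.3).**
Let `0 < r < k` and `α₁, …, α_k ∈ ℝ` with `∑ i·αᵢ = 0`, and `β := α_r + ⋯ + α_k`.
Then every multiple `j·β` with `|j| ≤ k` is an integer combination `∑ λᵢ αᵢ` with
`|λᵢ| ≤ max (r-1) (k-r)`. -/
theorem representation_small_coefficients (r k : ℕ) (hr : 0 < r) (hrk : r < k)
    (α : ℕ → ℝ) (hsum : ∑ i ∈ Finset.Icc 1 k, (i : ℝ) * α i = 0)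
    (j : ℤ) (hj : |j| ≤ (k : ℤ)) :
    ∃ lam : ℕ → ℤ, (∀ i ∈ Finset.Icc 1 k, |lam i| ≤ (max (r - 1) (k - r) : ℤ)) ∧
      (j : ℝ) * (∑ i ∈ Finset.Icc r k, α i) = ∑ i ∈ Finset.Icc 1 k, (lam i : ℝ) * α i := by
  rcases le_or_gt 0 j with hj0 | hj0
  · exact aux_repr r k hr hrk α hsum j hj0 (by rw [abs_of_nonneg hj0] at hj; exact hj)
  · obtain ⟨lam, hb, he⟩ := aux_repr r k hr hrk α hsum (-j) (by omega)
      (by rw [abs_of_neg hj0] at hj; exact hj)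
    refine ⟨fun i => -lam i, fun i hi => by rw [abs_neg]; exact hb i hi, ?_⟩
    push_cast at he ⊢
    simp only [neg_mul, Finset.sum_neg_distrib] at he ⊢
    linarith [he]
end

section
/- Let r, k be integers with 0 < r < k and let δ ≥ 0. Let α_1, …, α_k ∈ ℝ satisfy |Σ_{i=1}^k i·α_i| ≤ δ, and set β := α_r + α_{r+1} + ⋯ + α_k. Then for every integer j with 0 ≤ j ≤ k there exist integers λ_1, …, λ_k with |λ_i| ≤ max{r−1, k−r} for all i, such that |j·β − Σ_{i=1}^k λ_i·α_i| ≤ δ. -/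
/-- **Approximate representation of multiples of a partial sum (remark after Lemma 2.3).**
Let `0 < r < k`, `δ ≥ 0` and `α₁, …, α_k ∈ ℝ` with `|∑ i·αᵢ| ≤ δ`, and `β := α_r + ⋯ + α_k`.
Then for every `0 ≤ j ≤ k` there is an integer combination `∑ λᵢ αᵢ` with
`|λᵢ| ≤ max (r-1) (k-r)` and `|j·β - ∑ λᵢ αᵢ| ≤ δ`. -/
theorem approximate_representation (r k : ℕ) (hr : 0 < r) (hrk : r < k)
    (δ : ℝ) (hδ : 0 ≤ δ)
    (α : ℕ → ℝ) (hsum : |∑ i ∈ Finset.Icc 1 k, (i : ℝ) * α i| ≤ δ)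
    (j : ℕ) (hj : j ≤ k) :
    ∃ lam : ℕ → ℤ, (∀ i ∈ Finset.Icc 1 k, |lam i| ≤ (max (r - 1) (k - r) : ℤ)) ∧
      |(j : ℝ) * (∑ i ∈ Finset.Icc r k, α i) - ∑ i ∈ Finset.Icc 1 k, (lam i : ℝ) * α i| ≤ δ := by
  have hfilter : Finset.filter (fun i => r ≤ i) (Finset.Icc 1 k) = Finset.Icc r k := by
    ext i
    simp only [Finset.mem_filter, Finset.mem_Icc]
    omega
  have hsum1 : ∑ i ∈ Finset.Icc 1 k, (if r ≤ i then (j : ℝ) else 0) * α i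
      = (j : ℝ) * ∑ i ∈ Finset.Icc r k, α i := by
    rw [Finset.mul_sum, ← hfilter, Finset.sum_filter]
    apply Finset.sum_congr rfl
    intro i _
    by_cases h : r ≤ i <;> simp [h]
  rcases lt_or_ge j r with hjr | hjr
  · refine ⟨fun i => if r ≤ i then (j : ℤ) else 0, ?_, ?_⟩
    · intro i hi
      simp only [Finset.mem_Icc] at hi
      by_cases h : r ≤ i <;> simp only [h, if_true, if_false] <;>
        rw [Int.abs_eq_natAbs] <;> rw [le_max_iff] <;> left <;> omega
    · simp only [Int.cast_ite, Int.cast_natCast, Int.cast_zero]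
      rw [hsum1, sub_self, abs_zero]
      exact hδ
  · refine ⟨fun i => (if r ≤ i then (j : ℤ) else 0) - i, ?_, ?_⟩
    · intro i hi
      simp only [Finset.mem_Icc] at hi
      by_cases h : r ≤ i <;> simp only [h, if_true, if_false] <;>
        rw [Int.abs_eq_natAbs, le_max_iff]
      · right; omega
      · left; omega
    · have : ∑ i ∈ Finset.Icc 1 k, (((if r ≤ i then (j : ℤ) else 0) - i : ℤ) : ℝ) * α i
          = (j : ℝ) * (∑ i ∈ Finset.Icc r k, α i) - ∑ i ∈ Finset.Icc 1 k, (i : ℝ) * α i := by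
        rw [← hsum1, ← Finset.sum_sub_distrib]
        apply Finset.sum_congr rfl
        intro i _
        by_cases h : r ≤ i <;> push_cast [h] <;> ring
      rw [show (∑ i ∈ Finset.Icc 1 k,
            ((fun i => (if r ≤ i then (j : ℤ) else 0) - (i : ℤ)) i : ℝ) * α i)
          = ∑ i ∈ Finset.Icc 1 k, (((if r ≤ i then (j : ℤ) else 0) - i : ℤ) : ℝ) * α i from rfl,
        this]
      simpa using hsum
end

section
/- Let k, r be integers with 0 < r < k, let m ≥ 8 be an integer, let n = m², and let f : ℕ → ℝ be non-negative with f(m) ≥ 4·log₂(m). Suppose that for every a' ∈ [-1,1]^m there exists x' ∈ ℤ^m \ {0} with ‖x'‖∞ ≤ k and |⟨a',x'⟩| ≤ 2^{−f(m)}. Then for every a ∈ [-1,1]^n there exists x ∈ ℤ^n \ {0} with ‖x‖∞ ≤ max{r−1, k−r} and |⟨a,x⟩| ≤ 2^{−f(m)/2}. -/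
lemma base_rep (k : ℕ) : ∀ (M : ℕ) (x : ℕ → ℤ), (∀ i, |x i| ≤ (k:ℤ)) →
    (∑ i ∈ Finset.range M, x i * (2*(k:ℤ)+1)^i) = 0 → ∀ i < M, x i = 0 := by
  intro M
  induction M with
  | zero => intro x _ _ i hi; omega
  | succ M ih =>
    intro x hx hsum i hi
    rw [Finset.sum_range_succ'] at hsum
    set S : ℤ := ∑ i ∈ Finset.range M, x (i+1) * (2*(k:ℤ)+1)^i with hS
    have hrw : ∑ i ∈ Finset.range M, x (i+1) * (2*(k:ℤ)+1)^(i+1) = (2*(k:ℤ)+1) * S := by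
      rw [hS, Finset.mul_sum]
      exact Finset.sum_congr rfl fun j _ => by ring
    rw [hrw, pow_zero, mul_one] at hsum
    have hdvd : (2*(k:ℤ)+1) ∣ x 0 := ⟨-S, by linarith⟩
    have hx0 : x 0 = 0 := by
      rcases hdvd with ⟨c, hc⟩
      rcases eq_or_ne c 0 with h | h
      · simp [hc, h]
      · exfalso
        have h1 : (1:ℤ) ≤ |c| := Int.one_le_abs h
        have h2 : |x 0| = (2*(k:ℤ)+1) * |c| := by
          rw [hc, abs_mul, abs_of_nonneg (by positivity : (0:ℤ) ≤ 2*(k:ℤ)+1)]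
        have := hx 0
        nlinarith
    have hS0 : S = 0 := by
      have : (2*(k:ℤ)+1) * S = 0 := by omega
      have h2 : (2*(k:ℤ)+1) ≠ 0 := by positivity
      exact (mul_eq_zero.mp this).resolve_left h2
    rcases Nat.eq_zero_or_eq_succ_pred i with h | h
    · rw [h]; exact hx0
    · rw [h]
      exact ih (fun j => x (j+1)) (fun j => hx (j+1)) hS0 (i-1) (by omega)

lemma oracle_key (k m : ℕ) (hm : 1 ≤ m) (fm : ℝ)
    (horacle : ∀ a' : Fin m → ℝ, (∀ i, a' i ∈ Set.Icc (-1:ℝ) 1) →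
      ∃ x' : Fin m → ℤ, x' ≠ 0 ∧ (∀ i, |x' i| ≤ (k : ℤ)) ∧
        |∑ i, a' i * (x' i : ℝ)| ≤ (2 : ℝ) ^ (-fm)) :
    (2:ℝ) ^ fm ≤ ((2*k+1 : ℕ) : ℝ) ^ (m-1) := by
  set q : ℕ := 2*k+1 with hq
  have hq1 : (1:ℝ) ≤ (q:ℝ) := by exact_mod_cast Nat.one_le_iff_ne_zero.mpr (by omega)
  have hqpos : (0:ℝ) < (q:ℝ)^(m-1) := by positivity
  set a' : Fin m → ℝ := fun i => (q:ℝ)^(i:ℕ) / (q:ℝ)^(m-1) with ha'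
  have hmem : ∀ i, a' i ∈ Set.Icc (-1:ℝ) 1 := by
    intro i
    constructor
    · have : (0:ℝ) < a' i := by rw [ha']; positivity
      linarith
    · rw [ha']
      simp only
      rw [div_le_one hqpos]
      exact pow_le_pow_right₀ hq1 (by omega)
  obtain ⟨x', hx0, hxk, hxs⟩ := horacle a' hmem
  set T : ℤ := ∑ i, x' i * (2*(k:ℤ)+1)^(i:ℕ) with hT
  have hTne : T ≠ 0 := by
    intro h0
    set y : ℕ → ℤ := fun i => if h : i < m then x' ⟨i, h⟩ else 0 with hy
    have hsum0 : ∑ i ∈ Finset.range m, y i * (2*(k:ℤ)+1)^i = 0 := by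
      rw [← Fin.sum_univ_eq_sum_range (fun i => y i * (2*(k:ℤ)+1)^i) m]
      rw [← h0, hT]
      apply Finset.sum_congr rfl
      intro i _
      simp [hy, i.isLt]
    have hall := base_rep k m y (fun i => by
      by_cases h : i < m
      · simpa [hy, h] using hxk ⟨i, h⟩
      · simp [hy, h]) hsum0
    apply hx0
    funext i
    have := hall i.val i.isLt
    simpa [hy, i.isLt] using this
  have hsum : ∑ i, a' i * (x' i : ℝ) = (T:ℝ) / (q:ℝ)^(m-1) := by
    calc ∑ i, a' i * (x' i : ℝ)
        = ∑ i, ((x' i : ℝ) * (q:ℝ)^(i:ℕ)) / (q:ℝ)^(m-1) :=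
          Finset.sum_congr rfl (fun i _ => by rw [ha']; ring)
      _ = (∑ i, (x' i:ℝ) * (q:ℝ)^(i:ℕ)) / (q:ℝ)^(m-1) := by rw [Finset.sum_div]
      _ = (T:ℝ) / (q:ℝ)^(m-1) := by
          congr 1
          rw [hT, hq]
          push_cast
          ring
  have h1T : (1:ℝ) ≤ |(T:ℝ)| := by exact_mod_cast Int.one_le_abs hTne
  have hlow : 1 / (q:ℝ)^(m-1) ≤ (2:ℝ)^(-fm) := by
    calc 1 / (q:ℝ)^(m-1) ≤ |(T:ℝ)| / (q:ℝ)^(m-1) := by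
          gcongr
      _ = |∑ i, a' i * (x' i : ℝ)| := by rw [hsum, abs_div, abs_of_pos hqpos]
      _ ≤ (2:ℝ)^(-fm) := hxs
  have : 1 / (q:ℝ)^(m-1) ≤ 1 / (2:ℝ)^fm := by
    rwa [Real.rpow_neg (by norm_num), ← one_div] at hlow
  exact le_of_one_div_le_one_div hqpos this


lemma numeric_ineq (C m : ℕ) (hC : 1 ≤ C) (hm : 8 ≤ m) :
    2*C*(m*m)*(2^(m-1)*(C+1)^((m+1)/2)) + 1 < (C+1)^(m*m) := by
  set D := C + 1 with hD
  have hD2 : 2 ≤ D := by omega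
  have h1 : 2*C*(m*m)*(2^(m-1)*D^((m+1)/2)) ≤ D^2 * D^(2*m) * (D^(m-1) * D^m) := by
    have e1 : 2*C ≤ D^2 := by nlinarith
    have e2 : m*m ≤ D^(2*m) := by
      have : m ≤ 2^m := (Nat.lt_two_pow_self).le
      calc m*m ≤ 2^m * 2^m := Nat.mul_le_mul this this
        _ = 2^(2*m) := by rw [← pow_add]; ring_nf
        _ ≤ D^(2*m) := Nat.pow_le_pow_left hD2 _
    have e3 : 2^(m-1) ≤ D^(m-1) := Nat.pow_le_pow_left hD2 _
    have e4 : D^((m+1)/2) ≤ D^m := Nat.pow_le_pow_right (by omega) (by omega)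
    exact Nat.mul_le_mul (Nat.mul_le_mul e1 e2) (Nat.mul_le_mul e3 e4)
  have h2 : D^2 * D^(2*m) * (D^(m-1) * D^m) = D^(4*m+1) := by
    rw [← pow_add, ← pow_add, ← pow_add]
    congr 1
    omega
  have h3 : 1 ≤ D^(4*m+1) := Nat.one_le_pow _ _ (by omega)
  have h4 : 2 * D^(4*m+1) ≤ D^(4*m+2) := by
    calc 2 * D^(4*m+1) ≤ D * D^(4*m+1) := Nat.mul_le_mul_right _ hD2
      _ = D^(4*m+2) := by rw [← pow_succ']
  have h5 : D^(4*m+2) < D^(m*m) := by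
    apply Nat.pow_lt_pow_right (by omega)
    have : 8*m ≤ m*m := Nat.mul_le_mul_right m hm
    omega
  omega


lemma pigeon (n D : ℕ) (hD : 1 ≤ D) (S : (Fin n → Fin D) → ℝ) (R ε : ℝ) (hε : 0 < ε)
    (hbound : ∀ v, |S v| ≤ R) (hcard : 2*R/ε + 1 < ((D^n : ℕ) : ℝ)) :
    ∃ u v : Fin n → Fin D, u ≠ v ∧ |S u - S v| < ε := by
  have hR : 0 ≤ R := by
    have := hbound (fun _ => ⟨0, hD⟩)
    linarith [abs_nonneg (S (fun _ => ⟨0, hD⟩))]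
  set N : ℤ := ⌊2*R/ε⌋ with hN
  have hmaps : ∀ v : Fin n → Fin D, ⌊(S v + R)/ε⌋ ∈ Finset.Icc (0:ℤ) N := by
    intro v
    have h1 := abs_le.mp (hbound v)
    rw [Finset.mem_Icc]
    constructor
    · exact Int.floor_nonneg.mpr (div_nonneg (by linarith [h1.1]) hε.le)
    · exact Int.floor_le_floor ((div_le_div_iff_of_pos_right hε).mpr (by linarith [h1.2]))
  have hcard' : (Finset.Icc (0:ℤ) N).card < Finset.univ.card (α := Fin n → Fin D) := by
    rw [Finset.card_univ, Fintype.card_fun, Fintype.card_fin, Fintype.card_fin, Int.card_Icc]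
    have hNr : (N:ℝ) ≤ 2*R/ε := Int.floor_le _
    have h1 : (N:ℝ) + 1 < ((D^n : ℕ) : ℝ) := by linarith
    have h2 : N + 1 < ((D^n : ℕ) : ℤ) := by exact_mod_cast h1
    have h3 : (1:ℤ) ≤ ((D^n : ℕ) : ℤ) := by exact_mod_cast Nat.one_le_pow n D hD
    omega
  obtain ⟨u, -, v, -, huv, hguv⟩ :=
    Finset.exists_ne_map_eq_of_card_lt_of_maps_to hcard' (fun w _ => hmaps w)
  refine ⟨u, v, huv, ?_⟩
  have h1 := Int.floor_le ((S u + R)/ε)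
  have h2 := Int.lt_floor_add_one ((S u + R)/ε)
  have h3 := Int.floor_le ((S v + R)/ε)
  have h4 := Int.lt_floor_add_one ((S v + R)/ε)
  have hc : ((⌊(S u + R)/ε⌋ : ℤ) : ℝ) = ((⌊(S v + R)/ε⌋ : ℤ) : ℝ) := by exact_mod_cast hguv
  have d1 : (S u + R)/ε - (S v + R)/ε < 1 := by linarith
  have d2 : (S v + R)/ε - (S u + R)/ε < 1 := by linarith
  have e1 : (S u + R)/ε - (S v + R)/ε = (S u - S v)/ε := by ring
  have e2 : (S v + R)/ε - (S u + R)/ε = (S v - S u)/ε := by ring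
  rw [e1] at d1
  rw [e2] at d2
  have f1 : S u - S v < ε := (div_lt_one hε).mp d1
  have f2 : S v - S u < ε := (div_lt_one hε).mp d2
  rw [abs_lt]
  constructor <;> linarith


/-- **One step of the coefficient-halving self-reduction (Lemma 2.4), existence form.**
Let `0 < r < k`, `m ≥ 8`, `n = m²`, and `f : ℕ → ℝ` non-negative with `f(m) ≥ 4 log₂ m`.
If for every `a' ∈ [-1,1]ᵐ` there is a nonzero `x' ∈ ℤᵐ` with `‖x'‖∞ ≤ k` and
`|⟨a',x'⟩| ≤ 2^{-f(m)}`, then for every `a ∈ [-1,1]^{m²}` there is a nonzero `x ∈ ℤ^{m²}`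
with `‖x‖∞ ≤ max (r-1) (k-r)` and `|⟨a,x⟩| ≤ 2^{-f(m)/2}`. -/
theorem coefficient_halving (k r : ℕ) (hr : 0 < r) (hrk : r < k)
    (m : ℕ) (hm : 8 ≤ m) (f : ℕ → ℝ) (hf0 : ∀ i, 0 ≤ f i)
    (hfm : 4 * Real.logb 2 m ≤ f m)
    (horacle : ∀ a' : Fin m → ℝ, (∀ i, a' i ∈ Set.Icc (-1:ℝ) 1) →
      ∃ x' : Fin m → ℤ, x' ≠ 0 ∧ (∀ i, |x' i| ≤ (k : ℤ)) ∧
        |∑ i, a' i * (x' i : ℝ)| ≤ (2 : ℝ) ^ (-(f m))) :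
    ∀ a : Fin (m * m) → ℝ, (∀ i, a i ∈ Set.Icc (-1:ℝ) 1) →
      ∃ x : Fin (m * m) → ℤ, x ≠ 0 ∧ (∀ i, |x i| ≤ (max (r - 1) (k - r) : ℤ)) ∧
        |∑ i, a i * (x i : ℝ)| ≤ (2 : ℝ) ^ (-(f m) / 2) := by
  set n := m * m with hn
  intro a ha
  set C : ℕ := max (r - 1) (k - r) with hCdef
  have hmax1 : r - 1 ≤ C := Nat.le_max_left _ _
  have hmax2 : k - r ≤ C := Nat.le_max_right _ _
  have hC1 : 1 ≤ C := by omega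
  have hk2C : k ≤ 2*C+1 := by omega
  have hCcast : (max ((r:ℤ) - 1) ((k:ℤ) - (r:ℤ)) : ℤ) = ((C:ℕ):ℤ) := by
    rw [hCdef]
    push_cast [show 1 ≤ r from hr, hrk.le]
    ring
  have hkey : (2:ℝ)^(f m) ≤ ((2*k+1 : ℕ):ℝ)^(m-1) := oracle_key k m (by omega) (f m) horacle
  set ε : ℝ := (2:ℝ)^(-(f m)/2) with hε
  have hεpos : 0 < ε := Real.rpow_pos_of_pos (by norm_num) _
  set h2 : ℕ := (m+1)/2 with hh2
  set B : ℝ := 2^(m-1) * ((C:ℝ)+1)^h2 with hB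
  have hBpos : 0 < B := by positivity
  have hone : 1/ε = (2:ℝ)^(f m/2) := by
    rw [hε, one_div, ← Real.rpow_neg (by norm_num : (0:ℝ) ≤ 2)]
    congr 1
    ring
  have hinv : 1/ε ≤ B := by
    have hsq : (1/ε)^(2:ℕ) = (2:ℝ)^(f m) := by
      rw [hone, ← Real.rpow_natCast ((2:ℝ)^(f m/2)) 2,
        ← Real.rpow_mul (by norm_num : (0:ℝ) ≤ 2)]
      congr 1
      push_cast
      ring
    have hC1R : (1:ℝ) ≤ (C:ℝ)+1 := le_add_of_nonneg_left (Nat.cast_nonneg C)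
    have hBsq : (2:ℝ)^(f m) ≤ B^(2:ℕ) := by
      calc (2:ℝ)^(f m) ≤ ((2*k+1 : ℕ):ℝ)^(m-1) := hkey
        _ ≤ (4*((C:ℝ)+1))^(m-1) := by
            apply pow_le_pow_left₀ (by positivity)
            have hkr : (k:ℝ) ≤ 2*(C:ℝ)+1 := by exact_mod_cast hk2C
            push_cast
            linarith
        _ = 4^(m-1) * ((C:ℝ)+1)^(m-1) := mul_pow _ _ _
        _ ≤ 4^(m-1) * ((C:ℝ)+1)^(2*h2) := by
            apply mul_le_mul_of_nonneg_left ?_ (by positivity)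
            apply pow_le_pow_right₀ hC1R
            rw [hh2]
            omega
        _ = B^(2:ℕ) := by
            rw [hB, mul_pow, ← pow_mul, ← pow_mul]
            rw [show (4:ℝ) = 2^(2:ℕ) by norm_num, ← pow_mul]
            rw [Nat.mul_comm 2 (m-1), Nat.mul_comm 2 h2]
    refine le_of_pow_le_pow_left₀ ?_ hBpos.le (by rw [hsq]; exact hBsq)
    norm_num
  have hnum : 2*(C:ℝ)*n * B + 1 < ((C:ℝ)+1)^n := by
    have h := numeric_ineq C m hC1 hm
    have h' : ((2*C*(m*m)*(2^(m-1)*(C+1)^((m+1)/2)) + 1 : ℕ) : ℝ) < (((C+1)^(m*m) : ℕ) : ℝ) := by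
      exact_mod_cast h
    push_cast at h'
    rw [hB, hn, hh2]
    push_cast
    linarith
  have hSb : ∀ v : Fin n → Fin (C+1), |∑ i, a i * ((v i : ℕ) : ℝ)| ≤ (C:ℝ)*n := by
    intro v
    calc |∑ i, a i * ((v i : ℕ) : ℝ)| ≤ ∑ i, |a i * ((v i : ℕ) : ℝ)| :=
          Finset.abs_sum_le_sum_abs _ _
      _ ≤ ∑ _i : Fin n, (C:ℝ) := by
          apply Finset.sum_le_sum
          intro i _
          rw [abs_mul]
          have h1 : |a i| ≤ 1 := abs_le.mpr ⟨(ha i).1, (ha i).2⟩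
          have hv : |((v i : ℕ) : ℝ)| ≤ (C:ℝ) := by
            rw [abs_of_nonneg (by positivity)]
            exact_mod_cast Nat.lt_succ_iff.mp (v i).isLt
          calc |a i| * |((v i : ℕ) : ℝ)| ≤ 1 * (C:ℝ) :=
                mul_le_mul h1 hv (abs_nonneg _) (by norm_num)
            _ = (C:ℝ) := one_mul _
      _ = (C:ℝ)*n := by simp [Finset.sum_const, Finset.card_univ, mul_comm]
  have hcd : 2*((C:ℝ)*n)/ε + 1 < ((((C+1):ℕ)^n : ℕ) : ℝ) := by
    have e1 : 2*((C:ℝ)*n)/ε = (2*(C:ℝ)*n) * (1/ε) := by ring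
    have e2 : (2*(C:ℝ)*n) * (1/ε) ≤ 2*(C:ℝ)*n * B :=
      mul_le_mul_of_nonneg_left hinv (by positivity)
    have e3 : ((((C+1):ℕ)^n : ℕ) : ℝ) = ((C:ℝ)+1)^n := by push_cast; ring
    rw [e1, e3]
    linarith
  obtain ⟨u, v, huv, hlt⟩ :=
    pigeon n (C+1) (by omega) (fun w => ∑ i, a i * ((w i : ℕ) : ℝ)) ((C:ℝ)*n) ε hεpos hSb hcd
  refine ⟨fun i => ((u i : ℕ) : ℤ) - ((v i : ℕ) : ℤ), ?_, ?_, ?_⟩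
  · intro h0
    apply huv
    funext i
    have h1 := congrFun h0 i
    simp only [Pi.zero_apply, sub_eq_zero] at h1
    exact Fin.ext (by exact_mod_cast h1)
  · intro i
    show |((u i : ℕ) : ℤ) - ((v i : ℕ) : ℤ)| ≤ max ((r:ℤ) - 1) ((k:ℤ) - (r:ℤ))
    rw [hCcast, abs_le]
    have h1 : (u i : ℕ) ≤ C := Nat.lt_succ_iff.mp (u i).isLt
    have h2 : (v i : ℕ) ≤ C := Nat.lt_succ_iff.mp (v i).isLt
    constructor <;> omega
  · show |∑ i, a i * ((((u i : ℕ) : ℤ) - ((v i : ℕ) : ℤ) : ℤ) : ℝ)| ≤ ε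
    have hdiff : ∑ i, a i * ((((u i : ℕ) : ℤ) - ((v i : ℕ) : ℤ) : ℤ) : ℝ)
        = (∑ i, a i * ((u i : ℕ) : ℝ)) - ∑ i, a i * ((v i : ℕ) : ℝ) := by
      rw [← Finset.sum_sub_distrib]
      apply Finset.sum_congr rfl
      intro i _
      push_cast
      ring
    rw [hdiff]
    exact le_of_lt hlt
end

section
/- Let n ≥ 1, let a ∈ [0,1]^n, let k ≥ 1 be an integer, and let ρ > 0 satisfy ρ·(ρ/k)^n < 1/2. Define the (n+1)×(n+1) matrix B by: B_{ii} = ρ/k for 1 ≤ i ≤ n, B_{i,n+1} = 0 for 1 ≤ i ≤ n, B_{n+1,j} = (1/(2nk))·(k/ρ)^n·a_j for 1 ≤ j ≤ n, and B_{n+1,n+1} = (k/ρ)^n. Then det(B) = 1, and for every y ∈ ℤ^{n+1} \ {0} with ‖By‖∞ ≤ ρ one has: y_{n+1} = 0, the vector (y_1,…,y_n) is nonzero, |y_i| ≤ k for all 1 ≤ i ≤ n, and |Σ_{i=1}^n y_i·a_i| ≤ 2nk·ρ·(ρ/k)^n. -/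
/-- **The lattice used to reduce number balancing to ℓ∞-SVP (Theorem 2.5).**
For `n ≥ 1`, `a ∈ [0,1]ⁿ`, an integer `k ≥ 1` and `ρ > 0` with `ρ(ρ/k)ⁿ < 1/2`, the
`(n+1)×(n+1)` matrix `B` with `Bᵢᵢ = ρ/k` and `B_{i,n+1} = 0` for `i ≤ n`,
`B_{n+1,j} = (1/(2nk))(k/ρ)ⁿ aⱼ` and `B_{n+1,n+1} = (k/ρ)ⁿ` has `det B = 1`, and every
nonzero `y ∈ ℤ^{n+1}` with `‖By‖∞ ≤ ρ` satisfies `y_{n+1} = 0`, `(y₁,…,yₙ) ≠ 0`,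
`|yᵢ| ≤ k`, and `|∑ yᵢ aᵢ| ≤ 2nkρ(ρ/k)ⁿ`. -/
theorem svp_lattice_decoding (n : ℕ) (hn : 1 ≤ n) (a : Fin n → ℝ)
    (ha : ∀ i, a i ∈ Set.Icc (0:ℝ) 1) (k : ℕ) (hk : 1 ≤ k)
    (ρ : ℝ) (hρ : 0 < ρ) (hsmall : ρ * (ρ / (k : ℝ)) ^ n < 1 / 2)
    (B : Matrix (Fin (n + 1)) (Fin (n + 1)) ℝ)
    (hBdiag : ∀ i : Fin n, B i.castSucc i.castSucc = ρ / (k : ℝ))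
    (hBoff : ∀ i j : Fin n, i ≠ j → B i.castSucc j.castSucc = 0)
    (hBlastcol : ∀ i : Fin n, B i.castSucc (Fin.last n) = 0)
    (hBlastrow : ∀ j : Fin n,
      B (Fin.last n) j.castSucc = 1 / (2 * (n : ℝ) * (k : ℝ)) * ((k : ℝ) / ρ) ^ n * a j)
    (hBcorner : B (Fin.last n) (Fin.last n) = ((k : ℝ) / ρ) ^ n) :
    B.det = 1 ∧
    ∀ y : Fin (n + 1) → ℤ, y ≠ 0 → (∀ i, |∑ j, B i j * (y j : ℝ)| ≤ ρ) →
      y (Fin.last n) = 0 ∧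
      (∃ i : Fin n, y i.castSucc ≠ 0) ∧
      (∀ i : Fin n, |y i.castSucc| ≤ (k : ℤ)) ∧
      |∑ i : Fin n, (y i.castSucc : ℝ) * a i| ≤
        2 * (n : ℝ) * (k : ℝ) * ρ * (ρ / (k : ℝ)) ^ n := by
  have hk0 : (0:ℝ) < (k:ℝ) := by exact_mod_cast hk
  have hn0 : (0:ℝ) < (n:ℝ) := by exact_mod_cast hn
  have hkne : (k:ℝ) ≠ 0 := ne_of_gt hk0
  have hρne : ρ ≠ 0 := ne_of_gt hρ
  have hcpos : (0:ℝ) < ((k:ℝ)/ρ)^n := by positivity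
  have hmulone : (ρ/(k:ℝ))^n * ((k:ℝ)/ρ)^n = 1 := by
    rw [← mul_pow]
    field_simp
    exact one_pow n
  -- determinant
  have hdet : B.det = 1 := by
    have htri : B.BlockTriangular OrderDual.toDual := by
      intro i j hij
      have hij' : i < j := hij
      rcases Fin.eq_castSucc_or_eq_last j with ⟨j', rfl⟩ | rfl
      · rcases Fin.eq_castSucc_or_eq_last i with ⟨i', rfl⟩ | rfl
        · refine hBoff i' j' ?_
          rintro rfl; exact lt_irrefl _ hij'
        · exact absurd hij' (by simp [Fin.lt_iff_val_lt_val])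
      · rcases Fin.eq_castSucc_or_eq_last i with ⟨i', rfl⟩ | rfl
        · exact hBlastcol i'
        · exact absurd hij' (lt_irrefl _)
    rw [Matrix.det_of_lowerTriangular B htri, Fin.prod_univ_castSucc]
    simp only [hBdiag, hBcorner, Finset.prod_const, Finset.card_univ,
      Fintype.card_fin]
    exact hmulone
  refine ⟨hdet, ?_⟩
  intro y hy hbound
  -- row i bound
  have hyk : ∀ i : Fin n, |(y i.castSucc : ℝ)| ≤ (k:ℝ) := by
    intro i
    have hb := hbound i.castSucc
    rw [Fin.sum_univ_castSucc, hBlastcol i, zero_mul, add_zero] at hb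
    have hs : ∑ j : Fin n, B i.castSucc j.castSucc * (y j.castSucc : ℝ)
        = (ρ/(k:ℝ)) * (y i.castSucc : ℝ) := by
      rw [Finset.sum_eq_single i]
      · rw [hBdiag]
      · intro j _ hji
        rw [hBoff i j (Ne.symm hji), zero_mul]
      · intro h; exact absurd (Finset.mem_univ i) h
    rw [hs, abs_mul, abs_of_pos (by positivity : (0:ℝ) < ρ/(k:ℝ))] at hb
    rw [div_mul_eq_mul_div, div_le_iff₀ hk0] at hb
    have := le_of_mul_le_mul_left (by linarith [hb] : ρ * |(y i.castSucc : ℝ)| ≤ ρ * (k:ℝ)) hρ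
    exact this
  set S : ℝ := ∑ i : Fin n, (y i.castSucc : ℝ) * a i with hSdef
  have hS : |S| ≤ (n:ℝ) * (k:ℝ) := by
    calc |S| ≤ ∑ i : Fin n, |(y i.castSucc : ℝ) * a i| :=
          Finset.abs_sum_le_sum_abs _ _
      _ ≤ ∑ _i : Fin n, (k:ℝ) := by
          refine Finset.sum_le_sum fun i _ => ?_
          rw [abs_mul]
          have h2 : |a i| ≤ 1 := by
            rcases ha i with ⟨h0, h1'⟩; rw [abs_of_nonneg h0]; exact h1'
          calc |(y i.castSucc : ℝ)| * |a i| ≤ (k:ℝ) * 1 :=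
                mul_le_mul (hyk i) h2 (abs_nonneg _) (le_of_lt hk0)
            _ = (k:ℝ) := mul_one _
      _ = (n:ℝ) * (k:ℝ) := by
          simp [Finset.sum_const, Finset.card_univ]
  -- last row
  have hlast := hbound (Fin.last n)
  rw [Fin.sum_univ_castSucc] at hlast
  have hlasteq : (∑ j : Fin n, B (Fin.last n) j.castSucc * (y j.castSucc : ℝ))
      = 1/(2*(n:ℝ)*(k:ℝ)) * ((k:ℝ)/ρ)^n * S := by
    rw [hSdef, Finset.mul_sum]
    refine Finset.sum_congr rfl fun j _ => ?_
    rw [hBlastrow j]; ring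
  rw [hlasteq, hBcorner] at hlast
  set c : ℝ := ((k:ℝ)/ρ)^n with hcdef
  have hu : |1/(2*(n:ℝ)*(k:ℝ)) * c * S| ≤ c / 2 := by
    rw [abs_mul, abs_mul]
    have h1 : |1/(2*(n:ℝ)*(k:ℝ))| = 1/(2*(n:ℝ)*(k:ℝ)) := abs_of_pos (by positivity)
    have h2 : |c| = c := abs_of_pos hcpos
    rw [h1, h2]
    have : 1/(2*(n:ℝ)*(k:ℝ)) * c * ((n:ℝ)*(k:ℝ)) = c / 2 := by
      field_simp
    calc 1/(2*(n:ℝ)*(k:ℝ)) * c * |S| ≤ 1/(2*(n:ℝ)*(k:ℝ)) * c * ((n:ℝ)*(k:ℝ)) := by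
          exact mul_le_mul_of_nonneg_left hS (by positivity)
      _ = c / 2 := this
  have hρc : ρ < c / 2 := by
    have h1 : ρ * ((ρ/(k:ℝ))^n * c) < (1/2) * c := by
      rw [← mul_assoc]
      exact mul_lt_mul_of_pos_right hsmall hcpos
    rw [hmulone, mul_one] at h1
    linarith
  have ht : y (Fin.last n) = 0 := by
    by_contra h
    have h1 : (1:ℝ) ≤ |(y (Fin.last n) : ℝ)| := by
      have := Int.one_le_abs (by simpa using h)
      calc (1:ℝ) = ((1:ℤ):ℝ) := by norm_num
        _ ≤ ((|y (Fin.last n)|:ℤ):ℝ) := by exact_mod_cast this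
        _ = |(y (Fin.last n) : ℝ)| := by push_cast; ring
    set u : ℝ := 1/(2*(n:ℝ)*(k:ℝ)) * c * S
    have key : |c * (y (Fin.last n) : ℝ)| ≤ |u + c * (y (Fin.last n) : ℝ)| + |u| := by
      have := abs_add_le (u + c * (y (Fin.last n) : ℝ)) (-u)
      simpa [add_comm, abs_neg] using this
    have h2 : c ≤ |c * (y (Fin.last n) : ℝ)| := by
      rw [abs_mul, abs_of_pos hcpos]
      calc c = c * 1 := (mul_one c).symm
        _ ≤ c * |(y (Fin.last n) : ℝ)| := mul_le_mul_of_nonneg_left h1 (le_of_lt hcpos)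
    linarith [hlast, hu, key, h2]
  have hex : ∃ i : Fin n, y i.castSucc ≠ 0 := by
    by_contra h
    push_neg at h
    apply hy
    funext j
    rcases Fin.eq_castSucc_or_eq_last j with ⟨j', rfl⟩ | rfl
    · exact h j'
    · exact ht
  have hyki : ∀ i : Fin n, |y i.castSucc| ≤ (k:ℤ) := by
    intro i
    have := hyk i
    have : ((|y i.castSucc|:ℤ):ℝ) ≤ ((k:ℤ):ℝ) := by push_cast; rw [← Int.cast_abs] at this ⊢; push_cast at this ⊢; linarith
    exact_mod_cast this
  refine ⟨ht, hex, hyki, ?_⟩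
  rw [ht] at hlast
  simp only [Int.cast_zero, mul_zero, add_zero] at hlast
  rw [abs_mul, abs_mul, abs_of_pos (by positivity : (0:ℝ) < 1/(2*(n:ℝ)*(k:ℝ))),
    abs_of_pos hcpos] at hlast
  -- |S| ≤ 2nkρ(ρ/k)^n
  have hgoal : 2 * (n:ℝ) * (k:ℝ) * ρ * (ρ/(k:ℝ))^n
      = ρ * (2*(n:ℝ)*(k:ℝ)) / c := by
    rw [eq_div_iff (ne_of_gt hcpos), hcdef]
    rw [mul_assoc, mul_assoc, mul_assoc]
    rw [show (ρ/(k:ℝ))^n * ((k:ℝ)/ρ)^n = 1 from hmulone]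
    ring
  rw [hgoal, le_div_iff₀ hcpos]
  have h2 : 1/(2*(n:ℝ)*(k:ℝ)) * c * |S| * (2*(n:ℝ)*(k:ℝ)) = |S| * c := by
    field_simp
  calc |S| * c = 1/(2*(n:ℝ)*(k:ℝ)) * c * |S| * (2*(n:ℝ)*(k:ℝ)) := h2.symm
    _ ≤ ρ * (2*(n:ℝ)*(k:ℝ)) :=
        mul_le_mul_of_nonneg_right hlast (by positivity)
end

section
/- Let n ≥ 1 and let ρ₀ > 0 satisfy ρ₀ ≤ 2^{2n²}. Suppose that for every c ∈ [0,2]^{4n²} there exists z ∈ {-1,0,1}^{4n²} \ {0} with |⟨c,z⟩| ≤ ρ₀·2^{−4n²}. Then for all vectors a_1, …, a_n ∈ [0,1]^n and all reals 0 < λ_1 ≤ λ_2 ≤ ⋯ ≤ λ_n ≤ 2^n with Π_{i=1}^n λ_i ≥ 1, there exists x ∈ ℤ^n \ {0} such that |⟨x, a_i⟩| ≤ 32·n^4·λ_i·ρ₀^{1/n} for all i = 1, …, n. -/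
open Finset

open Finset

private lemma bin_zero (m : ℕ) : ∀ (f : ℕ → ℤ), (∀ b, |f b| ≤ 1) →
    (∑ b ∈ Finset.range m, 2 ^ b * f b = 0) → ∀ b < m, f b = 0 := by
  induction m with
  | zero => intro f _ _ b hb; omega
  | succ m ih =>
    intro f hf h
    rw [Finset.sum_range_succ'] at h
    have h2 : ∑ b ∈ Finset.range m, 2 ^ (b + 1) * f (b + 1)
        = 2 * ∑ b ∈ Finset.range m, 2 ^ b * f (b + 1) := by
      rw [Finset.mul_sum]; exact Finset.sum_congr rfl fun b _ => by ring
    rw [h2] at h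
    have hf0 : f 0 = 0 := by
      have hd : (2:ℤ) ∣ f 0 := ⟨-∑ b ∈ Finset.range m, 2 ^ b * f (b + 1), by linarith⟩
      have h1 := abs_le.mp (hf 0)
      obtain ⟨hl, hr⟩ := h1
      omega
    have hs : ∑ b ∈ Finset.range m, 2 ^ b * f (b + 1) = 0 := by
      rw [hf0] at h; simp at h; linarith
    intro b hb
    match b with
    | 0 => exact hf0
    | (b+1) => exact ih (fun b => f (b+1)) (fun b => hf (b+1)) hs b (by omega)

private lemma geom_tail (G : ℕ → ℝ) (h0 : ∀ k, 0 ≤ G k)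
    (hhalf : ∀ k, 2 * G (k + 1) ≤ G k) :
    ∀ m a, ∑ k ∈ Finset.Ico a (a + m), G k ≤ 2 * G a := by
  intro m
  induction m with
  | zero => intro a; simp; linarith [h0 a]
  | succ m ih =>
    intro a
    rw [Finset.sum_eq_sum_Ico_succ_bot (by omega : a < a + (m+1))]
    have h1 := ih (a + 1)
    rw [show a + 1 + m = a + (m+1) by omega] at h1
    have h2 := hhalf a
    linarith

private lemma floor_facts (Δ u : ℝ) (hΔ : 0 < Δ) (hu : 0 ≤ u) :
    0 ≤ Δ * ⌊u / Δ⌋ ∧ Δ * ⌊u / Δ⌋ ≤ u ∧ u - Δ * ⌊u / Δ⌋ ≤ Δ := by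
  have h1 : (0:ℝ) ≤ ⌊u / Δ⌋ := by
    have : (0:ℤ) ≤ ⌊u / Δ⌋ := Int.floor_nonneg.mpr (by positivity)
    exact_mod_cast this
  have h2 : (⌊u / Δ⌋ : ℝ) ≤ u / Δ := Int.floor_le _
  have h3 : u / Δ < ⌊u / Δ⌋ + 1 := Int.lt_floor_add_one _
  have h4 : Δ * (u / Δ) = u := by field_simp
  constructor
  · positivity
  constructor
  · nlinarith
  · nlinarith

private lemma forcing (n : ℕ) (G Δ t : ℕ → ℝ) (δ U : ℝ)
    (hGpos : ∀ k, 0 < G k)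
    (hU : ∀ k, k < n → |t k| ≤ U)
    (hgrid : ∀ k, k < n → ∃ M : ℤ, t k = Δ k * M)
    (hΔpos : ∀ k, k < n → 0 < Δ k)
    (hhalf : ∀ k, 2 * G (k + 1) ≤ G k)
    (hstep : ∀ k, k < n → 4 * U * G (k + 1) ≤ G k * Δ k)
    (hδ : ∀ k, k < n → 4 * δ ≤ G k * Δ k)
    (hS : |∑ m ∈ Finset.range n, G m * t m| ≤ δ) :
    ∀ k, k < n → t k = 0 := by
  intro k
  induction k using Nat.strong_induction_on with
  | _ k ih =>
    intro hk
    have hGn : ∀ m, 0 ≤ G m := fun m => (hGpos m).le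
    have hUnn : 0 ≤ U := le_trans (abs_nonneg _) (hU k hk)
    have htail : ∑ m ∈ Finset.Ico (k+1) n, G m ≤ 2 * G (k+1) := by
      have h := geom_tail G hGn hhalf (n - (k+1)) (k+1)
      rwa [show k + 1 + (n - (k+1)) = n by omega] at h
    have hsplit : ∑ m ∈ Finset.range n, G m * t m
        = (∑ m ∈ Finset.Ico 0 k, G m * t m) + G k * t k
          + ∑ m ∈ Finset.Ico (k+1) n, G m * t m := by
      rw [Finset.range_eq_Ico,
        ← Finset.sum_Ico_consecutive _ (Nat.zero_le (k+1)) (by omega : k+1 ≤ n),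
        Finset.sum_Ico_succ_top (Nat.zero_le k)]
    have hIio : ∑ m ∈ Finset.Ico 0 k, G m * t m = 0 :=
      Finset.sum_eq_zero fun m hm => by
        rw [ih m (Finset.mem_Ico.mp hm).2 (by have := (Finset.mem_Ico.mp hm).2; omega),
          mul_zero]
    have htail2 : ∑ m ∈ Finset.Ico (k+1) n, G m * t m ≤ U * (2 * G (k+1)) ∧
        -(U * (2 * G (k+1))) ≤ ∑ m ∈ Finset.Ico (k+1) n, G m * t m := by
      constructor
      · calc ∑ m ∈ Finset.Ico (k+1) n, G m * t m
            ≤ ∑ m ∈ Finset.Ico (k+1) n, G m * U := by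
              apply Finset.sum_le_sum
              intro m hm
              have hmn : m < n := (Finset.mem_Ico.mp hm).2
              have := hU m hmn
              have := abs_le.mp this
              nlinarith [hGn m]
          _ = (∑ m ∈ Finset.Ico (k+1) n, G m) * U := by rw [Finset.sum_mul]
          _ ≤ (2 * G (k+1)) * U := by nlinarith [htail, Finset.sum_nonneg (fun m (_ : m ∈ Finset.Ico (k+1) n) => hGn m)]
          _ = U * (2 * G (k+1)) := by ring
      · calc -(U * (2 * G (k+1))) = -((2 * G (k+1)) * U) := by ring
          _ ≤ -((∑ m ∈ Finset.Ico (k+1) n, G m) * U) := by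
              nlinarith [htail, Finset.sum_nonneg (fun m (_ : m ∈ Finset.Ico (k+1) n) => hGn m)]
          _ = ∑ m ∈ Finset.Ico (k+1) n, -(G m * U) := by
              rw [Finset.sum_neg_distrib, Finset.sum_mul]
          _ ≤ ∑ m ∈ Finset.Ico (k+1) n, G m * t m := by
              apply Finset.sum_le_sum
              intro m hm
              have hmn : m < n := (Finset.mem_Ico.mp hm).2
              have := abs_le.mp (hU m hmn)
              nlinarith [hGn m]
    have hSab := abs_le.mp hS
    have hmain : G k * |t k| < G k * Δ k := by
      have hGt : |G k * t k| ≤ δ + U * (2 * G (k+1)) := by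
        rw [hsplit, hIio] at hSab
        apply abs_le.mpr
        refine ⟨by linarith [htail2.1, hSab.1], by linarith [htail2.2, hSab.2]⟩
      have h4δ := hδ k hk
      have h4s := hstep k hk
      have hGΔ : 0 < G k * Δ k := mul_pos (hGpos k) (hΔpos k hk)
      calc G k * |t k| = |G k * t k| := by
            rw [abs_mul, abs_of_pos (hGpos k)]
        _ ≤ δ + U * (2 * G (k+1)) := hGt
        _ < G k * Δ k := by linarith
    have htk : |t k| < Δ k := lt_of_mul_lt_mul_left hmain (hGn k)
    obtain ⟨M, hM⟩ := hgrid k hk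
    have hMabs : |(M:ℝ)| < 1 := by
      rw [hM, abs_mul, abs_of_pos (hΔpos k hk)] at htk
      have := hΔpos k hk
      nlinarith [abs_nonneg (M:ℝ)]
    have : M = 0 := by
      have h1 : |M| < 1 := by exact_mod_cast hMabs
      obtain ⟨h2, h3⟩ := abs_lt.mp h1
      omega
    rw [hM, this]; simp

set_option maxHeartbeats 1000000

/-- **Generalized number balancing from a number balancing oracle (Theorem 3.1), existence form.**
Let `n ≥ 1` and `0 < ρ₀ ≤ 2^{2n²}`. If for every `c ∈ [0,2]^{4n²}` there is a nonzero sign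
vector `z` with `|⟨c,z⟩| ≤ ρ₀ 2^{-4n²}`, then for all `a₁, …, aₙ ∈ [0,1]ⁿ` and
`0 < λ₁ ≤ ⋯ ≤ λₙ ≤ 2ⁿ` with `∏ λᵢ ≥ 1`, there is a nonzero `x ∈ ℤⁿ` with
`|⟨x,aᵢ⟩| ≤ 32 n⁴ λᵢ ρ₀^{1/n}` for all `i`. -/
theorem generalized_balancing (n : ℕ) (hn : 1 ≤ n)
    (ρ₀ : ℝ) (hρ₀pos : 0 < ρ₀) (hρ₀ : ρ₀ ≤ (2 : ℝ) ^ (2 * n ^ 2))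
    (hbal : ∀ c : Fin (4 * n ^ 2) → ℝ, (∀ i, c i ∈ Set.Icc (0:ℝ) 2) →
      ∃ z : Fin (4 * n ^ 2) → ℤ, (∀ i, |z i| ≤ 1) ∧ z ≠ 0 ∧
        |∑ i, c i * (z i : ℝ)| ≤ ρ₀ / (2 : ℝ) ^ (4 * n ^ 2)) :
    ∀ a : Fin n → (Fin n → ℝ), (∀ i j, a i j ∈ Set.Icc (0:ℝ) 1) →
    ∀ lam : Fin n → ℝ, (∀ i, 0 < lam i) → Monotone lam → (∀ i, lam i ≤ (2 : ℝ) ^ n) →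
      1 ≤ ∏ i, lam i →
      ∃ x : Fin n → ℤ, x ≠ 0 ∧
        ∀ i, |∑ j, (x j : ℝ) * a i j| ≤ 32 * (n : ℝ) ^ 4 * lam i * ρ₀ ^ ((n : ℝ)⁻¹) := by
  
  intro a ha lam hlam0 hmono hlamle hlamprod
  have hnR : (1:ℝ) ≤ (n:ℝ) := by exact_mod_cast hn
  have hnne : (n:ℝ) ≠ 0 := by positivity
  obtain ⟨P, hPdef⟩ : ∃ P : ℝ, P = 2 ^ (4*n) := ⟨_, rfl⟩
  have hPpos : (0:ℝ) < P := by rw [hPdef]; positivity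
  obtain ⟨ρ, hρdef⟩ : ∃ ρ : ℝ, ρ = ρ₀ ^ ((n:ℝ)⁻¹) := ⟨_, rfl⟩
  have hρpos : 0 < ρ := by rw [hρdef]; exact Real.rpow_pos_of_pos hρ₀pos _
  have hρn : ρ ^ n = ρ₀ := by
    rw [hρdef, ← Real.rpow_natCast (ρ₀ ^ ((n:ℝ)⁻¹)) n, ← Real.rpow_mul hρ₀pos.le,
      inv_mul_cancel₀ hnne, Real.rpow_one]
  have hρle : ρ ≤ 2 ^ (2*n) := by
    have h1 : ρ₀ ≤ ((2:ℝ) ^ (2*n)) ^ n := by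
      rw [← pow_mul]
      calc ρ₀ ≤ (2:ℝ) ^ (2*n^2) := hρ₀
        _ = (2:ℝ) ^ (2*n*n) := by rw [show 2*n^2 = 2*n*n from by ring]
    have h2 : ρ ≤ (((2:ℝ)^(2*n))^n) ^ ((n:ℝ)⁻¹) := by
      rw [hρdef]; exact Real.rpow_le_rpow hρ₀pos.le h1 (by positivity)
    rwa [← Real.rpow_natCast ((2:ℝ)^(2*n)) n, ← Real.rpow_mul (by positivity),
      mul_inv_cancel₀ hnne, Real.rpow_one] at h2
  -- the ℕ-indexed data
  obtain ⟨L, hLdef⟩ : ∃ L : ℕ → ℝ, L = fun k => if h : k < n then lam ⟨k, h⟩ else 1 := ⟨_, rfl⟩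
  have hLval : ∀ i : Fin n, L i.val = lam i := by
    intro i; simp only [hLdef]; rw [dif_pos i.isLt]
  have hLpos : ∀ k, 0 < L k := by
    intro k; simp only [hLdef]; split
    · exact hlam0 _
    · norm_num
  have hLle : ∀ k, L k ≤ 2^n := by
    intro k; simp only [hLdef]; split
    · exact hlamle _
    · have := pow_le_pow_left₀ (by norm_num : (0:ℝ) ≤ 1) (by norm_num : (1:ℝ) ≤ 2) n
      simpa using this
  have hprodL : (1:ℝ) ≤ ∏ m ∈ Finset.range n, L m := by
    have he : ∏ m ∈ Finset.range n, L m = ∏ i : Fin n, lam i := by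
      rw [← Fin.prod_univ_eq_prod_range L n]
      exact Finset.prod_congr rfl fun i _ => hLval i
    rw [he]; exact hlamprod
  have hLρP : ∀ k, L k * ρ / P ≤ 1/2 := by
    intro k
    rw [div_le_iff₀ hPpos]
    have h1 : L k * ρ ≤ 2^n * 2^(2*n) :=
      mul_le_mul (hLle k) hρle hρpos.le (by positivity)
    have e2 : (2:ℝ)^n * 2^(2*n) = 2^(3*n) := by rw [← pow_add]; congr 1; ring
    have e1 : P = 2^(3*n) * 2^n := by rw [hPdef, ← pow_add]; congr 1; ring
    have h2n : (2:ℝ) ≤ 2^n := by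
      calc (2:ℝ) = 2^1 := (pow_one 2).symm
        _ ≤ 2^n := pow_le_pow_right₀ (by norm_num) hn
    have hp3 : (0:ℝ) < 2^(3*n) := by positivity
    rw [e1]
    nlinarith [h1, e2]
  obtain ⟨G, hGdef⟩ : ∃ G : ℕ → ℝ, G = fun k => ∏ m ∈ Finset.range k, (L m * ρ / P) := ⟨_, rfl⟩
  have hGpos : ∀ k, 0 < G k := by
    intro k; simp only [hGdef]
    exact Finset.prod_pos fun m _ => div_pos (mul_pos (hLpos m) hρpos) hPpos
  have hGsucc : ∀ k, G (k+1) = G k * (L k * ρ / P) := by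
    intro k; simp only [hGdef]; rw [Finset.prod_range_succ]
  have hGhalf : ∀ k, 2 * G (k + 1) ≤ G k := by
    intro k; rw [hGsucc]
    nlinarith [hLρP k, (hGpos k).le]
  have hGle : ∀ k, G k ≤ (1/2:ℝ)^k := by
    intro k; simp only [hGdef]
    calc ∏ m ∈ Finset.range k, (L m * ρ / P) ≤ ∏ m ∈ Finset.range k, (1/2:ℝ) :=
        Finset.prod_le_prod (fun m _ => (div_pos (mul_pos (hLpos m) hρpos) hPpos).le)
          (fun m _ => hLρP m)
      _ = (1/2:ℝ)^k := by rw [Finset.prod_const, Finset.card_range]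
  obtain ⟨Δ, hΔdef⟩ : ∃ Δ : ℕ → ℝ, Δ = fun k => L k * ρ * (8*n) / P := ⟨_, rfl⟩
  have hΔpos : ∀ k, 0 < Δ k := by
    intro k; simp only [hΔdef]
    have h8 : (0:ℝ) < 8*(n:ℝ) := by linarith
    exact div_pos (mul_pos (mul_pos (hLpos k) hρpos) h8) hPpos
  -- the index equivalence
  obtain ⟨e, hedef⟩ : ∃ e : Fin n × Fin (4*n) ≃ Fin (4*n^2),
      e = finProdFinEquiv.trans (finCongr (by ring)) := ⟨_, rfl⟩
  -- the bit weights
  obtain ⟨w, hwdef⟩ : ∃ w : Fin (4*n) → ℝ, w = fun b : Fin (4*n) => 2 ^ ((b:ℕ)+1) / P := ⟨_, rfl⟩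
  have hwpos : ∀ b, 0 < w b := by
    intro b; simp only [hwdef]
    exact div_pos (by positivity) hPpos
  have hwle1 : ∀ b, w b ≤ 1 := by
    intro b; simp only [hwdef]
    rw [div_le_one hPpos, hPdef]
    exact pow_le_pow_right₀ (by norm_num) (by have := b.isLt; omega)
  have hwsum : ∑ b : Fin (4*n), w b ≤ 2 := by
    have h1 : ∑ b : Fin (4*n), w b = (∑ b : Fin (4*n), (2:ℝ)^((b:ℕ)+1)) / P := by
      simp only [hwdef]; rw [← Finset.sum_div]
    have h2 : ∑ b : Fin (4*n), (2:ℝ)^((b:ℕ)+1) = ∑ m ∈ Finset.range (4*n), (2:ℝ)^(m+1) :=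
      Fin.sum_univ_eq_sum_range (fun m => (2:ℝ)^(m+1)) (4*n)
    have h3 : ∑ m ∈ Finset.range (4*n), (2:ℝ)^(m+1) = 2 * (2^(4*n) - 1) := by
      calc ∑ m ∈ Finset.range (4*n), (2:ℝ)^(m+1)
          = ∑ m ∈ Finset.range (4*n), 2 * (2:ℝ)^m := by
            exact Finset.sum_congr rfl fun m _ => by ring
        _ = 2 * ∑ m ∈ Finset.range (4*n), (2:ℝ)^m := by rw [Finset.mul_sum]
        _ = 2 * (2^(4*n) - 1) := by
            rw [geom_sum_eq (by norm_num : (2:ℝ) ≠ 1)]; norm_num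
    rw [h1, h2, h3, div_le_iff₀ hPpos, hPdef]
    nlinarith [pow_pos (show (0:ℝ) < 2 by norm_num) (4*n)]
  -- discretized entries
  have haij : ∀ i j, 0 ≤ a i j ∧ a i j ≤ 1 := fun i j => ⟨(ha i j).1, (ha i j).2⟩
  obtain ⟨At, hAtdef⟩ : ∃ At : Fin n → Fin n → Fin (4*n) → ℝ,
      At = fun i j b => Δ i.val * ⌊w b * a i j / Δ i.val⌋ := ⟨_, rfl⟩
  have hAtfacts : ∀ i j b, 0 ≤ At i j b ∧ At i j b ≤ w b * a i j ∧
      w b * a i j - At i j b ≤ Δ i.val := by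
    intro i j b
    simp only [hAtdef]
    exact floor_facts _ _ (hΔpos i.val) (mul_nonneg (hwpos b).le (haij i j).1)
  have hAtle1 : ∀ i j b, At i j b ≤ 1 := by
    intro i j b
    calc At i j b ≤ w b * a i j := (hAtfacts i j b).2.1
      _ ≤ 1 * 1 := mul_le_mul (hwle1 b) (haij i j).2 (haij i j).1 zero_le_one
      _ = 1 := one_mul 1
  have hAtlew : ∀ i j b, At i j b ≤ w b := by
    intro i j b
    calc At i j b ≤ w b * a i j := (hAtfacts i j b).2.1
      _ ≤ w b := mul_le_of_le_one_right (hwpos b).le (haij i j).2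
  -- the oracle input
  obtain ⟨c, hcdef⟩ : ∃ c : Fin (4*n^2) → ℝ,
      c = fun k => ∑ i, G i.val * At i (e.symm k).1 (e.symm k).2 := ⟨_, rfl⟩
  have hcIcc : ∀ k, c k ∈ Set.Icc (0:ℝ) 2 := by
    intro k
    simp only [hcdef]
    refine Set.mem_Icc.mpr ⟨?_, ?_⟩
    · exact Finset.sum_nonneg fun i _ => mul_nonneg (hGpos i.val).le (hAtfacts i _ _).1
    · have hstep1 : ∑ i, G i.val * At i (e.symm k).1 (e.symm k).2 ≤ ∑ i : Fin n, G i.val := by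
        refine Finset.sum_le_sum fun i _ => ?_
        have := hAtle1 i (e.symm k).1 (e.symm k).2
        nlinarith [(hGpos i.val).le, (hAtfacts i (e.symm k).1 (e.symm k).2).1]
      calc ∑ i, G i.val * At i (e.symm k).1 (e.symm k).2 ≤ ∑ i : Fin n, G i.val := hstep1
        _ = ∑ m ∈ Finset.range n, G m := Fin.sum_univ_eq_sum_range G n
        _ ≤ ∑ m ∈ Finset.range n, (1/2:ℝ)^m := Finset.sum_le_sum fun m _ => hGle m
        _ ≤ 2 := sum_geometric_two_le n
  obtain ⟨z, hz1, hz2, hz3⟩ := hbal c hcIcc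
  have hz1' : ∀ k, |(z k : ℝ)| ≤ 1 := by
    intro k; rw [← Int.cast_abs]; exact_mod_cast hz1 k
  obtain ⟨t, htdef⟩ : ∃ t : Fin n → ℝ, t = fun i => ∑ p : Fin n × Fin (4*n), At i p.1 p.2 * (z (e p) : ℝ) := ⟨_, rfl⟩
  obtain ⟨tn, htndef⟩ : ∃ tn : ℕ → ℝ, tn = fun m => if h : m < n then t ⟨m, h⟩ else 0 := ⟨_, rfl⟩
  have htnval : ∀ i : Fin n, tn i.val = t i := by
    intro i; simp only [htndef]; rw [dif_pos i.isLt]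
  have hsum : ∑ k, c k * (z k : ℝ) = ∑ m ∈ Finset.range n, G m * tn m := by
    have e4 : ∀ p : Fin n × Fin (4*n), c (e p) = ∑ i, G i.val * At i p.1 p.2 := by
      intro p; simp only [hcdef, Equiv.symm_apply_apply]
    calc ∑ k, c k * (z k : ℝ)
        = ∑ p : Fin n × Fin (4*n), c (e p) * (z (e p) : ℝ) :=
          (Equiv.sum_comp e (fun k => c k * (z k : ℝ))).symm
      _ = ∑ p : Fin n × Fin (4*n), ∑ i : Fin n,
            G i.val * At i p.1 p.2 * (z (e p) : ℝ) := by
          refine Finset.sum_congr rfl fun p _ => ?_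
          rw [e4 p, Finset.sum_mul]
      _ = ∑ i : Fin n, ∑ p : Fin n × Fin (4*n),
            G i.val * (At i p.1 p.2 * (z (e p) : ℝ)) := by
          rw [Finset.sum_comm]
          exact Finset.sum_congr rfl fun i _ => Finset.sum_congr rfl fun p _ => by ring
      _ = ∑ i : Fin n, G i.val * t i := by
          refine Finset.sum_congr rfl fun i _ => ?_
          rw [htdef, ← Finset.mul_sum]
      _ = ∑ i : Fin n, G i.val * tn i.val := by
          exact Finset.sum_congr rfl fun i _ => by rw [htnval i]
      _ = ∑ m ∈ Finset.range n, G m * tn m :=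
          Fin.sum_univ_eq_sum_range (fun m => G m * tn m) n
  have htabs : ∀ i : Fin n, |t i| ≤ 2*(n:ℝ) := by
    intro i
    calc |t i| ≤ ∑ p : Fin n × Fin (4*n), |At i p.1 p.2 * (z (e p) : ℝ)| := by
          rw [htdef]; exact Finset.abs_sum_le_sum_abs _ _
      _ ≤ ∑ p : Fin n × Fin (4*n), w p.2 := by
          refine Finset.sum_le_sum fun p _ => ?_
          rw [abs_mul, abs_of_nonneg (hAtfacts i p.1 p.2).1]
          calc At i p.1 p.2 * |(z (e p) : ℝ)| ≤ At i p.1 p.2 * 1 :=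
              mul_le_mul_of_nonneg_left (hz1' _) (hAtfacts i p.1 p.2).1
            _ = At i p.1 p.2 := mul_one _
            _ ≤ w p.2 := hAtlew i p.1 p.2
      _ = ∑ j : Fin n, ∑ b : Fin (4*n), w b := Fintype.sum_prod_type _
      _ ≤ ∑ j : Fin n, (2:ℝ) := Finset.sum_le_sum fun j _ => hwsum
      _ = 2*(n:ℝ) := by simp [Finset.sum_const, Finset.card_univ]; ring
  have hgrid : ∀ m, m < n → ∃ M : ℤ, tn m = Δ m * M := by
    intro m hm
    refine ⟨∑ p : Fin n × Fin (4*n), ⌊w p.2 * a ⟨m, hm⟩ p.1 / Δ m⌋ * z (e p), ?_⟩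
    have h1 : tn m = t ⟨m, hm⟩ := by simp only [htndef]; rw [dif_pos hm]
    rw [h1, htdef]
    simp only [hAtdef]
    push_cast
    rw [Finset.mul_sum]
    exact Finset.sum_congr rfl fun p _ => by ring
  -- the key lower bound on G k * Δ k
  have hGkΔ : ∀ k, G k * Δ k
      = 8*(n:ℝ) * ((∏ m ∈ Finset.range (k+1), L m) * (ρ/P)^(k+1)) := by
    intro k
    simp only [hGdef, hΔdef]
    rw [Finset.prod_range_succ, pow_succ]
    have h1 : ∏ m ∈ Finset.range k, (L m * ρ / P)
        = (∏ m ∈ Finset.range k, L m) * (ρ/P)^k := by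
      calc ∏ m ∈ Finset.range k, (L m * ρ / P)
          = ∏ m ∈ Finset.range k, (L m * (ρ/P)) :=
            Finset.prod_congr rfl fun m _ => by ring
        _ = (∏ m ∈ Finset.range k, L m) * (ρ/P)^k := by
            rw [Finset.prod_mul_distrib, Finset.prod_const, Finset.card_range]
    rw [h1]
    field_simp
  have hρPn : (ρ/P)^n = ρ₀ / 2^(4*n^2) := by
    rw [div_pow, hρn, hPdef, ← pow_mul, show 4*n*n = 4*n^2 from by ring]
  have hδpos : (0:ℝ) < ρ₀ / 2^(4*n^2) := by positivity
  have hKEY : ∀ k, k < n → 4 * (ρ₀ / 2^(4*n^2)) ≤ G k * Δ k := by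
    intro k hk
    have hA : ρ₀ / 2^(4*n^2) ≤ (∏ m ∈ Finset.range (k+1), L m) * (ρ/P)^(k+1) := by
      obtain ⟨d, hddef⟩ : ∃ d : ℕ, d = n - (k+1) := ⟨_, rfl⟩
      have hkd : k + 1 + d = n := by omega
      have hsplitL : (∏ m ∈ Finset.range (k+1), L m) * (∏ m ∈ Finset.Ico (k+1) n, L m)
          = ∏ m ∈ Finset.range n, L m := by
        rw [Finset.range_eq_Ico, Finset.range_eq_Ico]
        exact Finset.prod_Ico_consecutive L (Nat.zero_le _) (by omega)
      have hB : ∏ m ∈ Finset.Ico (k+1) n, L m ≤ ((2:ℝ)^n)^d := by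
        calc ∏ m ∈ Finset.Ico (k+1) n, L m ≤ ∏ m ∈ Finset.Ico (k+1) n, (2:ℝ)^n :=
            Finset.prod_le_prod (fun m _ => (hLpos m).le) (fun m _ => hLle m)
          _ = ((2:ℝ)^n)^d := by rw [Finset.prod_const, Nat.card_Ico, ← hddef]
      have hρP2 : ρ/P ≤ ((2:ℝ)^(2*n))⁻¹ := by
        have h2p : (0:ℝ) < (2:ℝ)^(2*n) := by positivity
        have e1 : (2:ℝ)^(4*n) = 2^(2*n) * 2^(2*n) := by rw [← pow_add]; congr 1; ring
        rw [div_le_iff₀ hPpos, hPdef, e1, ← mul_assoc, inv_mul_cancel₀ (ne_of_gt h2p), one_mul]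
        exact hρle
      have hC : (ρ/P)^d ≤ (((2:ℝ)^(2*n))⁻¹)^d :=
        pow_le_pow_left₀ (by positivity) hρP2 d
      have hBC : (∏ m ∈ Finset.Ico (k+1) n, L m) * (ρ/P)^d ≤ 1 := by
        have hbase : (2:ℝ)^n * ((2:ℝ)^(2*n))⁻¹ ≤ 1 := by
          rw [show 2*n = n + n from by ring, pow_add]
          have h2p : (0:ℝ) < (2:ℝ)^n := by positivity
          rw [mul_inv, ← mul_assoc, mul_inv_cancel₀ (ne_of_gt h2p), one_mul]
          rw [inv_le_one_iff₀]
          right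
          have := pow_le_pow_left₀ (by norm_num : (0:ℝ) ≤ 1) (by norm_num : (1:ℝ) ≤ 2) n
          simpa using this
        calc (∏ m ∈ Finset.Ico (k+1) n, L m) * (ρ/P)^d
            ≤ ((2:ℝ)^n)^d * (((2:ℝ)^(2*n))⁻¹)^d := by
              apply mul_le_mul hB hC (by positivity)
              positivity
          _ = ((2:ℝ)^n * ((2:ℝ)^(2*n))⁻¹)^d := (mul_pow _ _ d).symm
          _ ≤ 1^d := pow_le_pow_left₀ (by positivity) hbase d
          _ = 1 := one_pow d
      have hfull : (∏ m ∈ Finset.range n, L m) * (ρ/P)^n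
          = ((∏ m ∈ Finset.range (k+1), L m) * (ρ/P)^(k+1))
            * ((∏ m ∈ Finset.Ico (k+1) n, L m) * (ρ/P)^d) := by
        rw [← hsplitL, ← hkd, pow_add]
        ring
      have hApos : (0:ℝ) < (∏ m ∈ Finset.range (k+1), L m) * (ρ/P)^(k+1) := by
        apply mul_pos (Finset.prod_pos fun m _ => hLpos m)
        positivity
      have h5 : ρ₀ / 2^(4*n^2) ≤ (∏ m ∈ Finset.range n, L m) * (ρ/P)^n := by
        rw [hρPn] at *
        nlinarith [hprodL, hδpos]
      calc ρ₀ / 2^(4*n^2) ≤ (∏ m ∈ Finset.range n, L m) * (ρ/P)^n := h5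
        _ = ((∏ m ∈ Finset.range (k+1), L m) * (ρ/P)^(k+1))
            * ((∏ m ∈ Finset.Ico (k+1) n, L m) * (ρ/P)^d) := hfull
        _ ≤ ((∏ m ∈ Finset.range (k+1), L m) * (ρ/P)^(k+1)) * 1 :=
            mul_le_mul_of_nonneg_left hBC hApos.le
        _ = (∏ m ∈ Finset.range (k+1), L m) * (ρ/P)^(k+1) := mul_one _
    rw [hGkΔ k]
    have hApos' : 0 ≤ (∏ m ∈ Finset.range (k+1), L m) * (ρ/P)^(k+1) :=
      le_trans hδpos.le hA
    have h88 : (0:ℝ) ≤ (8*(n:ℝ) - 8) * ((∏ m ∈ Finset.range (k+1), L m) * (ρ/P)^(k+1)) :=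
      mul_nonneg (by linarith) hApos'
    nlinarith [hA, hδpos, h88]
  have hstep : ∀ k, k < n → 4 * (2*(n:ℝ)) * G (k+1) ≤ G k * Δ k := by
    intro k hk
    rw [hGsucc k]
    simp only [hΔdef]
    apply le_of_eq
    field_simp
    ring
  have hforce : ∀ k, k < n → tn k = 0 := by
    refine forcing n G Δ tn (ρ₀ / 2^(4*n^2)) (2*(n:ℝ)) hGpos ?_ hgrid
      (fun k _ => hΔpos k) hGhalf hstep hKEY ?_
    · intro k hk
      have h1 : tn k = t ⟨k, hk⟩ := by simp only [htndef]; rw [dif_pos hk]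
      rw [h1]; exact htabs _
    · rw [← hsum]; exact hz3
  have htzero : ∀ i : Fin n, t i = 0 := by
    intro i; rw [← htnval i]; exact hforce i.val i.isLt
  -- construct x
  obtain ⟨x, hxdef⟩ : ∃ x : Fin n → ℤ, x = fun j => ∑ b : Fin (4*n), 2^((b:ℕ)) * z (e (j, b)) := ⟨_, rfl⟩
  have hxne : x ≠ 0 := by
    obtain ⟨k0, hk0⟩ := Function.ne_iff.mp hz2
    intro hx0
    obtain ⟨p, hp⟩ : ∃ p : Fin n × Fin (4*n), p = e.symm k0 := ⟨_, rfl⟩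
    have hzp : z (e p) ≠ 0 := by rw [hp, Equiv.apply_symm_apply]; exact hk0
    have hxj : x p.1 = 0 := by rw [hx0]; rfl
    have hxval : x p.1 = ∑ m ∈ Finset.range (4*n),
        2^m * (if h : m < 4*n then z (e (p.1, ⟨m, h⟩)) else 0) := by
      simp only [hxdef]
      rw [← Fin.sum_univ_eq_sum_range
        (fun m => 2^m * (if h : m < 4*n then z (e (p.1, ⟨m, h⟩)) else 0)) (4*n)]
      refine Finset.sum_congr rfl fun b _ => ?_
      rw [dif_pos b.isLt]
    have hf : ∀ m, |(if h : m < 4*n then z (e (p.1, ⟨m, h⟩)) else 0)| ≤ 1 := by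
      intro m; split
      · exact hz1 _
      · simp
    have h0 := bin_zero (4*n) _ hf (by rw [← hxval, hxj]) p.2.val p.2.isLt
    rw [dif_pos p.2.isLt] at h0
    apply hzp
    simpa using h0
  refine ⟨x, hxne, ?_⟩
  intro i
  have hti : t i = 0 := htzero i
  have hid : (2/P) * (∑ j, (x j : ℝ) * a i j)
      = ∑ p : Fin n × Fin (4*n), (w p.2 * a i p.1) * (z (e p) : ℝ) := by
    rw [Fintype.sum_prod_type, Finset.mul_sum]
    refine Finset.sum_congr rfl fun j _ => ?_
    have hxj : ((x j : ℤ) : ℝ) = ∑ b : Fin (4*n), (2:ℝ)^((b:ℕ)) * (z (e (j, b)) : ℝ) := by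
      simp only [hxdef]; push_cast; rfl
    rw [hxj, Finset.sum_mul, Finset.mul_sum]
    refine Finset.sum_congr rfl fun b _ => ?_
    simp only [hwdef]
    field_simp
    ring
  have hdiff : |(2/P) * (∑ j, (x j : ℝ) * a i j)| ≤ (4*(n:ℝ)^2) * Δ i.val := by
    rw [hid]
    have hsub : ∑ p : Fin n × Fin (4*n), (w p.2 * a i p.1) * (z (e p) : ℝ)
        = (∑ p : Fin n × Fin (4*n), ((w p.2 * a i p.1) - At i p.1 p.2) * (z (e p) : ℝ)) + t i := by
      rw [htdef, ← Finset.sum_add_distrib]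
      exact Finset.sum_congr rfl fun p _ => by ring
    rw [hsub, hti, add_zero]
    calc |∑ p : Fin n × Fin (4*n), ((w p.2 * a i p.1) - At i p.1 p.2) * (z (e p) : ℝ)|
        ≤ ∑ p : Fin n × Fin (4*n), |((w p.2 * a i p.1) - At i p.1 p.2) * (z (e p) : ℝ)| :=
          Finset.abs_sum_le_sum_abs _ _
      _ ≤ ∑ p : Fin n × Fin (4*n), Δ i.val := by
          refine Finset.sum_le_sum fun p _ => ?_
          rw [abs_mul]
          have h1 : 0 ≤ (w p.2 * a i p.1) - At i p.1 p.2 := by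
            have := (hAtfacts i p.1 p.2).2.1; linarith
          rw [abs_of_nonneg h1]
          calc ((w p.2 * a i p.1) - At i p.1 p.2) * |(z (e p) : ℝ)|
              ≤ ((w p.2 * a i p.1) - At i p.1 p.2) * 1 :=
                mul_le_mul_of_nonneg_left (hz1' _) h1
            _ = (w p.2 * a i p.1) - At i p.1 p.2 := mul_one _
            _ ≤ Δ i.val := (hAtfacts i p.1 p.2).2.2
      _ = (4*(n:ℝ)^2) * Δ i.val := by
          rw [Finset.sum_const, Finset.card_univ, Fintype.card_prod, Fintype.card_fin,
            Fintype.card_fin, nsmul_eq_mul]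
          push_cast
          ring
  have habs2 : |∑ j, (x j : ℝ) * a i j| ≤ (P/2) * ((4*(n:ℝ)^2) * Δ i.val) := by
    have h2P : (0:ℝ) < 2/P := by positivity
    rw [abs_mul, abs_of_pos h2P] at hdiff
    have heq : |∑ j, (x j : ℝ) * a i j| = (P/2) * ((2/P) * |∑ j, (x j : ℝ) * a i j|) := by
      have hPne : P ≠ 0 := ne_of_gt hPpos
      field_simp
    rw [heq]
    apply mul_le_mul_of_nonneg_left hdiff (by positivity)
  calc |∑ j, (x j : ℝ) * a i j| ≤ (P/2) * ((4*(n:ℝ)^2) * Δ i.val) := habs2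
    _ = 16 * (n:ℝ)^3 * lam i * ρ := by
        have hPne : P ≠ 0 := ne_of_gt hPpos
        simp only [hΔdef]
        rw [hLval i]
        field_simp
        ring
    _ ≤ 32 * (n:ℝ)^4 * lam i * ρ := by
        have h1 : 16 * (n:ℝ)^3 ≤ 32 * (n:ℝ)^4 := by
          nlinarith [pow_pos (show (0:ℝ) < (n:ℝ) by linarith) 3, hnR]
        have h2 : 0 ≤ lam i * ρ := le_of_lt (mul_pos (hlam0 i) hρpos)
        nlinarith [h1, h2, mul_pos (hlam0 i) hρpos]
    _ = 32 * (n:ℝ)^4 * lam i * ρ₀ ^ ((n : ℝ)⁻¹) := by rw [hρdef]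
end

section
/- Let n ≥ 2, k ≥ 1, and δ > 0. Suppose that for every c ∈ [0,2]^n there exists z ∈ {-1,0,1}^n \ {0} with |⟨c,z⟩| ≤ δ. Then for all vectors a_1, …, a_k ∈ [0,1]^n and all reals δ_1, …, δ_k ∈ (0, 1/2] with Π_{i=1}^k δ_i ≥ δ, there exists x ∈ {-1,0,1}^n \ {0} such that |⟨a_i, x⟩| ≤ 2n²·δ_i for all i = 1, …, k. -/
/-- Geometric-type bound: if all factors are in `(0,1/2]`, then the sum of prefix
products over `range N` is at most `2 - 2 * (full product)`. -/
lemma geo_aux (e : ℕ → ℝ) (h0 : ∀ t, 0 < e t) (h2 : ∀ t, e t ≤ 1/2) :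
    ∀ N, ∑ i ∈ Finset.range N, ∏ l ∈ Finset.range i, e l
      ≤ 2 - 2 * ∏ l ∈ Finset.range N, e l := by
  intro N
  induction N with
  | zero => simp
  | succ N ih =>
    rw [Finset.sum_range_succ, Finset.prod_range_succ]
    have hp : 0 < ∏ l ∈ Finset.range N, e l := Finset.prod_pos (fun l _ => h0 l)
    nlinarith [h2 N, h0 N]

/-- **Balancing several vectors simultaneously (Lemma 3.2), existence form.**
Let `n ≥ 2`, `k ≥ 1`, `δ > 0`. If for every `c ∈ [0,2]ⁿ` there is a nonzero sign vector `z`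
with `|⟨c,z⟩| ≤ δ`, then for all `a₁, …, a_k ∈ [0,1]ⁿ` and `δ₁, …, δ_k ∈ (0,1/2]` with
`∏ δᵢ ≥ δ`, there is a nonzero sign vector `x` with `|⟨aᵢ,x⟩| ≤ 2n²δᵢ` for all `i`. -/
theorem multi_vector_balancing (n k : ℕ) (hn : 2 ≤ n) (hk : 1 ≤ k)
    (δ : ℝ) (hδ : 0 < δ)
    (hbal : ∀ c : Fin n → ℝ, (∀ i, c i ∈ Set.Icc (0:ℝ) 2) →
      ∃ z : Fin n → ℤ, (∀ i, |z i| ≤ 1) ∧ z ≠ 0 ∧ |∑ i, c i * (z i : ℝ)| ≤ δ) :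
    ∀ a : Fin k → (Fin n → ℝ), (∀ i j, a i j ∈ Set.Icc (0:ℝ) 1) →
    ∀ d : Fin k → ℝ, (∀ i, d i ∈ Set.Ioc (0:ℝ) (1/2)) → δ ≤ ∏ i, d i →
      ∃ x : Fin n → ℤ, (∀ j, |x j| ≤ 1) ∧ x ≠ 0 ∧
        ∀ i, |∑ j, a i j * (x j : ℝ)| ≤ 2 * (n : ℝ) ^ 2 * d i := by
  classical
  intro a ha d hd hprod
  have hnR : (2:ℝ) ≤ (n:ℝ) := by exact_mod_cast hn
  have hn0 : (0:ℝ) < (n:ℝ) := by linarith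
  -- rounding scale
  set D : Fin k → ℝ := fun i => 2 * (n:ℝ) * d i with hDdef
  have hD0 : ∀ i, 0 < D i := fun i => by
    have := (hd i).1; simp only [hDdef]; positivity
  -- rounded coefficients
  set b : Fin k → Fin n → ℤ := fun i j => ⌊ a i j / D i ⌋ with hbdef
  set A : Fin k → Fin n → ℝ := fun i j => D i * (b i j : ℝ) with hAdef
  have hA0 : ∀ i j, 0 ≤ A i j := by
    intro i j
    have h1 : (0:ℤ) ≤ b i j := by
      apply Int.floor_nonneg.2
      exact div_nonneg (ha i j).1 (hD0 i).le
    have : (0:ℝ) ≤ (b i j : ℝ) := by exact_mod_cast h1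
    exact mul_nonneg (hD0 i).le this
  have hAle : ∀ i j, A i j ≤ a i j := by
    intro i j
    have h1 : (b i j : ℝ) ≤ a i j / D i := Int.floor_le _
    calc A i j = D i * (b i j : ℝ) := rfl
      _ ≤ D i * (a i j / D i) := by
          exact mul_le_mul_of_nonneg_left h1 (hD0 i).le
      _ = a i j := mul_div_cancel₀ _ (hD0 i).ne'
  have hAgt : ∀ i j, a i j - A i j ≤ D i := by
    intro i j
    have h1 : a i j / D i < (b i j : ℝ) + 1 := Int.lt_floor_add_one _
    have h2 : a i j < D i * ((b i j : ℝ) + 1) := by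
      have := mul_lt_mul_of_pos_left h1 (hD0 i)
      rwa [mul_div_cancel₀ _ (hD0 i).ne'] at this
    have h3 : A i j + D i = D i * ((b i j : ℝ) + 1) := by simp only [hAdef]; ring
    linarith
  have hA1 : ∀ i j, A i j ≤ 1 := fun i j => le_trans (hAle i j) (ha i j).2
  -- natural-number extension of d
  set d' : ℕ → ℝ := fun l => if h : l < k then d ⟨l, h⟩ else 1/2 with hd'def
  have hd'0 : ∀ l, 0 < d' l := by
    intro l; simp only [hd'def]
    split
    · exact (hd _).1
    · norm_num
  have hd'2 : ∀ l, d' l ≤ 1/2 := by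
    intro l; simp only [hd'def]
    split
    · exact (hd _).2
    · norm_num
  have hd'val : ∀ i : Fin k, d' i.val = d i := by
    intro i; simp only [hd'def, i.isLt, dif_pos, Fin.eta]
  -- prefix products
  set P : ℕ → ℝ := fun i => ∏ l ∈ Finset.range i, d' l with hPdef
  have hP0 : ∀ i, 0 < P i := fun i => Finset.prod_pos (fun l _ => hd'0 l)
  have hPsum : ∑ i ∈ Finset.range k, P i ≤ 2 := by
    have := geo_aux d' hd'0 hd'2 k
    have hq : 0 < ∏ l ∈ Finset.range k, d' l := Finset.prod_pos (fun l _ => hd'0 l)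
    simp only [hPdef]
    linarith
  have hPsumFin : ∑ i : Fin k, P i.val ≤ 2 := by
    rw [Fin.sum_univ_eq_sum_range (fun i => P i)]
    exact hPsum
  -- the combined vector
  set c : Fin n → ℝ := fun j => ∑ i : Fin k, P i.val * A i j with hcdef
  have hc : ∀ j, c j ∈ Set.Icc (0:ℝ) 2 := by
    intro j
    constructor
    · apply Finset.sum_nonneg
      intro i _
      exact mul_nonneg (hP0 i.val).le (hA0 i j)
    · calc c j ≤ ∑ i : Fin k, P i.val := by
            apply Finset.sum_le_sum
            intro i _
            nlinarith [hP0 i.val, hA1 i j, hA0 i j]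
        _ ≤ 2 := hPsumFin
  obtain ⟨z, hz1, hz0, hzT⟩ := hbal c hc
  set m : Fin k → ℤ := fun i => ∑ j, b i j * z j with hmdef
  have hS : ∀ i : Fin k, ∑ j, A i j * (z j : ℝ) = D i * (m i : ℝ) := by
    intro i
    simp only [hAdef, hmdef]
    push_cast
    rw [Finset.mul_sum]
    apply Finset.sum_congr rfl
    intro j _
    ring
  have hSabs : ∀ i : Fin k, |D i * (m i : ℝ)| ≤ (n:ℝ) := by
    intro i
    rw [← hS i]
    calc |∑ j, A i j * (z j : ℝ)| ≤ ∑ j, |A i j * (z j : ℝ)| :=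
          Finset.abs_sum_le_sum_abs _ _
      _ ≤ ∑ _j : Fin n, (1:ℝ) := by
          apply Finset.sum_le_sum
          intro j _
          rw [abs_mul, abs_of_nonneg (hA0 i j)]
          have hzj : |(z j : ℝ)| ≤ 1 := by exact_mod_cast hz1 j
          nlinarith [hA0 i j, hA1 i j, abs_nonneg ((z j : ℝ))]
      _ = (n:ℝ) := by simp
  -- rewrite the oracle sum
  have hT : ∑ j, c j * (z j : ℝ) = ∑ i : Fin k, P i.val * (D i * (m i : ℝ)) := by
    calc ∑ j, c j * (z j : ℝ)
        = ∑ j : Fin n, ∑ i : Fin k, P i.val * A i j * (z j : ℝ) := by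
          apply Finset.sum_congr rfl
          intro j _
          simp only [hcdef]
          rw [Finset.sum_mul]
      _ = ∑ i : Fin k, ∑ j : Fin n, P i.val * A i j * (z j : ℝ) := Finset.sum_comm
      _ = ∑ i : Fin k, P i.val * (D i * (m i : ℝ)) := by
          apply Finset.sum_congr rfl
          intro i _
          rw [← hS i, Finset.mul_sum]
          apply Finset.sum_congr rfl
          intro j _
          ring
  -- the ℕ-indexed version of the inner sums
  set S : ℕ → ℝ := fun i => if h : i < k then D ⟨i, h⟩ * ((m ⟨i, h⟩ : ℝ)) else 0
    with hSdef
  have hSval : ∀ i : Fin k, S i.val = D i * (m i : ℝ) := by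
    intro i; simp only [hSdef, i.isLt, dif_pos, Fin.eta]
  have hSabs' : ∀ i : ℕ, |S i| ≤ (n:ℝ) := by
    intro i
    simp only [hSdef]
    split
    · exact hSabs _
    · simp
  have hTnat : ∑ j, c j * (z j : ℝ) = ∑ i ∈ Finset.range k, P i * S i := by
    rw [hT, ← Fin.sum_univ_eq_sum_range (fun i => P i * S i) k]
    apply Finset.sum_congr rfl
    intro i _
    rw [hSval i]
  -- the full nat product equals the Fin product
  have hprodnat : ∏ l ∈ Finset.range k, d' l = ∏ i : Fin k, d i := by
    rw [← Fin.prod_univ_eq_prod_range (fun i => d' i) k]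
    exact Finset.prod_congr rfl (fun i _ => hd'val i)
  -- Key claim: every rounded inner product vanishes
  have hm : ∀ i : Fin k, m i = 0 := by
    by_contra hcon
    push_neg at hcon
    obtain ⟨iw, hiw⟩ := hcon
    have hexists : ∃ i : ℕ, ∃ h : i < k, m ⟨i, h⟩ ≠ 0 :=
      ⟨iw.val, iw.isLt, by simpa using hiw⟩
    set i₀ := Nat.find hexists with hi₀def
    obtain ⟨hi₀k, hi₀m⟩ := Nat.find_spec hexists
    have hmin : ∀ l : ℕ, l < i₀ → S l = 0 := by
      intro l hl
      simp only [hSdef]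
      split
      · next h =>
          have := Nat.find_min hexists hl
          push_neg at this
          rw [this h]
          simp
      · rfl
    -- split the sum
    have hsplit : ∑ i ∈ Finset.range k, P i * S i
        = P i₀ * S i₀ + ∑ i ∈ Finset.Ico (i₀+1) k, P i * S i := by
      have h1 : ∑ i ∈ Finset.range (i₀+1), P i * S i
          + ∑ i ∈ Finset.Ico (i₀+1) k, P i * S i = ∑ i ∈ Finset.range k, P i * S i := by
        rw [Finset.range_eq_Ico]
        rw [Finset.range_eq_Ico]
        exact Finset.sum_Ico_consecutive (fun i => P i * S i) (Nat.zero_le _) hi₀k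
      have h2 : ∑ i ∈ Finset.range (i₀+1), P i * S i = P i₀ * S i₀ := by
        rw [Finset.sum_range_succ]
        have : ∑ i ∈ Finset.range i₀, P i * S i = 0 := by
          apply Finset.sum_eq_zero
          intro l hl
          rw [hmin l (Finset.mem_range.1 hl)]
          ring
        rw [this]; ring
      linarith
    -- tail bound
    set Q : ℝ := ∏ l ∈ Finset.Ico (i₀+1) k, d' l with hQdef
    have hQ0 : 0 < Q := Finset.prod_pos (fun l _ => hd'0 l)
    have htail : |∑ i ∈ Finset.Ico (i₀+1) k, P i * S i|
        ≤ (n:ℝ) * P (i₀+1) * (2 - 2 * Q) := by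
      calc |∑ i ∈ Finset.Ico (i₀+1) k, P i * S i|
          ≤ ∑ i ∈ Finset.Ico (i₀+1) k, |P i * S i| := Finset.abs_sum_le_sum_abs _ _
        _ ≤ ∑ i ∈ Finset.Ico (i₀+1) k, (n:ℝ) * (P (i₀+1) * ∏ l ∈ Finset.Ico (i₀+1) i, d' l) := by
            apply Finset.sum_le_sum
            intro i hi
            obtain ⟨hi1, hi2⟩ := Finset.mem_Ico.1 hi
            have hPsplit : P i = P (i₀+1) * ∏ l ∈ Finset.Ico (i₀+1) i, d' l := by
              simp only [hPdef, Finset.range_eq_Ico]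
              exact (Finset.prod_Ico_consecutive _ (Nat.zero_le _) hi1).symm
            rw [abs_mul, abs_of_nonneg (hP0 i).le, hPsplit]
            have := hSabs' i
            have h1 : 0 < P (i₀+1) * ∏ l ∈ Finset.Ico (i₀+1) i, d' l := by
              apply mul_pos (hP0 _) (Finset.prod_pos (fun l _ => hd'0 l))
            nlinarith [abs_nonneg (S i)]
        _ = (n:ℝ) * P (i₀+1) * ∑ i ∈ Finset.Ico (i₀+1) k, ∏ l ∈ Finset.Ico (i₀+1) i, d' l := by
            rw [Finset.mul_sum]
            apply Finset.sum_congr rfl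
            intro i _
            ring
        _ ≤ (n:ℝ) * P (i₀+1) * (2 - 2 * Q) := by
            have hkey : ∑ i ∈ Finset.Ico (i₀+1) k, ∏ l ∈ Finset.Ico (i₀+1) i, d' l
                ≤ 2 - 2 * Q := by
              rw [Finset.sum_Ico_eq_sum_range]
              have hre : ∀ i ∈ Finset.range (k - (i₀+1)),
                  ∏ l ∈ Finset.Ico (i₀+1) (i₀+1+i), d' l
                  = ∏ l ∈ Finset.range i, d' (i₀+1+l) := by
                intro i _
                rw [Finset.prod_Ico_eq_prod_range]
                simp
              rw [Finset.sum_congr rfl hre]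
              have := geo_aux (fun l => d' (i₀+1+l)) (fun t => hd'0 _) (fun t => hd'2 _)
                (k - (i₀+1))
              have hQeq : ∏ l ∈ Finset.range (k - (i₀+1)), d' (i₀+1+l) = Q := by
                rw [hQdef, Finset.prod_Ico_eq_prod_range]
              rw [hQeq] at this
              exact this
            have hP1 : 0 < (n:ℝ) * P (i₀+1) := mul_pos hn0 (hP0 _)
            nlinarith
    -- main term lower bound
    have hP1split : P (i₀+1) = P i₀ * d' i₀ := by
      simp only [hPdef]
      rw [Finset.prod_range_succ]
    have hmain : 2 * (n:ℝ) * P (i₀+1) ≤ |P i₀ * S i₀| := by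
      have hSi₀ : S i₀ = D ⟨i₀, hi₀k⟩ * ((m ⟨i₀, hi₀k⟩ : ℝ)) := by
        simp only [hSdef, hi₀k, dif_pos]
        exact dif_pos hi₀k
      have hm1 : (1:ℝ) ≤ |(m ⟨i₀, hi₀k⟩ : ℝ)| := by
        have := Int.one_le_abs (by simpa using hi₀m)
        calc (1:ℝ) = ((1:ℤ):ℝ) := by norm_num
          _ ≤ ((|m ⟨i₀, hi₀k⟩| : ℤ) : ℝ) := by exact_mod_cast this
          _ = |(m ⟨i₀, hi₀k⟩ : ℝ)| := by push_cast; ring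
      have hd'i₀ : d' i₀ = d ⟨i₀, hi₀k⟩ := by
        simp only [hd'def, hi₀k, dif_pos]
        exact dif_pos hi₀k
      have habs : |P i₀ * S i₀|
          = P i₀ * (2 * (n:ℝ) * d ⟨i₀, hi₀k⟩) * |(m ⟨i₀, hi₀k⟩ : ℝ)| := by
        rw [hSi₀, abs_mul, abs_mul, abs_of_nonneg (hP0 i₀).le,
          abs_of_nonneg (hD0 _).le]
        have hD' : D ⟨i₀, hi₀k⟩ = 2 * (n:ℝ) * d ⟨i₀, hi₀k⟩ := rfl
        rw [hD']
        ring
      rw [habs, hP1split, hd'i₀]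
      have h1 : 0 < P i₀ := hP0 i₀
      have h2 : 0 < d ⟨i₀, hi₀k⟩ := (hd ⟨i₀, hi₀k⟩).1
      have h3 : (0:ℝ) ≤ 2 * (n:ℝ) * (P i₀ * d ⟨i₀, hi₀k⟩) :=
        mul_nonneg (mul_nonneg (by norm_num) hn0.le) (mul_pos h1 h2).le
      calc 2 * (n:ℝ) * (P i₀ * d ⟨i₀, hi₀k⟩)
          = 2 * (n:ℝ) * (P i₀ * d ⟨i₀, hi₀k⟩) * 1 := by ring
        _ ≤ 2 * (n:ℝ) * (P i₀ * d ⟨i₀, hi₀k⟩) * |(m ⟨i₀, hi₀k⟩ : ℝ)| :=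
            mul_le_mul_of_nonneg_left hm1 h3
        _ = P i₀ * (2 * (n:ℝ) * d ⟨i₀, hi₀k⟩) * |(m ⟨i₀, hi₀k⟩ : ℝ)| := by ring
    -- the product relation
    have hPQ : P (i₀+1) * Q = ∏ i : Fin k, d i := by
      rw [← hprodnat]
      have h1 : P (i₀+1) = ∏ l ∈ Finset.Ico 0 (i₀+1), d' l := by
        simp only [hPdef, Finset.range_eq_Ico]
      have h2 : ∏ l ∈ Finset.range k, d' l = ∏ l ∈ Finset.Ico 0 k, d' l := by
        rw [Finset.range_eq_Ico]
      rw [h1, hQdef, h2]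
      exact Finset.prod_Ico_consecutive _ (Nat.zero_le _) hi₀k
    -- combine
    have hTlb : 2 * (n:ℝ) * (P (i₀+1) * Q) ≤ |∑ j, c j * (z j : ℝ)| := by
      rw [hTnat, hsplit]
      have h1 := abs_sub_abs_le_abs_sub (P i₀ * S i₀)
        (-(∑ i ∈ Finset.Ico (i₀+1) k, P i * S i))
      rw [abs_neg, sub_neg_eq_add] at h1
      have h2 : (n:ℝ) * P (i₀+1) * (2 - 2 * Q)
          = 2 * (n:ℝ) * P (i₀+1) - 2 * (n:ℝ) * (P (i₀+1) * Q) := by ring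
      linarith [h1, hmain, htail]
    rw [hPQ] at hTlb
    have : 2 * (n:ℝ) * δ ≤ δ := by
      calc 2 * (n:ℝ) * δ ≤ 2 * (n:ℝ) * ∏ i : Fin k, d i := by
            have := mul_le_mul_of_nonneg_left hprod (by linarith : (0:ℝ) ≤ 2 * (n:ℝ))
            linarith
        _ ≤ |∑ j, c j * (z j : ℝ)| := hTlb
        _ ≤ δ := hzT
    nlinarith
  -- now conclude
  refine ⟨z, hz1, hz0, ?_⟩
  intro i
  have hSz : ∑ j, A i j * (z j : ℝ) = 0 := by
    rw [hS i, hm i]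
    simp
  have heq : ∑ j, a i j * (z j : ℝ)
      = ∑ j, (a i j - A i j) * (z j : ℝ) := by
    have h1 : ∑ j, (a i j - A i j) * (z j : ℝ)
        = ∑ j, a i j * (z j : ℝ) - ∑ j, A i j * (z j : ℝ) := by
      rw [← Finset.sum_sub_distrib]
      apply Finset.sum_congr rfl
      intro j _
      ring
    rw [h1, hSz]
    ring
  rw [heq]
  calc |∑ j, (a i j - A i j) * (z j : ℝ)|
      ≤ ∑ j, |(a i j - A i j) * (z j : ℝ)| := Finset.abs_sum_le_sum_abs _ _
    _ ≤ ∑ _j : Fin n, D i := by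
        apply Finset.sum_le_sum
        intro j _
        rw [abs_mul, abs_of_nonneg (by linarith [hAle i j] : (0:ℝ) ≤ a i j - A i j)]
        have hzj : |(z j : ℝ)| ≤ 1 := by exact_mod_cast hz1 j
        nlinarith [hAgt i j, hAle i j, abs_nonneg ((z j : ℝ))]
    _ = (n:ℝ) * D i := by
        rw [Finset.sum_const, Finset.card_univ, Fintype.card_fin, nsmul_eq_mul]
    _ = 2 * (n:ℝ)^2 * d i := by
        simp only [hDdef]
        ring
end

section
/- Let b_1, …, b_n be linearly independent vectors in ℝ^n with Gram–Schmidt orthogonalization b̂_1, …, b̂_n and coefficients μ_{ij} = ⟨b_j, b̂_i⟩/‖b̂_i‖₂². Assume |μ_{ij}| ≤ 1/2 for all 1 ≤ i < j ≤ n, ‖b̂_i‖₂² ≤ 2·‖b̂_{i+1}‖₂² for all i = 1,…,n−1, and ‖b_i‖₂ ≥ 1 for all i. Then for every x ∈ ℝ^n, ‖Σ_{i=1}^n x_i b_i‖₂ ≥ 2^{−3n/2}·‖x‖₂. -/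
-- Pythagoras for orthogonal families
theorem lll_pyth {n m : ℕ} (v : Fin n → Fin m → ℝ) (c : Fin n → ℝ)
    (h : ∀ i j : Fin n, i ≠ j → ∑ t, v i t * v j t = 0) :
    ∑ t, (∑ i, c i * v i t) ^ 2 = ∑ i, c i ^ 2 * ∑ t, v i t ^ 2 := by
  have e1 : ∀ t, (∑ i, c i * v i t) ^ 2
      = ∑ i, ∑ j, (c i * c j) * (v i t * v j t) := by
    intro t
    rw [sq, Finset.sum_mul_sum]
    apply Finset.sum_congr rfl; intro i _
    apply Finset.sum_congr rfl; intro j _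
    ring
  simp_rw [e1]
  rw [Finset.sum_comm]
  apply Finset.sum_congr rfl; intro i _
  rw [Finset.sum_comm]
  simp_rw [← Finset.mul_sum]
  rw [Finset.sum_eq_single i]
  · simp only [Finset.mul_sum]
    apply Finset.sum_congr rfl
    intro t _
    ring
  · intro j _ hj; rw [h i j (Ne.symm hj), mul_zero]
  · intro hi; exact absurd (Finset.mem_univ i) hi

theorem lll_reindex {n : ℕ} (j : Fin n) (g : ℕ → ℝ) :
    ∑ i ∈ Finset.univ.filter (fun i : Fin n => i < j), g (j.val - i.val)
      = ∑ k ∈ Finset.range j.val, g (j.val - k) := by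
  refine Finset.sum_nbij' (fun i : Fin n => i.val)
    (fun k => if h : k < n then ⟨k, h⟩ else j) ?_ ?_ ?_ ?_ ?_
  · intro a ha
    simp only [Finset.mem_filter, Fin.lt_def] at ha
    simp only [Finset.mem_range]
    omega
  · intro k hk
    simp only [Finset.mem_range] at hk
    have hkn : k < n := lt_trans hk j.isLt
    simp only [Finset.mem_filter, Finset.mem_univ, true_and, dif_pos hkn, Fin.lt_def]
    exact hk
  · intro a ha
    simp only [Finset.mem_filter] at ha
    simp [a.isLt]
  · intro k hk
    simp only [Finset.mem_range] at hk
    simp [lt_trans hk j.isLt]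
  · intro a ha; rfl

theorem lll_reindex2 {n : ℕ} (i : Fin n) (g : ℕ → ℝ) :
    ∑ j ∈ Finset.univ.filter (fun j : Fin n => i < j), g (n - 1 - j.val)
      = ∑ k ∈ Finset.range (n - 1 - i.val), g k := by
  refine Finset.sum_nbij' (fun j : Fin n => n - 1 - j.val)
    (fun k => if h : n - 1 - k < n then ⟨n - 1 - k, h⟩ else i) ?_ ?_ ?_ ?_ ?_
  · intro a ha
    simp only [Finset.mem_filter, Fin.lt_def] at ha
    simp only [Finset.mem_range]
    have := a.isLt; have := i.isLt; omega
  · intro k hk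
    simp only [Finset.mem_range] at hk
    have hi := i.isLt
    have h1 : n - 1 - k < n := by omega
    simp only [Finset.mem_filter, Finset.mem_univ, true_and, dif_pos h1, Fin.lt_def]
    omega
  · intro a ha
    simp only [Finset.mem_filter, Fin.lt_def] at ha
    have h1 : n - 1 - (n - 1 - a.val) < n := by have := a.isLt; omega
    simp only [dif_pos h1]
    apply Fin.ext
    have := a.isLt; simp; omega
  · intro k hk
    simp only [Finset.mem_range] at hk
    have hi := i.isLt
    have h1 : n - 1 - k < n := by omega
    simp only [dif_pos h1]
    omega
  · intro a ha; rfl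

theorem lll_geom1 (m : ℕ) : ∑ k ∈ Finset.range m, (2:ℝ)^(m-k) = 2 * 2^m - 2 := by
  have h := Finset.sum_range_reflect (fun k => (2:ℝ)^(m-k)) m
  have e : ∀ k ∈ Finset.range m, (2:ℝ)^(m - (m - 1 - k)) = 2 * 2^k := by
    intro k hk
    simp only [Finset.mem_range] at hk
    have : m - (m - 1 - k) = k + 1 := by omega
    rw [this, pow_succ]; ring
  rw [← h, Finset.sum_congr rfl e, ← Finset.mul_sum, geom_sum_eq (by norm_num : (2:ℝ) ≠ 1)]
  ring

theorem lll_geom2 (m : ℕ) : ∑ k ∈ Finset.range m, (3/2:ℝ)^k = 2 * ((3/2)^m - 1) := by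
  rw [geom_sum_eq (by norm_num : (3/2:ℝ) ≠ 1)]
  norm_num
  ring

theorem lll_geom3 (m : ℕ) : ∑ k ∈ Finset.range m, (9/4:ℝ)^k ≤ (9/4)^m := by
  rw [geom_sum_eq (by norm_num : (9/4:ℝ) ≠ 1)]
  have h1 : (1:ℝ) ≤ (9/4:ℝ)^m := one_le_pow₀ (by norm_num)
  rw [div_le_iff₀ (by norm_num : (0:ℝ) < 9/4 - 1)]
  nlinarith

/-- **Singular value lower bound for LLL-reduced bases (Lemma 3.4).**
If `b₁, …, bₙ` is an LLL-reduced basis (coefficient-reduced with the Lovász condition)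
whose vectors all have ℓ₂-norm at least `1`, then `‖∑ xᵢ bᵢ‖₂ ≥ 2^{-3n/2} ‖x‖₂`
for every `x ∈ ℝⁿ`. -/
theorem lll_singular_value_bound (n : ℕ) (b bhat : Fin n → (Fin n → ℝ))
    (μ : Fin n → Fin n → ℝ)
    (hli : LinearIndependent ℝ b)
    (hμdef : ∀ i j : Fin n, i < j →
      μ i j = (∑ t, b j t * bhat i t) / (∑ t, bhat i t ^ 2))
    (hgs : ∀ j : Fin n,
      bhat j = b j - ∑ i ∈ Finset.univ.filter (fun i => i < j), μ i j • bhat i)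
    (hred : ∀ i j : Fin n, i < j → |μ i j| ≤ 1 / 2)
    (hLov : ∀ i : Fin n, ∀ h : i.val + 1 < n,
      ∑ t, bhat i t ^ 2 ≤ 2 * ∑ t, bhat ⟨i.val + 1, h⟩ t ^ 2)
    (hnorm : ∀ i, 1 ≤ Real.sqrt (∑ t, b i t ^ 2)) :
    ∀ x : Fin n → ℝ,
      (2 : ℝ) ^ (-(3 * (n : ℝ) / 2)) * Real.sqrt (∑ t, x t ^ 2) ≤
        Real.sqrt (∑ t, (∑ i, x i * b i t) ^ 2) := by
  -- pointwise Gram–Schmidt relation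
  have hgs' : ∀ (j : Fin n) (t : Fin n), bhat j t
      = b j t - ∑ i ∈ Finset.univ.filter (fun i : Fin n => i < j), μ i j * bhat i t := by
    intro j t
    conv_lhs => rw [hgs j]
    simp [Finset.sum_apply]
  have hb' : ∀ (j : Fin n) (t : Fin n), b j t
      = bhat j t + ∑ i ∈ Finset.univ.filter (fun i : Fin n => i < j), μ i j * bhat i t := by
    intro j t; rw [hgs' j t]; ring
  -- bhat j - b j lies in the span of earlier b's
  have hspan : ∀ j : Fin n, bhat j - b j ∈ Submodule.span ℝ (b '' {k : Fin n | k < j}) := by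
    have H : ∀ m : ℕ, ∀ j : Fin n, j.val < m →
        bhat j - b j ∈ Submodule.span ℝ (b '' {k : Fin n | k < j}) := by
      intro m
      induction m with
      | zero => intro j hj; omega
      | succ m ih =>
        intro j hj
        rw [hgs j]
        have e : b j - (∑ i ∈ Finset.univ.filter (fun i : Fin n => i < j), μ i j • bhat i) - b j
            = -∑ i ∈ Finset.univ.filter (fun i : Fin n => i < j), μ i j • bhat i := by
          abel
        rw [e]
        apply Submodule.neg_mem
        apply Submodule.sum_mem
        intro i hi
        have hij : i < j := (Finset.mem_filter.mp hi).2
        apply Submodule.smul_mem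
        have h1 : b i ∈ Submodule.span ℝ (b '' {k : Fin n | k < j}) :=
          Submodule.subset_span ⟨i, hij, rfl⟩
        have h2 : bhat i - b i ∈ Submodule.span ℝ (b '' {k : Fin n | k < j}) := by
          refine Submodule.span_mono (Set.image_mono ?_) (ih i (by
            have h := hij; simp only [Fin.lt_def] at h; omega))
          intro k hk
          exact lt_trans hk hij
        have h3 := Submodule.add_mem _ h2 h1
        simpa using h3
    intro j; exact H (j.val + 1) j (Nat.lt_succ_self _)
  -- bhat i has positive squared norm
  have hNpos : ∀ i : Fin n, 0 < ∑ t, bhat i t ^ 2 := by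
    intro i
    rcases (Finset.sum_nonneg (fun t _ => sq_nonneg (bhat i t))).lt_or_eq with h | h
    · exact h
    · exfalso
      have hz : bhat i = 0 := by
        funext t
        have := (Finset.sum_eq_zero_iff_of_nonneg (fun t _ => sq_nonneg (bhat i t))).mp h.symm t
          (Finset.mem_univ t)
        exact pow_eq_zero_iff (by norm_num) |>.mp this
      have : b i ∈ Submodule.span ℝ (b '' {k : Fin n | k < i}) := by
        have h4 := hspan i
        rw [hz] at h4
        simpa using Submodule.neg_mem _ h4
      exact hli.notMem_span_image (by simp) this
  -- orthogonality of the Gram-Schmidt vectors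
  have horthlt : ∀ m : ℕ, ∀ j : Fin n, j.val < m → ∀ i : Fin n, i < j →
      ∑ t, bhat i t * bhat j t = 0 := by
    intro m
    induction m with
    | zero => intro j hj; omega
    | succ m ih =>
      intro j hj i hij
      have step1 : ∑ t, bhat i t * bhat j t
          = (∑ t, bhat i t * b j t)
            - ∑ k ∈ Finset.univ.filter (fun k : Fin n => k < j),
                μ k j * ∑ t, bhat i t * bhat k t := by
        calc ∑ t, bhat i t * bhat j t
            = ∑ t, (bhat i t * b j t - ∑ k ∈ Finset.univ.filter (fun k : Fin n => k < j),
                μ k j * (bhat i t * bhat k t)) := by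
              apply Finset.sum_congr rfl; intro t _
              rw [hgs' j t, mul_sub, Finset.mul_sum]
              congr 1
              apply Finset.sum_congr rfl; intro k _; ring
          _ = (∑ t, bhat i t * b j t) - ∑ t, ∑ k ∈ Finset.univ.filter (fun k : Fin n => k < j),
                μ k j * (bhat i t * bhat k t) := Finset.sum_sub_distrib _ _
          _ = (∑ t, bhat i t * b j t) - ∑ k ∈ Finset.univ.filter (fun k : Fin n => k < j),
                μ k j * ∑ t, bhat i t * bhat k t := by
              rw [Finset.sum_comm]
              simp_rw [Finset.mul_sum]
      have hksum : ∑ k ∈ Finset.univ.filter (fun k : Fin n => k < j),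
          μ k j * ∑ t, bhat i t * bhat k t = μ i j * ∑ t, bhat i t ^ 2 := by
        have himem : i ∈ Finset.univ.filter (fun k : Fin n => k < j) := by
          simp only [Finset.mem_filter, Finset.mem_univ, true_and]; exact hij
        rw [Finset.sum_eq_single_of_mem i himem]
        · congr 1
          apply Finset.sum_congr rfl; intro t _; rw [sq]
        · intro k hk hki
          have hkj : k < j := (Finset.mem_filter.mp hk).2
          have hzero : ∑ t, bhat i t * bhat k t = 0 := by
            rcases lt_or_gt_of_ne hki with h | h
            · -- k < i
              have := ih i (by have h1 := hij; simp only [Fin.lt_def] at h1; omega) k h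
              calc ∑ t, bhat i t * bhat k t = ∑ t, bhat k t * bhat i t := by
                    apply Finset.sum_congr rfl; intro t _; ring
                _ = 0 := this
            · -- i < k
              exact ih k (by have h1 := hkj; simp only [Fin.lt_def] at h1; omega) i h
          rw [hzero, mul_zero]
      have hbj : ∑ t, bhat i t * b j t = μ i j * ∑ t, bhat i t ^ 2 := by
        have h1 := hμdef i j hij
        rw [eq_div_iff (ne_of_gt (hNpos i))] at h1
        calc ∑ t, bhat i t * b j t = ∑ t, b j t * bhat i t := by
              apply Finset.sum_congr rfl; intro t _; ring
          _ = μ i j * ∑ t, bhat i t ^ 2 := h1.symm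
      rw [step1, hksum, hbj, sub_self]
  have horth : ∀ i j : Fin n, i ≠ j → ∑ t, bhat i t * bhat j t = 0 := by
    intro i j hij
    rcases lt_or_gt_of_ne hij with h | h
    · exact horthlt (j.val + 1) j (Nat.lt_succ_self _) i h
    · have := horthlt (i.val + 1) i (Nat.lt_succ_self _) j h
      calc ∑ t, bhat i t * bhat j t = ∑ t, bhat j t * bhat i t := by
            apply Finset.sum_congr rfl; intro t _; ring
        _ = 0 := this
  -- chain bound from Lovász
  have hchain : ∀ d : ℕ, ∀ i j : Fin n, j.val = i.val + d →
      ∑ t, bhat i t ^ 2 ≤ (2:ℝ)^d * ∑ t, bhat j t ^ 2 := by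
    intro d
    induction d with
    | zero =>
      intro i j h
      have : i = j := Fin.ext (by omega)
      subst this; simp
    | succ d ih =>
      intro i j h
      have hj' : i.val + d < n := by have := j.isLt; omega
      have h1 := ih i ⟨i.val + d, hj'⟩ rfl
      have hjn : i.val + d + 1 < n := by have := j.isLt; omega
      have h2 := hLov ⟨i.val + d, hj'⟩ hjn
      have hjeq : (⟨i.val + d + 1, hjn⟩ : Fin n) = j := Fin.ext (by simp; omega)
      rw [hjeq] at h2
      have h2pow : (0:ℝ) ≤ (2:ℝ)^d := by positivity
      calc ∑ t, bhat i t ^ 2 ≤ (2:ℝ)^d * ∑ t, bhat ⟨i.val + d, hj'⟩ t ^ 2 := h1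
        _ ≤ (2:ℝ)^d * (2 * ∑ t, bhat j t ^ 2) := by
            exact mul_le_mul_of_nonneg_left h2 h2pow
        _ = (2:ℝ)^(d+1) * ∑ t, bhat j t ^ 2 := by ring
  -- lower bound on the Gram-Schmidt norms
  have hNlow : ∀ j : Fin n, (1:ℝ) ≤ (2:ℝ)^n * ∑ t, bhat j t ^ 2 := by
    intro j
    set c : Fin n → ℝ := fun i => if i = j then 1 else if i < j then μ i j else 0 with hc
    have hbj : ∀ t, b j t = ∑ i, c i * bhat i t := by
      intro t
      rw [hb' j t]
      rw [← Finset.sum_filter_add_sum_filter_not Finset.univ (fun i : Fin n => i < j)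
        (fun i => c i * bhat i t)]
      have e1 : ∑ i ∈ Finset.univ.filter (fun i : Fin n => i < j), c i * bhat i t
          = ∑ i ∈ Finset.univ.filter (fun i : Fin n => i < j), μ i j * bhat i t := by
        apply Finset.sum_congr rfl
        intro i hi
        have hij : i < j := (Finset.mem_filter.mp hi).2
        have hce : c i = μ i j := by simp [hc, ne_of_lt hij, hij]
        rw [hce]
      have e2 : ∑ i ∈ Finset.univ.filter (fun i : Fin n => ¬ i < j), c i * bhat i t
          = bhat j t := by
        have hjmem : j ∈ Finset.univ.filter (fun i : Fin n => ¬ i < j) := by simp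
        rw [Finset.sum_eq_single_of_mem j hjmem]
        · simp [hc]
        · intro k hk hkj
          have h5 : ¬ k < j := (Finset.mem_filter.mp hk).2
          have hck : c k = 0 := by simp [hc, hkj, h5]
          rw [hck, zero_mul]
      rw [e1, e2]; ring
    have hdecomp : ∑ t, b j t ^ 2 = ∑ i, c i ^ 2 * ∑ t, bhat i t ^ 2 := by
      simp_rw [hbj]
      exact lll_pyth bhat c horth
    have hone : (1:ℝ) ≤ ∑ t, b j t ^ 2 := by
      have hS : (0:ℝ) ≤ ∑ t, b j t ^ 2 := Finset.sum_nonneg fun t _ => sq_nonneg _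
      have h := hnorm j
      nlinarith [Real.sq_sqrt hS, Real.sqrt_nonneg (∑ t, b j t ^ 2)]
    have hNj : (0:ℝ) ≤ ∑ t, bhat j t ^ 2 := le_of_lt (hNpos j)
    have e2 : ∑ i ∈ Finset.univ.filter (fun i : Fin n => ¬ i < j), c i ^ 2 * ∑ t, bhat i t ^ 2
        = ∑ t, bhat j t ^ 2 := by
      have hjmem : j ∈ Finset.univ.filter (fun i : Fin n => ¬ i < j) := by simp
      rw [Finset.sum_eq_single_of_mem j hjmem]
      · simp [hc]
      · intro k hk hkj
        have h5 : ¬ k < j := (Finset.mem_filter.mp hk).2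
        have hck : c k = 0 := by simp [hc, hkj, h5]
        rw [hck]; ring
    have e1 : ∑ i ∈ Finset.univ.filter (fun i : Fin n => i < j), c i ^ 2 * ∑ t, bhat i t ^ 2
        ≤ ∑ i ∈ Finset.univ.filter (fun i : Fin n => i < j),
            (1/4:ℝ) * ((2:ℝ)^(j.val - i.val) * ∑ t, bhat j t ^ 2) := by
      apply Finset.sum_le_sum
      intro i hi
      have hij : i < j := (Finset.mem_filter.mp hi).2
      have hci : c i = μ i j := by simp [hc, ne_of_lt hij, hij]
      have hμ2 : c i ^ 2 ≤ 1/4 := by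
        rw [hci]
        have h6 := hred i j hij
        have h7 : μ i j ^ 2 = |μ i j|^2 := (sq_abs _).symm
        rw [h7]
        nlinarith [abs_nonneg (μ i j)]
      have hch := hchain (j.val - i.val) i j (by have h7 := hij; rw [Fin.lt_def] at h7; omega)
      have hNi : (0:ℝ) ≤ ∑ t, bhat i t ^ 2 := le_of_lt (hNpos i)
      calc c i ^ 2 * ∑ t, bhat i t ^ 2 ≤ (1/4) * ∑ t, bhat i t ^ 2 := by
            nlinarith [sq_nonneg (c i)]
        _ ≤ (1/4:ℝ) * ((2:ℝ)^(j.val - i.val) * ∑ t, bhat j t ^ 2) := by nlinarith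
    have e3 : ∑ i ∈ Finset.univ.filter (fun i : Fin n => i < j),
        (1/4:ℝ) * ((2:ℝ)^(j.val - i.val) * ∑ t, bhat j t ^ 2)
        = (1/4:ℝ) * (∑ t, bhat j t ^ 2) * (2 * 2^(j.val) - 2) := by
      have hr := lll_reindex j (fun d => (2:ℝ)^d)
      calc ∑ i ∈ Finset.univ.filter (fun i : Fin n => i < j),
            (1/4:ℝ) * ((2:ℝ)^(j.val - i.val) * ∑ t, bhat j t ^ 2)
          = (1/4:ℝ) * (∑ t, bhat j t ^ 2)
              * ∑ i ∈ Finset.univ.filter (fun i : Fin n => i < j), (2:ℝ)^(j.val - i.val) := by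
            rw [Finset.mul_sum]
            apply Finset.sum_congr rfl
            intro i _; ring
        _ = (1/4:ℝ) * (∑ t, bhat j t ^ 2) * (2 * 2^(j.val) - 2) := by
            rw [hr, lll_geom1]
    have hjv : (2:ℝ)^(j.val) ≤ 2^n := pow_le_pow_right₀ (by norm_num) (le_of_lt j.isLt)
    have hjv1 : (1:ℝ) ≤ (2:ℝ)^(j.val) := one_le_pow₀ (by norm_num)
    have hcomb : (1:ℝ) ≤ (2:ℝ)^(j.val) * ∑ t, bhat j t ^ 2 := by
      have h8 : ∑ t, b j t ^ 2
          ≤ (1/4:ℝ) * (∑ t, bhat j t ^ 2) * (2 * 2^(j.val) - 2) + ∑ t, bhat j t ^ 2 := by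
        rw [hdecomp,
          ← Finset.sum_filter_add_sum_filter_not Finset.univ (fun i : Fin n => i < j)
            (fun i => c i ^ 2 * ∑ t, bhat i t ^ 2), e2, ← e3]
        exact add_le_add_left e1 _
      nlinarith
    nlinarith
  -- main estimate for a given x
  intro x
  set y : Fin n → ℝ :=
    fun i => x i + ∑ j ∈ Finset.univ.filter (fun j : Fin n => i < j), μ i j * x j with hy
  have hBy : ∀ t, ∑ i, x i * b i t = ∑ i, y i * bhat i t := by
    intro t
    calc ∑ i, x i * b i t
        = ∑ j, (x j * bhat j t + ∑ i ∈ Finset.univ.filter (fun i : Fin n => i < j),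
            x j * (μ i j * bhat i t)) := by
          apply Finset.sum_congr rfl; intro j _
          rw [hb' j t, mul_add, Finset.mul_sum]
      _ = ∑ j, x j * bhat j t + ∑ j, ∑ i ∈ Finset.univ.filter (fun i : Fin n => i < j),
            x j * (μ i j * bhat i t) := Finset.sum_add_distrib
      _ = ∑ i, x i * bhat i t + ∑ i, ∑ j ∈ Finset.univ.filter (fun j : Fin n => i < j),
            x j * (μ i j * bhat i t) := by
          congr 1
          simp only [Finset.sum_filter]
          exact Finset.sum_comm
      _ = ∑ i, y i * bhat i t := by
          rw [← Finset.sum_add_distrib]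
          apply Finset.sum_congr rfl; intro i _
          simp only [hy]
          rw [add_mul, Finset.sum_mul]
          congr 1
          apply Finset.sum_congr rfl; intro k _; ring
  have hBN : ∑ t, (∑ i, x i * b i t) ^ 2 = ∑ i, y i ^ 2 * ∑ t, bhat i t ^ 2 := by
    simp_rw [hBy]
    exact lll_pyth bhat y horth
  set Y := Real.sqrt (∑ i, y i ^ 2) with hYdef
  have hY0 : 0 ≤ Y := Real.sqrt_nonneg _
  have hY2 : Y ^ 2 = ∑ i, y i ^ 2 := Real.sq_sqrt (Finset.sum_nonneg fun i _ => sq_nonneg _)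
  have hyY : ∀ i, |y i| ≤ Y := by
    intro i
    rw [← Real.sqrt_sq_eq_abs]
    apply Real.sqrt_le_sqrt
    exact Finset.single_le_sum (fun i _ => sq_nonneg (y i)) (Finset.mem_univ i)
  have hxb : ∀ m : ℕ, ∀ i : Fin n, n - i.val ≤ m → |x i| ≤ (3/2:ℝ)^(n - 1 - i.val) * Y := by
    intro m
    induction m with
    | zero => intro i hi; have := i.isLt; omega
    | succ m ih =>
      intro i hi
      have hxi : x i = y i - ∑ j ∈ Finset.univ.filter (fun j : Fin n => i < j), μ i j * x j := by
        simp [hy]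
      rw [hxi]
      have habs : |y i - ∑ j ∈ Finset.univ.filter (fun j : Fin n => i < j), μ i j * x j|
          ≤ |y i| + ∑ j ∈ Finset.univ.filter (fun j : Fin n => i < j), |μ i j * x j| := by
        calc |y i - ∑ j ∈ Finset.univ.filter (fun j : Fin n => i < j), μ i j * x j|
            ≤ |y i| + |∑ j ∈ Finset.univ.filter (fun j : Fin n => i < j), μ i j * x j| :=
              abs_sub _ _
          _ ≤ _ := by
              gcongr
              exact Finset.abs_sum_le_sum_abs _ _
      have hterm : ∑ j ∈ Finset.univ.filter (fun j : Fin n => i < j), |μ i j * x j|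
          ≤ ∑ j ∈ Finset.univ.filter (fun j : Fin n => i < j),
              (1/2:ℝ) * ((3/2:ℝ)^(n - 1 - j.val) * Y) := by
        apply Finset.sum_le_sum
        intro j hj
        have hij : i < j := (Finset.mem_filter.mp hj).2
        have hjm : n - j.val ≤ m := by
          have h7 := hij
          rw [Fin.lt_def] at h7
          have := j.isLt
          omega
        rw [abs_mul]
        apply mul_le_mul (hred i j hij) (ih j hjm) (abs_nonneg _) (by norm_num)
      have hgeo : ∑ j ∈ Finset.univ.filter (fun j : Fin n => i < j),
          (1/2:ℝ) * ((3/2:ℝ)^(n - 1 - j.val) * Y)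
          = (1/2:ℝ) * Y * (2 * ((3/2:ℝ)^(n - 1 - i.val) - 1)) := by
        have hr := lll_reindex2 i (fun k => (3/2:ℝ)^k)
        calc ∑ j ∈ Finset.univ.filter (fun j : Fin n => i < j),
              (1/2:ℝ) * ((3/2:ℝ)^(n - 1 - j.val) * Y)
            = (1/2:ℝ) * Y * ∑ j ∈ Finset.univ.filter (fun j : Fin n => i < j),
                (3/2:ℝ)^(n - 1 - j.val) := by
              rw [Finset.mul_sum]
              apply Finset.sum_congr rfl
              intro j _; ring
          _ = (1/2:ℝ) * Y * (2 * ((3/2:ℝ)^(n - 1 - i.val) - 1)) := by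
              rw [hr, lll_geom2]
      have hyi := hyY i
      calc |y i - ∑ j ∈ Finset.univ.filter (fun j : Fin n => i < j), μ i j * x j|
          ≤ |y i| + ∑ j ∈ Finset.univ.filter (fun j : Fin n => i < j), |μ i j * x j| := habs
        _ ≤ Y + (1/2:ℝ) * Y * (2 * ((3/2:ℝ)^(n - 1 - i.val) - 1)) := by
            rw [← hgeo]
            exact add_le_add hyi hterm
        _ = (3/2:ℝ)^(n - 1 - i.val) * Y := by ring
  have hxfin : ∀ i : Fin n, |x i| ≤ (3/2:ℝ)^(n - 1 - i.val) * Y := fun i => hxb n i (by omega)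
  have hx2 : ∑ t, x t ^ 2 ≤ (9/4:ℝ)^n * Y^2 := by
    have h1 : ∑ i, x i ^ 2 ≤ ∑ i : Fin n, (9/4:ℝ)^(n - 1 - i.val) * Y^2 := by
      apply Finset.sum_le_sum
      intro i _
      have hxi := hxfin i
      have h2 : x i ^ 2 = |x i|^2 := (sq_abs _).symm
      have h4 : ((3/2:ℝ)^(n - 1 - i.val))^2 = (9/4:ℝ)^(n - 1 - i.val) := by
        rw [← pow_mul, mul_comm, pow_mul]
        norm_num
      calc x i ^ 2 = |x i|^2 := h2
        _ ≤ ((3/2:ℝ)^(n - 1 - i.val) * Y)^2 := by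
            apply pow_le_pow_left₀ (abs_nonneg _) hxi
        _ = (9/4:ℝ)^(n - 1 - i.val) * Y^2 := by rw [mul_pow, h4]
    have h3 : ∑ i : Fin n, (9/4:ℝ)^(n - 1 - i.val) ≤ (9/4:ℝ)^n := by
      rw [Fin.sum_univ_eq_sum_range (fun k => (9/4:ℝ)^(n - 1 - k)) n,
        Finset.sum_range_reflect (fun k => (9/4:ℝ)^k) n]
      exact lll_geom3 n
    calc ∑ t, x t ^ 2 ≤ ∑ i : Fin n, (9/4:ℝ)^(n - 1 - i.val) * Y^2 := h1
      _ = (∑ i : Fin n, (9/4:ℝ)^(n - 1 - i.val)) * Y^2 := by rw [Finset.sum_mul]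
      _ ≤ (9/4:ℝ)^n * Y^2 := by nlinarith [sq_nonneg Y]
  have hmain : ((1/8:ℝ))^n * ∑ t, x t ^ 2 ≤ ∑ t, (∑ i, x i * b i t) ^ 2 := by
    rw [hBN]
    have hp : (0:ℝ) < 2^n := by positivity
    have h1 : ∑ i, y i ^ 2 * ((2:ℝ)^n)⁻¹ ≤ ∑ i, y i ^ 2 * ∑ t, bhat i t ^ 2 := by
      apply Finset.sum_le_sum
      intro i _
      have h5 := hNlow i
      have h6 : ((2:ℝ)^n)⁻¹ ≤ ∑ t, bhat i t ^ 2 := by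
        rw [inv_le_iff_one_le_mul₀ hp]
        linarith [hNlow i]
      nlinarith [sq_nonneg (y i)]
    have h2 : ∑ i, y i ^ 2 * ((2:ℝ)^n)⁻¹ = ((2:ℝ)^n)⁻¹ * Y^2 := by
      rw [hY2, ← Finset.sum_mul, mul_comm]
    have h3 : ((1/8:ℝ))^n * ∑ t, x t ^ 2 ≤ ((2:ℝ)^n)⁻¹ * Y^2 := by
      have h7 : ((1/8:ℝ))^n * ∑ t, x t ^ 2 ≤ (1/8:ℝ)^n * ((9/4:ℝ)^n * Y^2) := by
        apply mul_le_mul_of_nonneg_left hx2 (by positivity)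
      have h8 : (1/8:ℝ)^n * ((9/4:ℝ)^n * Y^2) = (9/32:ℝ)^n * Y^2 := by
        rw [← mul_assoc, ← mul_pow]
        norm_num
      have h9 : (9/32:ℝ)^n ≤ (1/2:ℝ)^n := by
        apply pow_le_pow_left₀ (by norm_num) (by norm_num)
      have h10 : ((1/2:ℝ))^n = ((2:ℝ)^n)⁻¹ := by
        rw [one_div, inv_pow]
      nlinarith [sq_nonneg Y]
    calc ((1/8:ℝ))^n * ∑ t, x t ^ 2 ≤ ((2:ℝ)^n)⁻¹ * Y^2 := h3
      _ = ∑ i, y i ^ 2 * ((2:ℝ)^n)⁻¹ := h2.symm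
      _ ≤ ∑ i, y i ^ 2 * ∑ t, bhat i t ^ 2 := h1
  have hCsq : ((2:ℝ) ^ (-(3 * (n : ℝ) / 2)))^2 = (1/8:ℝ)^n := by
    rw [← Real.rpow_natCast ((2:ℝ) ^ (-(3 * (n : ℝ) / 2))) 2,
      ← Real.rpow_mul (by norm_num : (0:ℝ) ≤ 2)]
    have he : (-(3 * (n : ℝ) / 2)) * (2:ℕ) = -((3 * n : ℕ) : ℝ) := by
      push_cast; ring
    rw [he, Real.rpow_neg (by norm_num : (0:ℝ) ≤ 2), Real.rpow_natCast]
    rw [pow_mul]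
    norm_num
    rw [one_div, inv_pow]
  have hC0 : (0:ℝ) ≤ (2:ℝ) ^ (-(3 * (n : ℝ) / 2)) := Real.rpow_nonneg (by norm_num) _
  have hfin : (2:ℝ) ^ (-(3 * (n : ℝ) / 2)) * Real.sqrt (∑ t, x t ^ 2)
      = Real.sqrt ((1/8:ℝ)^n * ∑ t, x t ^ 2) := by
    rw [Real.sqrt_mul (by positivity) (∑ t, x t ^ 2), ← hCsq, Real.sqrt_sq hC0]
  rw [hfin]
  exact Real.sqrt_le_sqrt hmain
end

section
/- Let V ∈ ℝ^{n×n} be upper triangular with V_{ii} = 1 for all i and |V_{ij}| ≤ 1/2 for all 1 ≤ i < j ≤ n. Then for every x ∈ ℝ^n, ‖Vx‖∞ ≥ 2^{−n}·‖x‖₂. -/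
lemma geom4eq (n : ℕ) : ∑ m ∈ Finset.range n, (1/4:ℝ)^(m+1) = (1/3) - (1/3)*(1/4)^n := by
  induction n with
  | zero => norm_num
  | succ p ihp => rw [Finset.sum_range_succ, ihp]; ring

lemma geom4 (n : ℕ) : ∑ m ∈ Finset.range n, (1/4:ℝ)^(m+1) ≤ 1/3 := by
  rw [geom4eq]
  have : (0:ℝ) < (1/4)^n := by positivity
  linarith

lemma half_sq (m : ℕ) : ((1/2:ℝ)^m)^2 = (1/4)^m := by
  rw [← pow_mul, mul_comm, pow_mul]; norm_num

lemma geom_aux (a b : ℕ) (h : a ≤ b) :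
    ∑ m ∈ Finset.Ico a b, (1/2:ℝ)^(m+1) = (1/2)^a - (1/2)^b := by
  induction b, h using Nat.le_induction with
  | base => simp
  | succ b hb ih =>
    rw [Finset.sum_Ico_succ_top hb, ih]
    ring

/-- **ℓ∞ lower bound for unit upper-triangular matrices with small entries.**
If `V` is upper triangular with unit diagonal and off-diagonal entries of absolute value
at most `1/2`, then `‖Vx‖∞ ≥ 2^{-n} ‖x‖₂` for every `x ∈ ℝⁿ`. (On `Fin n → ℝ` the default
norm is the sup-norm, so `‖V.mulVec x‖` is `‖Vx‖∞`.) -/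
theorem upper_triangular_sup_norm_bound (n : ℕ) (V : Matrix (Fin n) (Fin n) ℝ)
    (hlower : ∀ i j : Fin n, j < i → V i j = 0)
    (hdiag : ∀ i : Fin n, V i i = 1)
    (hoff : ∀ i j : Fin n, i < j → |V i j| ≤ 1 / 2) :
    ∀ x : Fin n → ℝ,
      (2 : ℝ) ^ (-(n : ℝ)) * Real.sqrt (∑ t, x t ^ 2) ≤ ‖V.mulVec x‖ := by
  intro x
  set s := Real.sqrt (∑ t, x t ^ 2) with hs
  have hs0 : 0 ≤ s := Real.sqrt_nonneg _
  have hpow : (2 : ℝ) ^ (-(n : ℝ)) = (1/2:ℝ)^n := by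
    rw [Real.rpow_neg (by norm_num : (0:ℝ) ≤ 2), Real.rpow_natCast]
    simp [one_div, inv_pow]
  rw [hpow]
  rcases eq_or_lt_of_le hs0 with h0 | hspos
  · rw [← h0, mul_zero]; exact norm_nonneg _
  have hsum_nonneg : (0:ℝ) ≤ ∑ t, x t ^ 2 := Finset.sum_nonneg fun t _ => sq_nonneg _
  have hx2 : ∑ t, x t ^ 2 = s ^ 2 := (Real.sq_sqrt hsum_nonneg).symm
  -- the set of good indices
  set T := Finset.univ.filter (fun k : Fin n => s * (1/2)^((k:ℕ)+1) ≤ |x k|) with hT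
  have hTne : T.Nonempty := by
    by_contra hne
    have hall : ∀ k : Fin n, |x k| < s * (1/2)^((k:ℕ)+1) := by
      intro k
      by_contra hk
      exact hne ⟨k, Finset.mem_filter.mpr ⟨Finset.mem_univ _, not_lt.mp hk⟩⟩
    rcases Nat.eq_zero_or_pos n with hn | hn
    · subst hn
      have : s ^ 2 = 0 := by rw [← hx2]; simp
      nlinarith
    have hlt : ∑ t, x t ^ 2 < ∑ t : Fin n, s^2 * (1/4)^((t:ℕ)+1) := by
      apply Finset.sum_lt_sum_of_nonempty
      · simpa using Finset.univ_nonempty_iff.mpr (Fin.pos_iff_nonempty.mp hn)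
      intro t _
      have h1 : 0 < s * (1/2)^((t:ℕ)+1) := by positivity
      have := hall t
      calc x t ^ 2 = |x t| ^ 2 := (sq_abs _).symm
        _ < (s * (1/2)^((t:ℕ)+1))^2 := by nlinarith [abs_nonneg (x t)]
        _ = s^2 * (1/4)^((t:ℕ)+1) := by rw [mul_pow, half_sq]
    have hgeosum : ∑ t : Fin n, (1/4:ℝ)^((t:ℕ)+1) ≤ 1/3 := by
      rw [Fin.sum_univ_eq_sum_range (fun m => (1/4:ℝ)^(m+1)) n]
      exact geom4 n
    have : ∑ t : Fin n, s^2 * (1/4)^((t:ℕ)+1) ≤ s^2 * (1/3) := by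
      rw [← Finset.mul_sum]
      have : (0:ℝ) < s^2 := by positivity
      nlinarith
    nlinarith
  set k := T.max' hTne with hk
  have hkmem : k ∈ T := T.max'_mem hTne
  have hkbd : s * (1/2)^((k:ℕ)+1) ≤ |x k| := by
    simpa [hT] using hkmem
  have hmax : ∀ j : Fin n, k < j → |x j| < s * (1/2)^((j:ℕ)+1) := by
    intro j hj
    by_contra hc
    have hjT : j ∈ T := Finset.mem_filter.mpr ⟨Finset.mem_univ _, not_lt.mp hc⟩
    exact absurd (T.le_max' j hjT) (not_le.mpr hj)
  -- split the k-th entry of V.mulVec x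
  have hsplit : V.mulVec x k = x k + ∑ j ∈ Finset.Ioi k, V k j * x j := by
    have h1 : V.mulVec x k = ∑ j, V k j * x j := rfl
    have h2 : ∑ j, V k j * x j = ∑ j ∈ Finset.Ici k, V k j * x j := by
      refine (Finset.sum_subset (Finset.subset_univ _) ?_).symm
      intro j _ hj
      have : j < k := by simpa using hj
      rw [hlower k j this, zero_mul]
    have h3 : Finset.Ici k = insert k (Finset.Ioi k) := (Finset.Ioi_insert k).symm
    rw [h1, h2, h3, Finset.sum_insert Finset.notMem_Ioi_self, hdiag, one_mul]
  -- geometric sum over the tail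
  have hkn : (k:ℕ) + 1 ≤ n := k.2
  have hgeo : ∑ j ∈ Finset.Ioi k, ((1/2:ℝ))^((j:ℕ)+1) = (1/2)^((k:ℕ)+1) - (1/2)^n := by
    have e1 : Finset.Ioi k = Finset.univ.filter (fun j => k < j) := by
      ext j; simp
    rw [e1, Finset.sum_filter]
    simp only [Fin.lt_def]
    rw [Fin.sum_univ_eq_sum_range (fun m => if (k:ℕ) < m then ((1/2:ℝ))^(m+1) else 0) n,
      ← Finset.sum_filter]
    have e3 : (Finset.range n).filter (fun m => (k:ℕ) < m) = Finset.Ico ((k:ℕ)+1) n := by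
      ext m
      simp only [Finset.mem_filter, Finset.mem_range, Finset.mem_Ico]
      omega
    rw [e3, geom_aux _ _ hkn]
  -- bound the tail
  have htail : |∑ j ∈ Finset.Ioi k, V k j * x j|
      ≤ (1/2) * (s * ((1/2)^((k:ℕ)+1) - (1/2)^n)) := by
    calc |∑ j ∈ Finset.Ioi k, V k j * x j| ≤ ∑ j ∈ Finset.Ioi k, |V k j * x j| :=
          Finset.abs_sum_le_sum_abs _ _
      _ ≤ ∑ j ∈ Finset.Ioi k, (1/2) * (s * (1/2)^((j:ℕ)+1)) := by
          apply Finset.sum_le_sum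
          intro j hj
          have hkj : k < j := Finset.mem_Ioi.mp hj
          rw [abs_mul]
          have h1 := hoff k j hkj
          have h2 := le_of_lt (hmax j hkj)
          have h3 : (0:ℝ) ≤ |x j| := abs_nonneg _
          have h4 : (0:ℝ) ≤ s * (1/2)^((j:ℕ)+1) := by positivity
          nlinarith [abs_nonneg (V k j)]
      _ = (1/2) * (s * ((1/2)^((k:ℕ)+1) - (1/2)^n)) := by
          rw [← Finset.mul_sum, ← Finset.mul_sum, hgeo]
  -- conclude
  have hk2 : ((1/2:ℝ))^(n+1) ≤ (1/2)^((k:ℕ)+2) :=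
    pow_le_pow_of_le_one (by norm_num) (by norm_num) (by omega)
  have hVk : (1/2:ℝ)^n * s ≤ |V.mulVec x k| := by
    rw [hsplit]
    have habs : |x k| - |∑ j ∈ Finset.Ioi k, V k j * x j| ≤ |x k + ∑ j ∈ Finset.Ioi k, V k j * x j| := by
      have := abs_add_le (x k + ∑ j ∈ Finset.Ioi k, V k j * x j) (-(∑ j ∈ Finset.Ioi k, V k j * x j))
      simp at this
      linarith [this]
    have key : (1/2:ℝ)^n * s ≤ |x k| - |∑ j ∈ Finset.Ioi k, V k j * x j| := by
      have e : s * (1/2)^((k:ℕ)+1) - (1/2) * (s * ((1/2)^((k:ℕ)+1) - (1/2)^n))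
          = s * ((1/2)^((k:ℕ)+2) + (1/2)^(n+1)) := by ring
      have h5 : s * ((1/2:ℝ)^((k:ℕ)+2) + (1/2)^(n+1)) ≥ s * (2 * (1/2)^(n+1)) := by
        apply mul_le_mul_of_nonneg_left _ hs0
        nlinarith
      have h6 : s * (2 * ((1/2:ℝ))^(n+1)) = (1/2)^n * s := by ring
      linarith [hkbd, htail]
    linarith
  calc (1/2:ℝ)^n * s ≤ |V.mulVec x k| := hVk
    _ ≤ ‖V.mulVec x‖ := by
        have := norm_le_pi_norm (V.mulVec x) k
        simpa [Real.norm_eq_abs] using this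
end

section
/- Let A ∈ ℝ^{n×n} be invertible and let E = {x ∈ ℝ^n : ‖Ax‖₂ ≤ 1}. Let U ∈ ℤ^{n×n} be unimodular (|det U| = 1) and suppose the columns b_1, …, b_n of B := AU form an LLL-reduced basis, i.e., the Gram–Schmidt coefficients satisfy |μ_{ij}| ≤ 1/2 for all 1 ≤ i < j ≤ n and ‖b̂_i‖₂² ≤ 2·‖b̂_{i+1}‖₂² for all i = 1,…,n−1. Then either there exists x ∈ ℤ^n \ {0} with x ∈ E, or for every x ∈ E one has ‖U^{−1}x‖₂ ≤ 2^{3n/2}. -/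
open Matrix Finset

private lemma er_sum_dp {n : ℕ} (s : Finset (Fin n)) (f : Fin n → (Fin n → ℝ)) (v : Fin n → ℝ) :
    (∑ i ∈ s, f i) ⬝ᵥ v = ∑ i ∈ s, f i ⬝ᵥ v := by
  simp only [dotProduct, Finset.sum_apply, Finset.sum_mul]
  exact Finset.sum_comm

private lemma er_sumsq {n : ℕ} (v : Fin n → ℝ) : ∑ t, v t ^ 2 = v ⬝ᵥ v := by
  simp [dotProduct, sq]

private lemma er_geom (n : ℕ) : ∑ m ∈ Finset.range n, ((1:ℝ)/2) ^ m ≤ 2 := by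
  have h := geom_sum_eq (by norm_num : ((1:ℝ)/2) ≠ 1) n
  rw [h]
  have : (0:ℝ) ≤ (1/2)^n := by positivity
  rw [div_le_iff_of_neg (by norm_num : ((1:ℝ)/2 - 1) < 0)]
  nlinarith [this]

private lemma er_aux (n : ℕ) : 2 * ((3:ℝ)/2) ^ n ≤ 2 ^ n + 2 := by
  induction n with
  | zero => norm_num
  | succ k ih =>
    rcases Nat.eq_zero_or_pos k with hk | hk
    · subst hk; norm_num
    · have h2 : (2:ℝ) ≤ 2 ^ k := by
        calc (2:ℝ) = 2^1 := by norm_num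
        _ ≤ 2^k := by apply pow_le_pow_right₀ (by norm_num) hk
      have h3 : 2 * ((3:ℝ)/2)^(k+1) = (3/2) * (2 * (3/2)^k) := by ring
      rw [h3]
      calc (3/2:ℝ) * (2 * (3/2)^k) ≤ (3/2) * (2^k + 2) := by nlinarith
        _ ≤ 2^(k+1) + 2 := by rw [pow_succ]; nlinarith

private lemma er_main (n : ℕ) (hn : 0 < n) (col bhat : Fin n → (Fin n → ℝ))
    (μ : Fin n → Fin n → ℝ)
    (hμdef : ∀ i j : Fin n, i < j →
      μ i j = (col j ⬝ᵥ bhat i) / (bhat i ⬝ᵥ bhat i))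
    (hgs : ∀ j : Fin n,
      col j = bhat j + ∑ i ∈ Finset.univ.filter (fun i => i < j), μ i j • bhat i)
    (hred : ∀ i j : Fin n, i < j → |μ i j| ≤ 1 / 2)
    (hLov : ∀ i : Fin n, ∀ h : i.val + 1 < n,
      bhat i ⬝ᵥ bhat i ≤ 2 * (bhat ⟨i.val + 1, h⟩ ⬝ᵥ bhat ⟨i.val + 1, h⟩))
    (hcol1 : ∀ i : Fin n, (1:ℝ) < col i ⬝ᵥ col i)
    (y : Fin n → ℝ) (hy : (∑ j, y j • col j) ⬝ᵥ (∑ j, y j • col j) ≤ 1) :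
    ∑ j, y j ^ 2 ≤ 8 ^ n := by
  set g : Fin n → ℝ := fun i => bhat i ⬝ᵥ bhat i with hgdef
  have hgnn : ∀ i, 0 ≤ g i := by
    intro i; rw [hgdef]; simp only [← er_sumsq]; positivity
  -- orthogonality
  have key : ∀ mval : ℕ, ∀ j : Fin n, j.val = mval → ∀ i : Fin n, i < j →
      bhat j ⬝ᵥ bhat i = 0 := by
    intro mval
    induction mval using Nat.strong_induction_on with
    | _ mval IH =>
      intro j hj i hij
      have hcross : ∀ k : Fin n, k < j → k ≠ i → bhat k ⬝ᵥ bhat i = 0 := by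
        intro k hk hki
        rcases lt_or_gt_of_ne hki with h | h
        · rw [dotProduct_comm]
          exact IH i.val (by have := Fin.lt_def.mp hij; omega) i rfl k h
        · exact IH k.val (by have := Fin.lt_def.mp hk; omega) k rfl i h
      have hexp : bhat j ⬝ᵥ bhat i = col j ⬝ᵥ bhat i - μ i j * (bhat i ⬝ᵥ bhat i) := by
        have h1 : bhat j = col j - ∑ i ∈ Finset.univ.filter (fun i => i < j), μ i j • bhat i := by
          rw [hgs j]; ring
        conv_lhs => rw [h1]
        rw [sub_dotProduct, er_sum_dp]
        congr 1
        rw [Finset.sum_eq_single_of_mem i (by simp [hij])]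
        · rw [smul_dotProduct]; simp
        · intro k hk hki
          rw [smul_dotProduct, hcross k (by simpa using hk) hki]; simp
      by_cases hz : bhat i ⬝ᵥ bhat i = 0
      · have h0 : bhat i = 0 := dotProduct_self_eq_zero.mp hz
        rw [hexp, hz, h0, dotProduct_zero]; ring
      · rw [hexp, hμdef i j hij, div_mul_cancel₀ _ hz, sub_self]
  have horth : ∀ i j : Fin n, i ≠ j → bhat i ⬝ᵥ bhat j = 0 := by
    intro i j hij
    rcases lt_or_gt_of_ne hij with h | h
    · rw [dotProduct_comm]; exact key j.val j rfl i h
    · exact key i.val i rfl j h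
  -- norm-square of combinations of the orthogonal vectors
  have hnormsq : ∀ d : Fin n → ℝ,
      (∑ i, d i • bhat i) ⬝ᵥ (∑ i, d i • bhat i) = ∑ i, d i ^ 2 * g i := by
    intro d
    rw [er_sum_dp]
    refine Finset.sum_congr rfl fun i _ => ?_
    rw [dotProduct_comm, er_sum_dp]
    rw [Finset.sum_eq_single_of_mem i (Finset.mem_univ i)]
    · rw [smul_dotProduct, dotProduct_smul]
      simp [hgdef]; ring
    · intro k _ hki
      rw [smul_dotProduct, dotProduct_smul, horth k i hki]
      simp
  -- the unit upper-triangular change of basis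
  set R : Fin n → Fin n → ℝ :=
    fun i j => if i < j then μ i j else if i = j then 1 else 0 with hRdef
  have hcolrep : ∀ j, col j = ∑ i, R i j • bhat i := by
    intro j
    rw [← Finset.sum_filter_add_sum_filter_not univ (fun i => i < j)]
    have h1 : ∑ i ∈ filter (fun i => i < j) univ, R i j • bhat i
        = ∑ i ∈ filter (fun i => i < j) univ, μ i j • bhat i := by
      refine Finset.sum_congr rfl fun i hi => ?_
      rw [hRdef]; simp only []
      rw [if_pos (by simpa using hi)]
    have h2 : ∑ i ∈ filter (fun i => ¬ i < j) univ, R i j • bhat i = bhat j := by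
      rw [Finset.sum_eq_single_of_mem j (by simp)]
      · rw [hRdef]; simp
      · intro k hk hkj
        rw [hRdef]; simp only []
        rw [if_neg (by simpa using hk), if_neg hkj, zero_smul]
    rw [h1, h2, hgs j]; ring
  have hPyth : ∀ j, col j ⬝ᵥ col j = ∑ i, R i j ^ 2 * g i := by
    intro j; rw [hcolrep j, hnormsq]
  -- chained Lovász condition
  have hmono : ∀ k : ℕ, ∀ i j : Fin n, j.val = i.val + k →
      2 ^ i.val * g i ≤ 2 ^ j.val * g j := by
    intro k
    induction k with
    | zero =>
      intro i j h
      have : i = j := Fin.ext (by omega)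
      rw [this]
    | succ k ih =>
      intro i j h
      have him : i.val + 1 < n := by have := j.isLt; omega
      have h1 : g i ≤ 2 * g (⟨i.val + 1, him⟩ : Fin n) := hLov i him
      have h2 := ih ⟨i.val + 1, him⟩ j (by simp; omega)
      calc (2:ℝ) ^ i.val * g i ≤ 2 ^ i.val * (2 * g ⟨i.val + 1, him⟩) := by
            apply mul_le_mul_of_nonneg_left h1 (by positivity)
        _ = 2 ^ (i.val + 1) * g ⟨i.val + 1, him⟩ := by rw [pow_succ]; ring
        _ ≤ 2 ^ j.val * g j := h2
  -- lower bound on the Gram--Schmidt norms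
  have hglb : ∀ j : Fin n, (1:ℝ) < 2 ^ n * g j := by
    intro j
    have h1 := hcol1 j
    rw [hPyth j] at h1
    have hbound : ∑ i, R i j ^ 2 * g i ≤ 2 ^ n * g j := by
      rw [← Finset.sum_filter_add_sum_filter_not univ (fun i => i < j)]
      have hA : ∑ i ∈ filter (fun i => i < j) univ, R i j ^ 2 * g i
          ≤ ∑ i ∈ filter (fun i => i < j) univ,
              (1/4) * ((1/2) ^ i.val * ((2:ℝ) ^ j.val * g j)) := by
        refine Finset.sum_le_sum fun i hi => ?_
        have hij : i < j := by simpa using hi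
        have hμ2 : R i j ^ 2 ≤ 1/4 := by
          rw [hRdef]; simp only []
          rw [if_pos hij]
          have := hred i j hij
          have h' := abs_le.mp this
          nlinarith [h'.1, h'.2]
        have hgi : (2:ℝ) ^ i.val * g i ≤ 2 ^ j.val * g j :=
          hmono (j.val - i.val) i j (by have := Fin.lt_def.mp hij; omega)
        have hp : (0:ℝ) < 2 ^ i.val := by positivity
        have hgi' : g i ≤ (1/2) ^ i.val * ((2:ℝ) ^ j.val * g j) := by
          rw [div_pow, one_pow, div_mul_eq_mul_div, le_div_iff₀ hp]
          linarith [hgi]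
        nlinarith [hgnn i, sq_nonneg (R i j), hgi', hμ2,
          mul_nonneg (le_of_lt (by positivity : (0:ℝ) < (1/2:ℝ) ^ i.val))
            (mul_nonneg (by positivity : (0:ℝ) ≤ (2:ℝ)^j.val) (hgnn j))]
      have hB : ∑ i ∈ filter (fun i => ¬ i < j) univ, R i j ^ 2 * g i = g j := by
        rw [Finset.sum_eq_single_of_mem j (by simp)]
        · rw [hRdef]; simp
        · intro k hk hkj
          rw [hRdef]; simp only []
          rw [if_neg (by simpa using hk), if_neg hkj]; ring
      have hgeo : ∑ i ∈ filter (fun i => i < j) univ, ((1:ℝ)/2) ^ i.val ≤ 2 := by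
        calc ∑ i ∈ filter (fun i => i < j) univ, ((1:ℝ)/2) ^ i.val
            ≤ ∑ i : Fin n, ((1:ℝ)/2) ^ i.val := by
              apply Finset.sum_le_sum_of_subset_of_nonneg (Finset.filter_subset _ _)
              intro k _ _; positivity
          _ = ∑ m ∈ Finset.range n, ((1:ℝ)/2) ^ m := Fin.sum_univ_eq_sum_range _ _
          _ ≤ 2 := er_geom n
      have hAval : ∑ i ∈ filter (fun i => i < j) univ,
          (1/4) * ((1/2) ^ i.val * ((2:ℝ) ^ j.val * g j))
          ≤ (1/2) * ((2:ℝ) ^ j.val * g j) := by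
        have hXnn : (0:ℝ) ≤ (2:ℝ) ^ j.val * g j := mul_nonneg (by positivity) (hgnn j)
        calc ∑ i ∈ filter (fun i => i < j) univ,
              (1/4) * ((1/2) ^ i.val * ((2:ℝ) ^ j.val * g j))
            = (∑ i ∈ filter (fun i => i < j) univ, ((1:ℝ)/2) ^ i.val)
                * ((1/4) * ((2:ℝ) ^ j.val * g j)) := by
              rw [Finset.sum_mul]; exact Finset.sum_congr rfl fun i _ => by ring
          _ ≤ 2 * ((1/4) * ((2:ℝ) ^ j.val * g j)) := by
              apply mul_le_mul_of_nonneg_right hgeo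
              exact mul_nonneg (by norm_num) hXnn
          _ = (1/2) * ((2:ℝ) ^ j.val * g j) := by ring
      have hjn : (2:ℝ) ^ j.val ≤ 2 ^ (n - 1) := by
        apply pow_le_pow_right₀ (by norm_num)
        have := j.isLt; omega
      have hc : (1:ℝ) ≤ 2 ^ (n-1) := one_le_pow₀ (by norm_num)
      have h2n : (2:ℝ) ^ n = 2 * 2 ^ (n-1) := by
        rw [← pow_succ']; congr 1; omega
      have := hgnn j
      nlinarith [hA, hB, hAval, mul_le_mul_of_nonneg_right hjn (hgnn j)]
    linarith
  have hgpos : ∀ j, 0 < g j := by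
    intro j
    by_contra h
    push_neg at h
    have := hglb j
    nlinarith [pow_pos (by norm_num : (0:ℝ) < 2) n]
  -- coefficients of B y in the orthogonal basis
  set c : Fin n → ℝ := fun i => ∑ j, R i j * y j with hcdef
  have hByrep : (∑ j, y j • col j) = ∑ i, c i • bhat i := by
    calc (∑ j, y j • col j) = ∑ j, y j • ∑ i, R i j • bhat i := by
          exact Finset.sum_congr rfl fun j _ => by rw [hcolrep j]
      _ = ∑ j, ∑ i, (R i j * y j) • bhat i := by
          refine Finset.sum_congr rfl fun j _ => ?_
          rw [Finset.smul_sum]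
          exact Finset.sum_congr rfl fun i _ => by rw [smul_smul, mul_comm]
      _ = ∑ i, ∑ j, (R i j * y j) • bhat i := Finset.sum_comm
      _ = ∑ i, c i • bhat i := by
          refine Finset.sum_congr rfl fun i _ => ?_
          rw [hcdef]; simp only []
          rw [← Finset.sum_smul]
  have hcb : ∀ i, c i ^ 2 * g i ≤ 1 := by
    intro i
    have h1 : ∑ k, c k ^ 2 * g k ≤ 1 := by
      rw [← hnormsq, ← hByrep]; exact hy
    have h2 : c i ^ 2 * g i ≤ ∑ k, c k ^ 2 * g k :=
      Finset.single_le_sum (f := fun k => c k ^ 2 * g k)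
        (fun k _ => mul_nonneg (sq_nonneg _) (hgnn k)) (Finset.mem_univ i)
    linarith
  set M : ℝ := Real.sqrt ((2:ℝ) ^ n) with hMdef
  have hM0 : 0 ≤ M := Real.sqrt_nonneg _
  have hM2 : M ^ 2 = 2 ^ n := Real.sq_sqrt (by positivity)
  have hcM : ∀ i, |c i| ≤ M := by
    intro i
    have h1 : c i ^ 2 ≤ 2 ^ n := by
      nlinarith [hglb i, hgpos i, hcb i, sq_nonneg (c i)]
    calc |c i| = Real.sqrt (c i ^ 2) := (Real.sqrt_sq_eq_abs _).symm
      _ ≤ M := Real.sqrt_le_sqrt h1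
  -- back substitution
  have hyrec : ∀ i : Fin n, y i = c i - ∑ j ∈ filter (fun j => i < j) univ, μ i j * y j := by
    intro i
    have h1 : c i = (∑ j ∈ filter (fun j => i < j) univ, μ i j * y j) + y i := by
      rw [hcdef]; simp only []
      rw [← Finset.sum_filter_add_sum_filter_not univ (fun j => i < j)]
      congr 1
      · refine Finset.sum_congr rfl fun j hj => ?_
        rw [hRdef]; simp only []
        rw [if_pos (by simpa using hj)]
      · rw [Finset.sum_eq_single_of_mem i (by simp)]
        · rw [hRdef]; simp
        · intro k hk hki
          rw [hRdef]; simp only []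
          rw [if_neg (by simpa using hk), if_neg (by exact fun h => hki (by rw [h]))]; ring
    rw [h1]; ring
  have hyb : ∀ i : Fin n, |y i| ≤ M + (1/2) * ∑ j ∈ filter (fun j => i < j) univ, |y j| := by
    intro i
    rw [hyrec i]
    calc |c i - ∑ j ∈ filter (fun j => i < j) univ, μ i j * y j|
        ≤ |c i| + |∑ j ∈ filter (fun j => i < j) univ, μ i j * y j| := abs_sub _ _
      _ ≤ M + (1/2) * ∑ j ∈ filter (fun j => i < j) univ, |y j| := by
        gcongr
        · exact hcM i
        · calc |∑ j ∈ filter (fun j => i < j) univ, μ i j * y j|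
              ≤ ∑ j ∈ filter (fun j => i < j) univ, |μ i j * y j| :=
                Finset.abs_sum_le_sum_abs _ _
            _ ≤ ∑ j ∈ filter (fun j => i < j) univ, (1/2) * |y j| := by
                refine Finset.sum_le_sum fun j hj => ?_
                rw [abs_mul]
                exact mul_le_mul_of_nonneg_right (hred i j (by simpa using hj)) (abs_nonneg _)
            _ = (1/2) * ∑ j ∈ filter (fun j => i < j) univ, |y j| := by
                rw [Finset.mul_sum]
  -- tail sums
  have hT : ∀ k : ℕ, ∀ i : Fin n, n - i.val = k →
      ∑ j ∈ filter (fun j => i ≤ j) univ, |y j| ≤ 2 * M * ((3/2) ^ k - 1) := by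
    intro k
    induction k using Nat.strong_induction_on with
    | _ k IH =>
      intro i hik
      have hk1 : 1 ≤ k := by have := i.isLt; omega
      have hsplit : filter (fun j => i ≤ j) univ = insert i (filter (fun j => i < j) univ) := by
        ext j
        simp only [Finset.mem_insert, Finset.mem_filter, Finset.mem_univ, true_and]
        constructor
        · intro h
          rcases eq_or_lt_of_le h with h' | h'
          · left; exact h'.symm
          · right; exact h'
        · rintro (h | h)
          · rw [h]
          · exact le_of_lt h
      have hins : ∑ j ∈ filter (fun j => i ≤ j) univ, |y j|
          = |y i| + ∑ j ∈ filter (fun j => i < j) univ, |y j| := by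
        rw [hsplit, Finset.sum_insert (by simp)]
      have hTi' : ∑ j ∈ filter (fun j => i < j) univ, |y j| ≤ 2 * M * ((3/2) ^ (k-1) - 1) := by
        rcases lt_or_ge (i.val + 1) n with hin | hin
        · have heq : filter (fun j => i < j) univ
              = filter (fun j => (⟨i.val + 1, hin⟩ : Fin n) ≤ j) univ := by
            ext j
            simp only [Finset.mem_filter, Finset.mem_univ, true_and, Fin.lt_def, Fin.le_def]
            omega
          rw [heq]
          exact IH (k-1) (by omega) _ (by simp; omega)
        · have heq : filter (fun j => i < j) univ = (∅ : Finset (Fin n)) := by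
            ext j
            simp only [Finset.mem_filter, Finset.mem_univ, true_and, Fin.lt_def,
              Finset.notMem_empty, iff_false]
            have := j.isLt; omega
          rw [heq, Finset.sum_empty]
          have : (1:ℝ) ≤ (3/2) ^ (k-1) := one_le_pow₀ (by norm_num)
          nlinarith
      have h32 : ((3:ℝ)/2) ^ k = (3/2) * (3/2) ^ (k-1) := by
        rw [← pow_succ']; congr 1; omega
      rw [hins, h32]
      have hyi := hyb i
      nlinarith [hTi', hM0]
  -- final assembly
  have hsum : ∑ j, |y j| ≤ 2 * M * ((3/2) ^ n - 1) := by
    have huniv : filter (fun j => (⟨0, hn⟩ : Fin n) ≤ j) univ = univ := by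
      ext j; simp [Fin.le_def]
    have := hT n ⟨0, hn⟩ (by simp)
    rwa [huniv] at this
  have hsq : ∑ j, y j ^ 2 ≤ (2 * M * ((3/2) ^ n - 1)) ^ 2 := by
    have h1 : ∑ j, y j ^ 2 = ∑ j, |y j| ^ 2 := by
      exact Finset.sum_congr rfl fun j _ => (sq_abs _).symm
    have h2 : ∑ j, |y j| ^ 2 ≤ (∑ j, |y j|) ^ 2 :=
      Finset.sum_sq_le_sq_sum_of_nonneg fun j _ => abs_nonneg _
    have h3 : (∑ j, |y j|) ^ 2 ≤ (2 * M * ((3/2) ^ n - 1)) ^ 2 := by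
      apply pow_le_pow_left₀ (Finset.sum_nonneg fun j _ => abs_nonneg _) hsum
    linarith
  have ha := er_aux n
  have h1 : (2 * ((3:ℝ)/2) ^ n - 2) ≤ 2 ^ n := by linarith
  have h2 : (0:ℝ) ≤ 2 * ((3:ℝ)/2) ^ n - 2 := by
    have : (1:ℝ) ≤ (3/2) ^ n := one_le_pow₀ (by norm_num)
    linarith
  calc ∑ j, y j ^ 2 ≤ (2 * M * ((3/2) ^ n - 1)) ^ 2 := hsq
    _ = M ^ 2 * (2 * (3/2) ^ n - 2) ^ 2 := by ring
    _ ≤ 2 ^ n * ((2:ℝ) ^ n) ^ 2 := by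
        rw [hM2]
        apply mul_le_mul_of_nonneg_left _ (by positivity)
        apply pow_le_pow_left₀ h2 h1
    _ = 8 ^ n := by
        rw [← pow_mul, ← pow_add,
          show (8:ℝ) ^ n = ((2:ℝ) ^ 3) ^ n from by norm_num, ← pow_mul]
        congr 1
        omega



/-- **Ellipsoid regularization via an LLL-reduced unimodular transformation (Lemma 3.5).**
Let `E = {x : ‖Ax‖₂ ≤ 1}` for an invertible `A`, and let `U` be unimodular such that the
columns of `B = AU` form an LLL-reduced basis. Then either `E` contains a nonzero integer
point, or every `x ∈ E` satisfies `‖U⁻¹x‖₂ ≤ 2^{3n/2}`. -/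
theorem ellipsoid_regularization (n : ℕ) (A : Matrix (Fin n) (Fin n) ℝ)
    (hA : IsUnit A.det)
    (U : Matrix (Fin n) (Fin n) ℤ) (hU : |U.det| = 1)
    (B : Matrix (Fin n) (Fin n) ℝ) (hB : B = A * U.map (Int.cast : ℤ → ℝ))
    (bhat : Fin n → (Fin n → ℝ)) (μ : Fin n → Fin n → ℝ)
    (hμdef : ∀ i j : Fin n, i < j →
      μ i j = (∑ t, B t j * bhat i t) / (∑ t, bhat i t ^ 2))
    (hgs : ∀ j : Fin n,
      bhat j = (fun t => B t j) - ∑ i ∈ Finset.univ.filter (fun i => i < j), μ i j • bhat i)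
    (hred : ∀ i j : Fin n, i < j → |μ i j| ≤ 1 / 2)
    (hLov : ∀ i : Fin n, ∀ h : i.val + 1 < n,
      ∑ t, bhat i t ^ 2 ≤ 2 * ∑ t, bhat ⟨i.val + 1, h⟩ t ^ 2) :
    (∃ x : Fin n → ℤ, x ≠ 0 ∧
        Real.sqrt (∑ t, (A.mulVec (fun i => (x i : ℝ)) t) ^ 2) ≤ 1) ∨
    (∀ x : Fin n → ℝ, Real.sqrt (∑ t, (A.mulVec x t) ^ 2) ≤ 1 →
        Real.sqrt (∑ t, (((U.map (Int.cast : ℤ → ℝ))⁻¹).mulVec x t) ^ 2) ≤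
          (2 : ℝ) ^ (3 * (n : ℝ) / 2)) := by
  rcases Nat.eq_zero_or_pos n with hn | hn
  · subst hn
    right
    intro x _
    simp
  by_cases hcase : ∃ i : Fin n, (∑ t, B t i ^ 2) ≤ 1
  · left
    obtain ⟨i, hi⟩ := hcase
    refine ⟨fun j => U j i, ?_, ?_⟩
    · intro h0
      have hz : ∀ j, U j i = 0 := fun j => congrFun h0 j
      have hd := Matrix.det_eq_zero_of_column_eq_zero i hz
      rw [hd] at hU
      simp at hU
    · have hAx : (A.mulVec fun j => ((U j i : ℤ) : ℝ)) = fun t => B t i := by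
        funext t
        rw [hB]
        simp [Matrix.mulVec, Matrix.mul_apply, dotProduct, Matrix.map_apply]
      rw [hAx]
      calc Real.sqrt (∑ t, ((fun t => B t i) t) ^ 2)
          ≤ Real.sqrt 1 := Real.sqrt_le_sqrt (by simpa using hi)
        _ = 1 := Real.sqrt_one
  · right
    push_neg at hcase
    intro x hx
    set U' := U.map (Int.cast : ℤ → ℝ) with hU'
    have hdet : IsUnit U'.det := by
      have h1 : U'.det = ((U.det : ℤ) : ℝ) := ((Int.castRingHom ℝ).map_det U).symm
      rw [h1]
      apply isUnit_iff_ne_zero.mpr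
      intro h0
      rw [Int.cast_eq_zero] at h0
      rw [h0] at hU
      simp at hU
    set y := U'⁻¹.mulVec x with hy
    have hxy : (U'.mulVec y) = x := by
      rw [hy, Matrix.mulVec_mulVec, Matrix.mul_nonsing_inv _ hdet, Matrix.one_mulVec]
    set col : Fin n → Fin n → ℝ := fun j t => B t j with hcol
    have hBy : (∑ j, y j • col j) = A.mulVec x := by
      funext t
      rw [Finset.sum_apply]
      have h2 : A.mulVec x t = (A * U').mulVec y t := by
        rw [← hxy, Matrix.mulVec_mulVec]
      rw [h2, ← hB]
      simp [Matrix.mulVec, dotProduct, hcol, mul_comm]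
    have hyle : (∑ j, y j • col j) ⬝ᵥ (∑ j, y j • col j) ≤ 1 := by
      rw [hBy, ← er_sumsq]
      have h0 : 0 ≤ ∑ t, (A.mulVec x t) ^ 2 := by positivity
      nlinarith [Real.sq_sqrt h0, Real.sqrt_nonneg (∑ t, (A.mulVec x t) ^ 2), hx]
    have hmain : ∑ j, y j ^ 2 ≤ 8 ^ n := by
      apply er_main n hn col bhat μ ?_ ?_ hred ?_ ?_ y hyle
      · intro i j h
        rw [hμdef i j h, er_sumsq (bhat i)]
        rfl
      · intro j
        rw [hgs j]
        funext t
        simp [hcol]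
      · intro i h
        have := hLov i h
        rwa [er_sumsq, er_sumsq] at this
      · intro i
        have := hcase i
        rwa [er_sumsq (fun t => B t i)] at this
    have hsq8 : Real.sqrt ((8:ℝ) ^ n) = 2 ^ (3 * (n:ℝ) / 2) := by
      rw [show ((8:ℝ) ^ n) = (2:ℝ) ^ (3 * n) from by rw [pow_mul]; norm_num]
      rw [Real.sqrt_eq_rpow, ← Real.rpow_natCast 2 (3 * n),
        ← Real.rpow_mul (by norm_num : (0:ℝ) ≤ 2)]
      congr 1
      push_cast
      ring
    calc Real.sqrt (∑ t, y t ^ 2) ≤ Real.sqrt ((8:ℝ) ^ n) := Real.sqrt_le_sqrt hmain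
      _ = 2 ^ (3 * (n:ℝ) / 2) := hsq8
end
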